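/- arXiv:1904.05015 — 3 statements merged into one kernel-verified Lean document; each statement's English description precedes it below -/
import Mathlib

section
/- Fix ℓ ≥ 1. A partition λ is an ℓ-core (i.e., no partition μ ⊆ λ has λ∖μ a border strip of ℓ nodes) if and only if every component of its ℓ-quotient is the empty partition, λ^i = ∅ for all i. Moreover, the map sending an ℓ-core λ to its charge vector (c_0(λ), …, c_{ℓ−1}(λ)) is a bijection from the set of ℓ-cores onto {(c_0,…,c_{ℓ−1}) ∈ ℤ^ℓ : c_0 + ⋯ + c_{ℓ−1} = 0}. -/
/-- A partition: a weakly decreasing, eventually zero sequence of naturals;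
`part k` is the `(k+1)`-st part `λ_{k+1}`. -/
structure YPartition where
  part : ℕ → ℕ
  antitone : ∀ a b : ℕ, a ≤ b → part b ≤ part a
  eventually_zero : ∃ N, ∀ n, N ≤ n → part n = 0

namespace Wreath

attribute [local instance] Classical.propDecidable

/-- The conjugate partition: `conj lam a = ᵗλ_a` for `a ≥ 1`. -/
noncomputable def conj (lam : YPartition) (a : ℕ) : ℕ :=
  Set.ncard {k : ℕ | a ≤ lam.part k}

/-- The Maya diagram of a partition: value `+1` at `j` iff `j = ᵗλ_a − a` for some `a ≥ 1`. -/
noncomputable def mayaFun (lam : YPartition) : ℤ → ℤ := fun j =>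
  if ∃ a : ℕ, j = (conj lam (a + 1) : ℤ) - (a + 1 : ℤ) then 1 else -1

/-- `f : ℤ → ℤ` is a Maya diagram: values `±1`, eventually `-1` to the right (large `j`),
eventually `+1` to the left (small `j`). -/
def IsMayaFun (f : ℤ → ℤ) : Prop :=
  (∀ j, f j = 1 ∨ f j = -1) ∧ (∃ N : ℤ, ∀ j, N ≤ j → f j = -1) ∧
    (∃ N : ℤ, ∀ j, j ≤ N → f j = 1)

/-- The charge `#{j < 0 : f j = −1} − #{j ≥ 0 : f j = 1}`. -/
noncomputable def chargeFun (f : ℤ → ℤ) : ℤ :=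
  (Set.ncard {j : ℤ | j < 0 ∧ f j = -1} : ℤ) - (Set.ncard {j : ℤ | 0 ≤ j ∧ f j = 1} : ℤ)

def emptyPartition : YPartition :=
  ⟨fun _ => 0, fun _ _ _ => le_rfl, ⟨0, fun _ _ => rfl⟩⟩

/-- The partition whose Maya diagram is `f` (junk value if there is none). -/
noncomputable def partitionOfMaya (f : ℤ → ℤ) : YPartition :=
  if h : ∃ lam : YPartition, mayaFun lam = f then h.choose else emptyPartition

/-- The charge `c_i(λ)` of the `i`-th quotient Maya diagram `j ↦ m(λ)(i + jℓ)`. -/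
noncomputable def chargeQuot (ℓ : ℕ) (lam : YPartition) (i : ℤ) : ℤ :=
  chargeFun fun j => mayaFun lam (i + j * (ℓ : ℤ))

/-- The `i`-th quotient component `λ^i`: the partition whose Maya diagram is
`j ↦ m_i(λ)(j − c_i(λ))`. -/
noncomputable def quotComp (ℓ : ℕ) (lam : YPartition) (i : ℤ) : YPartition :=
  partitionOfMaya fun j => mayaFun lam (i + (j - chargeQuot ℓ lam i) * (ℓ : ℤ))

/-- The `ℓ`-core of `λ`: the partition whose Maya diagram has value `−1` at `i + jℓ`
(`0 ≤ i < ℓ`) exactly when `j ≥ −c_i(λ)`. -/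
noncomputable def coreOf (ℓ : ℕ) (lam : YPartition) : YPartition :=
  partitionOfMaya fun j =>
    if -(chargeQuot ℓ lam (Int.emod j (ℓ : ℤ))) ≤ Int.ediv j (ℓ : ℤ) then -1 else 1

/-- Membership of the node `x = (a,b)` in the Young diagram of `lam`:
`1 ≤ a`, `1 ≤ b`, `a ≤ λ_b`.  The content of `(a,b)` is `b − a`. -/
def Partition.memYD (lam : YPartition) (x : ℤ × ℤ) : Prop :=
  1 ≤ x.1 ∧ 1 ≤ x.2 ∧ x.1 ≤ (lam.part (x.2 - 1).toNat : ℤ)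

/-- Containment of Young diagrams. -/
def Sub (lam mu : YPartition) : Prop := ∀ x, Partition.memYD lam x → Partition.memYD mu x

/-- Membership in the skew diagram `μ∖λ`. -/
def SkewMem (lam mu : YPartition) (x : ℤ × ℤ) : Prop :=
  Partition.memYD mu x ∧ ¬ Partition.memYD lam x

/-- The number of nodes of `μ∖λ`. -/
noncomputable def skewSize (lam mu : YPartition) : ℕ := Set.ncard {x | SkewMem lam mu x}

/-- The size `|λ|`. -/
noncomputable def Partition.size (lam : YPartition) : ℕ := Set.ncard {x | Partition.memYD lam x}

/-- Edge-adjacency of nodes. -/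
def adjacent (x y : ℤ × ℤ) : Prop :=
  (x.1 = y.1 ∧ (x.2 = y.2 + 1 ∨ y.2 = x.2 + 1)) ∨
  (x.2 = y.2 ∧ (x.1 = y.1 + 1 ∨ y.1 = x.1 + 1))

/-- `μ∖λ` is a border strip: `λ ⊆ μ`, nonempty, connected through edge-adjacent nodes,
and containing no 2×2 block. -/
def IsBorderStrip (lam mu : YPartition) : Prop :=
  Sub lam mu ∧ (∃ x, SkewMem lam mu x) ∧
  (∀ x y, SkewMem lam mu x → SkewMem lam mu y →
    Relation.ReflTransGen (fun u v => SkewMem lam mu u ∧ SkewMem lam mu v ∧ adjacent u v) x y) ∧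
  ¬ ∃ a b : ℤ, SkewMem lam mu (a, b) ∧ SkewMem lam mu (a + 1, b) ∧
      SkewMem lam mu (a, b + 1) ∧ SkewMem lam mu (a + 1, b + 1)

/-- An `ℓ`-core: a partition from which no border strip of `ℓ` nodes can be removed. -/
def IsCore (ℓ : ℕ) (lam : YPartition) : Prop :=
  ¬ ∃ mu : YPartition, IsBorderStrip mu lam ∧ skewSize mu lam = ℓ

/-- Dominance order (on partitions of the same size): `Dom μ λ` means `μ ⊴ λ`. -/
def Dom (mu lam : YPartition) : Prop :=
  Partition.size mu = Partition.size lam ∧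
  ∀ k : ℕ, ∑ b ∈ Finset.range k, mu.part b ≤ ∑ b ∈ Finset.range k, lam.part b

/-- `x` is the node of `μ∖λ` of largest content (the initial node of a strip). -/
def IsMaxContentNode (lam mu : YPartition) (x : ℤ × ℤ) : Prop :=
  SkewMem lam mu x ∧ ∀ y, SkewMem lam mu y → y.2 - y.1 ≤ x.2 - x.1

/-- `x` is the node of `μ∖λ` of smallest content (the final node of a strip). -/
def IsMinContentNode (lam mu : YPartition) (x : ℤ × ℤ) : Prop :=
  SkewMem lam mu x ∧ ∀ y, SkewMem lam mu y → x.2 - x.1 ≤ y.2 - y.1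

/-- Add `1` to each of the first `k` parts (append a column of height `k`). -/
def addColParts (k : ℕ) (f : ℕ → ℕ) : ℕ → ℕ := fun r => if r < k then f r + 1 else f r

/-- The number of (nonzero) rows of a partition. -/
noncomputable def numRows (nu : YPartition) : ℕ := Set.ncard {r : ℕ | 0 < nu.part r}

/-- Append a new final row of length `k` after `len` rows. -/
def addRowParts (k len : ℕ) (f : ℕ → ℕ) : ℕ → ℕ :=
  fun r => if r < len then f r else if r = len then k else 0

/-- One column-addition step: `μ` is obtained from `ν` by adding, in component `i` of the
`ℓ`-quotient, a new column of height `k` no taller than any existing column. -/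
def IsColStep (ℓ : ℕ) (nu mu : YPartition) (i k : ℕ) : Prop :=
  i < ℓ ∧ 1 ≤ k ∧
  (∀ a : ℕ, 1 ≤ a → (a : ℕ) ≤ (quotComp ℓ nu (i : ℤ)).part 0 →
    k ≤ conj (quotComp ℓ nu (i : ℤ)) a) ∧
  coreOf ℓ mu = coreOf ℓ nu ∧
  (∀ i' : ℕ, i' < ℓ → i' ≠ i → quotComp ℓ mu (i' : ℤ) = quotComp ℓ nu (i' : ℤ)) ∧
  (quotComp ℓ mu (i : ℤ)).part = addColParts k ((quotComp ℓ nu (i : ℤ)).part)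

/-- One row-addition step: `μ` is obtained from `ν` by adding, in component `i` of the
`ℓ`-quotient, a new final row of length `k` no longer than any existing row. -/
def IsRowStep (ℓ : ℕ) (nu mu : YPartition) (i k : ℕ) : Prop :=
  i < ℓ ∧ 1 ≤ k ∧
  (∀ r : ℕ, 0 < (quotComp ℓ nu (i : ℤ)).part r → k ≤ (quotComp ℓ nu (i : ℤ)).part r) ∧
  coreOf ℓ mu = coreOf ℓ nu ∧
  (∀ i' : ℕ, i' < ℓ → i' ≠ i → quotComp ℓ mu (i' : ℤ) = quotComp ℓ nu (i' : ℤ)) ∧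
  (quotComp ℓ mu (i : ℤ)).part =
    addRowParts k (numRows (quotComp ℓ nu (i : ℤ))) ((quotComp ℓ nu (i : ℤ)).part)

/-- A column-addition sequence for `λ`. -/
def IsColSeq (ℓ : ℕ) (lam : YPartition) (N : ℕ) (seq : ℕ → YPartition) : Prop :=
  seq 0 = coreOf ℓ lam ∧ seq N = lam ∧
  ∀ t, t < N → ∃ i k, IsColStep ℓ (seq t) (seq (t + 1)) i k

/-- A row-addition sequence for `λ`. -/
def IsRowSeq (ℓ : ℕ) (lam : YPartition) (N : ℕ) (seq : ℕ → YPartition) : Prop :=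
  seq 0 = coreOf ℓ lam ∧ seq N = lam ∧
  ∀ t, t < N → ∃ i k, IsRowStep ℓ (seq t) (seq (t + 1)) i k

/-- Left-to-right order on a column-addition sequence: for `1 ≤ r < s ≤ N` the content of the
initial node of the `r`-th strip is strictly greater than the content of the final node of the
`s`-th strip. -/
def LeftToRight (N : ℕ) (seq : ℕ → YPartition) : Prop :=
  ∀ r s, 1 ≤ r → r < s → s ≤ N → ∀ x y,
    IsMaxContentNode (seq (r - 1)) (seq r) x →
    IsMinContentNode (seq (s - 1)) (seq s) y →
    y.2 - y.1 < x.2 - x.1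

/-- Right-to-left order on a row-addition sequence: for `1 ≤ r < s ≤ N` the content of the
final node of the `r`-th strip is strictly less than the content of the final node of the
`s`-th strip. -/
def RightToLeft (N : ℕ) (seq : ℕ → YPartition) : Prop :=
  ∀ r s, 1 ≤ r → r < s → s ≤ N → ∀ x y,
    IsMinContentNode (seq (r - 1)) (seq r) x →
    IsMinContentNode (seq (s - 1)) (seq s) y →
    x.2 - x.1 < y.2 - y.1

/-- `x` is an addable node of `λ`. -/
def Addable (lam : YPartition) (x : ℤ × ℤ) : Prop :=
  ¬ Partition.memYD lam x ∧
    ∃ mu : YPartition, ∀ y, Partition.memYD mu y ↔ (Partition.memYD lam y ∨ y = x)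

/-- `x` is a removable node of `λ`. -/
def Removable (lam : YPartition) (x : ℤ × ℤ) : Prop :=
  Partition.memYD lam x ∧
    ∃ mu : YPartition, ∀ y, Partition.memYD mu y ↔ (Partition.memYD lam y ∧ y ≠ x)

end Wreath

open Wreath

namespace Wreath

lemma Partition.ext' {lam mu : YPartition} (h : lam.part = mu.part) : lam = mu := by
  cases lam; cases mu; simp_all

/-- A finite downward-closed set of naturals is an initial segment of length its cardinality. -/
lemma downset_eq_Iio {S : Set ℕ} (hf : S.Finite) (hd : ∀ a b : ℕ, a ≤ b → b ∈ S → a ∈ S) :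
    S = Set.Iio S.ncard := by
  rcases S.eq_empty_or_nonempty with h | h
  · rw [h]; ext k; simp
  · have hne : hf.toFinset.Nonempty := by
      simpa [Set.Finite.toFinset_nonempty] using h
    set m := hf.toFinset.max' hne with hm
    have hmem : m ∈ S := by
      have := hf.toFinset.max'_mem hne
      simpa using this
    have hS : S = Set.Iio (m + 1) := by
      ext k
      constructor
      · intro hk
        have : k ∈ hf.toFinset := by simpa using hk
        have := hf.toFinset.le_max' k this
        simpa [Set.mem_Iio] using Nat.lt_succ_of_le this
      · intro hk
        exact hd k m (Nat.lt_succ_iff.mp hk) hmem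
    have hcard : S.ncard = m + 1 := by
      rw [hS, ← Finset.coe_range, Set.ncard_coe_finset, Finset.card_range]
    rw [hcard]
    exact hS

lemma conj_finite (lam : YPartition) {a : ℕ} (ha : 1 ≤ a) : {k : ℕ | a ≤ lam.part k}.Finite := by
  obtain ⟨N, hN⟩ := lam.eventually_zero
  apply (Set.finite_Iio N).subset
  intro k hk
  simp only [Set.mem_setOf_eq] at hk
  simp only [Set.mem_Iio]
  by_contra h
  push_neg at h
  have := hN k h
  omega

lemma conj_galois (lam : YPartition) {a : ℕ} (ha : 1 ≤ a) (b : ℕ) :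
    b + 1 ≤ conj lam a ↔ a ≤ lam.part b := by
  have hd : ∀ x y : ℕ, x ≤ y → y ∈ {k : ℕ | a ≤ lam.part k} → x ∈ {k : ℕ | a ≤ lam.part k} := by
    intro x y hxy hy
    exact le_trans hy (lam.antitone x y hxy)
  have := downset_eq_Iio (conj_finite lam ha) hd
  constructor
  · intro h
    have : b ∈ {k : ℕ | a ≤ lam.part k} := by
      rw [this]; simp only [Set.mem_Iio]; exact h
    exact this
  · intro h
    have hb : b ∈ {k : ℕ | a ≤ lam.part k} := h
    rw [this] at hb
    simpa [conj] using hb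

lemma conj_eq (lam : YPartition) {a : ℕ} (ha : 1 ≤ a) (n : ℕ)
    (h1 : ∀ k, k < n → a ≤ lam.part k) (h2 : lam.part n < a) : conj lam a = n := by
  have hS : {k : ℕ | a ≤ lam.part k} = Set.Iio n := by
    ext k
    simp only [Set.mem_setOf_eq, Set.mem_Iio]
    constructor
    · intro hk
      by_contra h
      have := lam.antitone n k (by omega)
      omega
    · exact h1 k
  unfold conj
  rw [hS, ← Finset.coe_range, Set.ncard_coe_finset, Finset.card_range]

lemma maya_disjoint (lam : YPartition) (a b : ℕ) :
    (conj lam (a + 1) : ℤ) - (a + 1) ≠ (b : ℤ) - lam.part b := by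
  intro h
  rcases le_or_gt (a + 1) (lam.part b) with hc | hc
  · have := (conj_galois lam (by omega) b).mpr hc
    omega
  · have h2 : ¬ (b + 1 ≤ conj lam (a + 1)) := by
      intro h3
      have := (conj_galois lam (by omega : 1 ≤ a + 1) b).mp h3
      omega
    omega

lemma maya_cover (lam : YPartition) (j : ℤ) (h : ¬ ∃ b : ℕ, j = (b : ℤ) - lam.part b) :
    ∃ a : ℕ, j = (conj lam (a + 1) : ℤ) - (a + 1) := by
  rcases lt_or_ge j (-(lam.part 0 : ℤ)) with hj | hj
  · refine ⟨(-j - 1).toNat, ?_⟩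
    have ha : ((-j - 1).toNat : ℤ) = -j - 1 := Int.toNat_of_nonneg (by omega)
    have hconj : conj lam ((-j - 1).toNat + 1) = 0 := by
      apply conj_eq lam (by omega) 0 (by omega)
      have := lam.antitone 0 0 le_rfl
      omega
    rw [hconj]
    push_cast [ha]
    ring
  · -- find largest b0 with (b0 : ℤ) - part b0 ≤ j
    have hfin : {b : ℕ | (b : ℤ) - lam.part b ≤ j}.Finite := by
      apply (Set.finite_Iio (j.toNat + lam.part 0 + 1)).subset
      intro b hb
      simp only [Set.mem_setOf_eq] at hb ⊢
      have := lam.antitone 0 b (Nat.zero_le b)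
      simp only [Set.mem_Iio]
      omega
    have hne : {b : ℕ | (b : ℤ) - lam.part b ≤ j}.Nonempty :=
      ⟨0, by simp only [Set.mem_setOf_eq]; push_cast; omega⟩
    obtain ⟨b0, hb0mem, hb0max⟩ := Set.Finite.exists_maximalFor id _ hfin hne
    simp only [Set.mem_setOf_eq, id] at hb0mem hb0max
    have hlt : (b0 : ℤ) - lam.part b0 < j := by
      rcases lt_or_eq_of_le hb0mem with h' | h'
      · exact h'
      · exact absurd ⟨b0, h'.symm⟩ h
    have hgt : j < ((b0 + 1 : ℕ) : ℤ) - lam.part (b0 + 1) := by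
      by_contra h'
      push_neg at h'
      have := hb0max (j := b0 + 1) h'
      omega
    push_cast at hgt
    -- a+1 := b0 - j + 1
    refine ⟨(b0 - j).toNat, ?_⟩
    have ha : ((b0 - j).toNat : ℤ) = b0 - j := Int.toNat_of_nonneg (by omega)
    have hconj : conj lam ((b0 - j).toNat + 1) = b0 + 1 := by
      apply conj_eq lam (by omega) (b0 + 1)
      · intro k hk
        have := lam.antitone k b0 (by omega)
        omega
      · omega
    rw [hconj]
    push_cast [ha]
    ring

lemma maya_pos_iff (lam : YPartition) (j : ℤ) :
    mayaFun lam j = 1 ↔ ∃ a : ℕ, j = (conj lam (a + 1) : ℤ) - (a + 1) := by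
  by_cases h : ∃ a : ℕ, j = (conj lam (a + 1) : ℤ) - (a + 1 : ℤ)
  · simp [mayaFun, h]
  · simp [mayaFun, h]

lemma maya_neg_iff (lam : YPartition) (j : ℤ) :
    mayaFun lam j = -1 ↔ ∃ b : ℕ, j = (b : ℤ) - lam.part b := by
  by_cases h : ∃ a : ℕ, j = (conj lam (a + 1) : ℤ) - (a + 1 : ℤ)
  · simp only [mayaFun, if_pos h]
    constructor
    · intro h1; exact absurd h1 (by norm_num)
    · rintro ⟨b, hb⟩
      obtain ⟨a, ha⟩ := h
      exact absurd (ha.symm.trans hb) (maya_disjoint lam a b)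
  · simp only [mayaFun, if_neg h, true_iff]
    by_contra h'
    exact h (maya_cover lam j h')

lemma maya_values (lam : YPartition) (j : ℤ) : mayaFun lam j = 1 ∨ mayaFun lam j = -1 := by
  unfold mayaFun; split <;> simp

lemma strictMono_eq_of_range_eq {g1 g2 : ℕ → ℤ} (h1 : StrictMono g1) (h2 : StrictMono g2)
    (h : Set.range g1 = Set.range g2) : g1 = g2 := by
  funext a
  induction a using Nat.strong_induction_on with
  | _ a IH =>
    have key : ∀ (f1 f2 : ℕ → ℤ), StrictMono f1 → StrictMono f2 →
        Set.range f1 = Set.range f2 → (∀ a' < a, f1 a' = f2 a') → f1 a ≥ f2 a := by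
      intro f1 f2 hf1 hf2 hr hIH
      have : f1 a ∈ Set.range f2 := by rw [← hr]; exact ⟨a, rfl⟩
      obtain ⟨b, hb⟩ := this
      rcases lt_trichotomy b a with h' | h' | h'
      · exfalso
        have h2 := hIH b h'
        have := hf1.injective (h2.trans hb)
        omega
      · exact (h' ▸ hb).le
      · rw [← hb]; exact le_of_lt (hf2 h')
    have e1 := key g1 g2 h1 h2 h IH
    have e2 := key g2 g1 h2 h1 h.symm (fun a' ha' => (IH a' ha').symm)
    omega

/-- The row boundary function `b ↦ b − λ_{b+1}`, strictly monotone, enumerating the `-1`s. -/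
def rowFun (lam : YPartition) : ℕ → ℤ := fun b => (b : ℤ) - lam.part b

lemma rowFun_strictMono (lam : YPartition) : StrictMono (rowFun lam) := by
  apply strictMono_nat_of_lt_succ
  intro n
  have := lam.antitone n (n + 1) (by omega)
  unfold rowFun
  push_cast
  omega

lemma range_rowFun (lam : YPartition) : Set.range (rowFun lam) = {j | mayaFun lam j = -1} := by
  ext j
  simp only [Set.mem_range, Set.mem_setOf_eq, maya_neg_iff]
  constructor
  · rintro ⟨b, hb⟩; exact ⟨b, hb.symm⟩
  · rintro ⟨b, hb⟩; exact ⟨b, hb.symm⟩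

lemma mayaFun_injective : Function.Injective mayaFun := by
  intro lam mu h
  apply Partition.ext'
  have hr : Set.range (rowFun lam) = Set.range (rowFun mu) := by
    rw [range_rowFun, range_rowFun, h]
  have := strictMono_eq_of_range_eq (rowFun_strictMono lam) (rowFun_strictMono mu) hr
  funext b
  have hb := congrFun this b
  unfold rowFun at hb
  omega

end Wreath
namespace Wreath

attribute [local instance] Classical.propDecidable

noncomputable def leastOf (S : Set ℤ) : ℤ :=
  if h : (∃ b : ℤ, ∀ z ∈ S, b ≤ z) ∧ ∃ z, z ∈ S then
    (Int.exists_least_of_bdd h.1 h.2).choose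
  else 0

lemma leastOf_spec {S : Set ℤ} (hb : ∃ b : ℤ, ∀ z ∈ S, b ≤ z) (hne : ∃ z, z ∈ S) :
    leastOf S ∈ S ∧ ∀ z ∈ S, leastOf S ≤ z := by
  unfold leastOf
  have h : (∃ b : ℤ, ∀ z ∈ S, b ≤ z) ∧ ∃ z, z ∈ S := ⟨hb, hne⟩
  rw [dif_pos h]
  exact (Int.exists_least_of_bdd h.1 h.2).choose_spec

noncomputable def enum (S : Set ℤ) : ℕ → ℤ
  | 0 => leastOf S
  | k + 1 => leastOf {j ∈ S | enum S k < j}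

section EnumLemmas

variable {S : Set ℤ} {L M : ℤ}

lemma enum_spec (hL : ∀ j ∈ S, L ≤ j) (hM : ∀ j : ℤ, M ≤ j → j ∈ S) :
    ∀ k : ℕ, enum S k ∈ S ∧ (∀ z ∈ S, enum S 0 ≤ z) ∧
      (∀ k' : ℕ, k' < k → enum S k' < enum S k) ∧
      (∀ z ∈ S, enum S k < z → enum S (k + 1) ≤ z) ∧ enum S k < enum S (k + 1) := by
  have hne : ∃ z, z ∈ S := ⟨M, hM M le_rfl⟩
  have hbd : ∃ b : ℤ, ∀ z ∈ S, b ≤ z := ⟨L, hL⟩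
  have h0 := leastOf_spec hbd hne
  have step : ∀ x : ℤ, x ∈ S →
      leastOf {j ∈ S | x < j} ∈ {j ∈ S | x < j} ∧
      ∀ z ∈ {j ∈ S | x < j}, leastOf {j ∈ S | x < j} ≤ z := by
    intro x _
    apply leastOf_spec
    · exact ⟨L, fun z hz => hL z hz.1⟩
    · refine ⟨max M (x + 1), ⟨hM _ (le_max_left _ _), ?_⟩⟩
      have := le_max_right M (x + 1)
      omega
  intro k
  induction k with
  | zero =>
    refine ⟨h0.1, h0.2, by omega, ?_, ?_⟩
    · intro z hz hz2
      exact (step _ h0.1).2 z ⟨hz, hz2⟩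
    · exact ((step _ h0.1).1).2
  | succ k IH =>
    obtain ⟨hmem, hlow, hmono, hleast, hlt⟩ := IH
    have hmem' : enum S (k + 1) ∈ S := by
      have := (step _ hmem).1
      exact this.1
    refine ⟨hmem', hlow, ?_, ?_, ?_⟩
    · intro k' hk'
      rcases Nat.lt_or_ge k' k with h | h
      · exact lt_trans (hmono k' h) hlt
      · have : k' = k := by omega
        rw [this]; exact hlt
    · intro z hz hz2
      exact (step _ hmem').2 z ⟨hz, hz2⟩
    · exact ((step _ hmem').1).2

lemma enum_strictMono (hL : ∀ j ∈ S, L ≤ j) (hM : ∀ j : ℤ, M ≤ j → j ∈ S) :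
    StrictMono (enum S) :=
  strictMono_nat_of_lt_succ fun k => (enum_spec hL hM k).2.2.2.2

lemma enum_range (hL : ∀ j ∈ S, L ≤ j) (hM : ∀ j : ℤ, M ≤ j → j ∈ S) :
    Set.range (enum S) = S := by
  apply Set.eq_of_subset_of_subset
  · rintro j ⟨k, rfl⟩
    exact (enum_spec hL hM k).1
  · intro s hs
    -- strong induction on (s - enum S 0).toNat
    have h0le : enum S 0 ≤ s := (enum_spec hL hM 0).2.1 s hs
    generalize hn : (s - enum S 0).toNat = n
    induction n using Nat.strong_induction_on generalizing s with
    | _ n IH =>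
      rcases eq_or_lt_of_le h0le with heq | hlt
      · exact ⟨0, heq⟩
      · -- greatest element of S below s
        obtain ⟨s', hs'⟩ := Int.exists_greatest_of_bdd (P := fun z => z ∈ S ∧ z < s)
            ⟨s - 1, fun z hz => by omega⟩ ⟨enum S 0, (enum_spec hL hM 0).1, hlt⟩
        obtain ⟨⟨hs'S, hs'lt⟩, hs'max⟩ := hs'
        have h0le' : enum S 0 ≤ s' := (enum_spec hL hM 0).2.1 s' hs'S
        obtain ⟨k, hk⟩ := IH (s' - enum S 0).toNat (by omega) hs'S h0le' rfl
        refine ⟨k + 1, le_antisymm ?_ ?_⟩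
        · exact (enum_spec hL hM k).2.2.2.1 s hs (by rw [hk]; exact hs'lt)
        · have hmem := (enum_spec hL hM (k + 1)).1
          have hgt : s' < enum S (k + 1) := by
            rw [← hk]; exact (enum_spec hL hM (k + 1)).2.2.1 k (by omega)
          by_contra hcon
          push_neg at hcon
          have := hs'max (enum S (k + 1)) ⟨hmem, hcon⟩
          omega

lemma enum_eventually (hL : ∀ j ∈ S, L ≤ j) (hM : ∀ j : ℤ, M ≤ j → j ∈ S) :
    ∃ (K : ℕ) (c : ℤ), ∀ k : ℕ, K ≤ k → enum S k = (k : ℤ) + c := by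
  have hmono := enum_strictMono hL hM
  have hgap : ∀ k : ℕ, enum S 0 + k ≤ enum S k := by
    intro k
    induction k with
    | zero => simp
    | succ k IH =>
      have := hmono (by omega : k < k + 1)
      push_cast
      omega
  set K := (M - enum S 0).toNat with hK
  have hKM : M ≤ enum S K := by
    have := hgap K
    omega
  have hstep : ∀ k : ℕ, K ≤ k → enum S (k + 1) = enum S k + 1 := by
    intro k hk
    have h1 : enum S K ≤ enum S k := hmono.monotone hk
    have hmem : enum S k + 1 ∈ S := hM _ (by omega)
    have hle := (enum_spec hL hM k).2.2.2.1 (enum S k + 1) hmem (by omega)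
    have hgt := (enum_spec hL hM k).2.2.2.2
    omega
  refine ⟨K, enum S K - K, ?_⟩
  intro k hk
  induction k, hk using Nat.le_induction with
  | base => ring
  | succ k hk IH =>
    rw [hstep k hk, IH]
    push_cast
    ring

end EnumLemmas

/-- Charge computation: if the positions of `-1` of `f` are enumerated by a strictly
monotone `h` which is eventually `k + c`, then the charge of `f` is `-c`. -/
lemma charge_of_enum {f : ℤ → ℤ} (hval : ∀ j, f j = 1 ∨ f j = -1) {h : ℕ → ℤ}
    (hmono : StrictMono h) (hrange : Set.range h = {j | f j = -1}) {K : ℕ} {c : ℤ}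
    (hlin : ∀ k : ℕ, K ≤ k → h k = (k : ℤ) + c) : chargeFun f = -c := by
  have hgap : ∀ k : ℕ, h 0 + k ≤ h k := by
    intro k
    induction k with
    | zero => simp
    | succ k IH => have := hmono (by omega : k < k + 1); push_cast; omega
  -- the threshold t where h becomes nonnegative
  have htfin : {k : ℕ | h k < 0}.Finite := by
    apply (Set.finite_Iio (-(h 0)).toNat).subset
    intro k hk
    simp only [Set.mem_setOf_eq] at hk
    simp only [Set.mem_Iio]
    have := hgap k
    omega
  have htdown : ∀ a b : ℕ, a ≤ b → b ∈ {k : ℕ | h k < 0} → a ∈ {k : ℕ | h k < 0} := by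
    intro a b hab hb
    simp only [Set.mem_setOf_eq] at *
    have := hmono.monotone hab
    omega
  set t := {k : ℕ | h k < 0}.ncard with ht
  have hmemt : ∀ k : ℕ, h k < 0 ↔ k < t := by
    intro k
    have := downset_eq_Iio htfin htdown
    constructor
    · intro hk
      have : k ∈ {k : ℕ | h k < 0} := hk
      rw [downset_eq_Iio htfin htdown] at this
      exact this
    · intro hk
      have : k ∈ Set.Iio t := hk
      rw [← downset_eq_Iio htfin htdown] at this
      exact this
  set K' := max K t with hK'
  set M := (K' : ℤ) + c with hM
  have hhK' : h K' = M := hlin K' (le_max_left _ _)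
  have hMnonneg : 0 ≤ M := by
    have h1 : ¬ (h K' < 0) := by
      rw [hmemt]
      omega
    omega
  have hStail : ∀ j : ℤ, M ≤ j → f j = -1 := by
    intro j hj
    have : j ∈ Set.range h := by
      refine ⟨K' + (j - M).toNat, ?_⟩
      rw [hlin _ (by omega)]
      push_cast
      omega
    rw [hrange] at this
    exact this
  -- set A
  have hA : {j : ℤ | j < 0 ∧ f j = -1} = ↑((Finset.range t).image h) := by
    ext j
    simp only [Set.mem_setOf_eq, Finset.coe_image, Set.mem_image, Finset.mem_coe,
      Finset.mem_range]
    constructor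
    · rintro ⟨hj, hfj⟩
      have : j ∈ Set.range h := by rw [hrange]; exact hfj
      obtain ⟨k, rfl⟩ := this
      exact ⟨k, (hmemt k).mp hj, rfl⟩
    · rintro ⟨k, hk, rfl⟩
      refine ⟨(hmemt k).mpr hk, ?_⟩
      have : h k ∈ Set.range h := ⟨k, rfl⟩
      rw [hrange] at this
      exact this
  -- set B
  have hB : {j : ℤ | 0 ≤ j ∧ f j = 1} =
      ↑((Finset.Ico (0 : ℤ) M).filter (fun j => f j = 1)) := by
    ext j
    simp only [Set.mem_setOf_eq, Finset.coe_filter, Finset.mem_Ico]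
    constructor
    · rintro ⟨hj, hfj⟩
      refine ⟨⟨hj, ?_⟩, hfj⟩
      by_contra hcon
      push_neg at hcon
      have := hStail j hcon
      omega
    · rintro ⟨⟨hj, _⟩, hfj⟩
      exact ⟨hj, hfj⟩
  have hBneg : (Finset.Ico (0 : ℤ) M).filter (fun j => ¬ f j = 1) =
      (Finset.Ico (0 : ℤ) M).filter (fun j => f j = -1) := by
    apply Finset.filter_congr
    intro j _
    rcases hval j with h1 | h1 <;> simp [h1]
  have hBneg2 : (Finset.Ico (0 : ℤ) M).filter (fun j => f j = -1) =
      (Finset.Ico t K').image h := by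
    ext j
    simp only [Finset.mem_filter, Finset.mem_Ico, Finset.mem_image]
    constructor
    · rintro ⟨⟨hj0, hjM⟩, hfj⟩
      have : j ∈ Set.range h := by rw [hrange]; exact hfj
      obtain ⟨k, rfl⟩ := this
      refine ⟨k, ⟨?_, ?_⟩, rfl⟩
      · have := (hmemt k); omega
      · by_contra hcon
        push_neg at hcon
        have := hmono.monotone hcon
        omega
    · rintro ⟨k, ⟨hk1, hk2⟩, rfl⟩
      have hmem : h k ∈ Set.range h := ⟨k, rfl⟩
      rw [hrange] at hmem
      refine ⟨⟨?_, ?_⟩, hmem⟩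
      · have := (hmemt k); omega
      · have := hmono hk2; omega
  have hsplit := Finset.card_filter_add_card_filter_not
      (s := Finset.Ico (0 : ℤ) M) (fun j => f j = 1)
  rw [hBneg, hBneg2] at hsplit
  have hcard1 : ((Finset.Ico t K').image h).card = K' - t :=
    by rw [Finset.card_image_of_injective _ hmono.injective, Nat.card_Ico]
  have hcard2 : (Finset.Ico (0 : ℤ) M).card = M.toNat := by rw [Int.card_Ico]; simp
  have hcardA : {j : ℤ | j < 0 ∧ f j = -1}.ncard = t := by
    rw [hA, Set.ncard_coe_finset, Finset.card_image_of_injective _ hmono.injective,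
      Finset.card_range]
  have hcardB : {j : ℤ | 0 ≤ j ∧ f j = 1}.ncard =
      ((Finset.Ico (0 : ℤ) M).filter (fun j => f j = 1)).card := by
    rw [hB, Set.ncard_coe_finset]
  unfold chargeFun
  rw [hcardA, hcardB]
  rw [hcard1, hcard2] at hsplit
  have htK' : t ≤ K' := le_max_right _ _
  -- hsplit : card(filter) + (K' - t) = M.toNat, M = K' + c, conclude
  have hMtoNat : (M.toNat : ℤ) = (K' : ℤ) + c := by omega
  omega
end Wreath
namespace Wreath

attribute [local instance] Classical.propDecidable

lemma maya_enum {f : ℤ → ℤ} (hf : IsMayaFun f) :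
    ∃ (h : ℕ → ℤ) (K : ℕ) (c : ℤ), StrictMono h ∧ Set.range h = {j | f j = -1} ∧
      (∀ k : ℕ, K ≤ k → h k = (k : ℤ) + c) ∧ chargeFun f = -c := by
  obtain ⟨hval, ⟨N1, hN1⟩, ⟨N2, hN2⟩⟩ := hf
  have hL : ∀ j ∈ {j : ℤ | f j = -1}, N2 + 1 ≤ j := by
    intro j hj
    simp only [Set.mem_setOf_eq] at hj
    by_contra hcon
    have := hN2 j (by omega)
    omega
  have hM : ∀ j : ℤ, N1 ≤ j → j ∈ {j : ℤ | f j = -1} := fun j hj => hN1 j hj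
  obtain ⟨K, c, hlin⟩ := enum_eventually hL hM
  exact ⟨enum _, K, c, enum_strictMono hL hM, enum_range hL hM, hlin,
    charge_of_enum hval (enum_strictMono hL hM) (enum_range hL hM) hlin⟩

lemma isMayaFun_shift {f : ℤ → ℤ} (hf : IsMayaFun f) (t : ℤ) :
    IsMayaFun (fun j => f (j - t)) := by
  obtain ⟨hval, ⟨N1, hN1⟩, ⟨N2, hN2⟩⟩ := hf
  exact ⟨fun j => hval _, ⟨N1 + t, fun j hj => hN1 _ (by omega)⟩,
    ⟨N2 + t, fun j hj => hN2 _ (by omega)⟩⟩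

lemma chargeFun_shift {f : ℤ → ℤ} (hf : IsMayaFun f) (t : ℤ) :
    chargeFun (fun j => f (j - t)) = chargeFun f - t := by
  obtain ⟨h, K, c, hmono, hrange, hlin, hcharge⟩ := maya_enum hf
  have hval' : ∀ j : ℤ, f (j - t) = 1 ∨ f (j - t) = -1 := fun j => hf.1 _
  have hmono' : StrictMono (fun k => h k + t) := fun a b hab => by
    show h a + t < h b + t
    have := hmono hab; omega
  have hrange' : Set.range (fun k => h k + t) = {j : ℤ | f (j - t) = -1} := by
    ext j
    simp only [Set.mem_range, Set.mem_setOf_eq]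
    constructor
    · rintro ⟨k, rfl⟩
      have : h k ∈ Set.range h := ⟨k, rfl⟩
      rw [hrange] at this
      simpa using this
    · intro hj
      have : j - t ∈ Set.range h := by rw [hrange]; exact hj
      obtain ⟨k, hk⟩ := this
      exact ⟨k, by omega⟩
  have hlin' : ∀ k : ℕ, K ≤ k → h k + t = (k : ℤ) + (c + t) := by
    intro k hk
    have := hlin k hk
    omega
  have := charge_of_enum hval' hmono' hrange' hlin'
  omega

lemma isMayaFun_maya (lam : YPartition) : IsMayaFun (mayaFun lam) := by
  obtain ⟨N, hN⟩ := lam.eventually_zero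
  refine ⟨maya_values lam, ⟨(N : ℤ), ?_⟩, ⟨-(lam.part 0 : ℤ) - 1, ?_⟩⟩
  · intro j hj
    rw [maya_neg_iff]
    refine ⟨j.toNat, ?_⟩
    have h1 : ((j.toNat : ℕ) : ℤ) = j := Int.toNat_of_nonneg (by omega)
    rw [hN j.toNat (by omega)]
    omega
  · intro j hj
    rcases maya_values lam j with h | h
    · exact h
    · exfalso
      rw [maya_neg_iff] at h
      obtain ⟨b, hb⟩ := h
      have := lam.antitone 0 b (Nat.zero_le b)
      omega

lemma chargeFun_maya (lam : YPartition) : chargeFun (mayaFun lam) = 0 := by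
  obtain ⟨N, hN⟩ := lam.eventually_zero
  have hlin : ∀ k : ℕ, N ≤ k → rowFun lam k = (k : ℤ) + 0 := by
    intro k hk
    unfold rowFun
    rw [hN k hk]
    push_cast
    ring
  have := charge_of_enum (maya_values lam) (rowFun_strictMono lam) (range_rowFun lam) hlin
  omega

lemma strictMono_gap {h : ℕ → ℤ} (hmono : StrictMono h) :
    ∀ a b : ℕ, a ≤ b → h a + ((b : ℤ) - a) ≤ h b := by
  intro a b hab
  induction b with
  | zero =>
    have : a = 0 := by omega
    subst this
    simp
  | succ b IH =>
    rcases Nat.lt_or_ge a (b + 1) with hlt | hge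
    · have h1 := IH (by omega)
      have h2 := hmono (by omega : b < b + 1)
      push_cast
      push_cast at h1
      omega
    · have : a = b + 1 := by omega
      subst this
      simp

lemma exists_partition_iff {f : ℤ → ℤ} (hf : IsMayaFun f) :
    (∃ lam : YPartition, mayaFun lam = f) ↔ chargeFun f = 0 := by
  constructor
  · rintro ⟨lam, rfl⟩
    exact chargeFun_maya lam
  · intro hc
    obtain ⟨h, K, c, hmono, hrange, hlin, hcharge⟩ := maya_enum hf
    have hc0 : c = 0 := by omega
    subst hc0
    have hle : ∀ k : ℕ, h k ≤ (k : ℤ) := by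
      intro k
      rcases Nat.lt_or_ge k K with hlt | hge
      · have h1 := strictMono_gap hmono k K (by omega)
        have h2 := hlin K le_rfl
        omega
      · have := hlin k hge
        omega
    set pt : ℕ → ℕ := fun b => ((b : ℤ) - h b).toNat with hpt
    have hptz : ∀ b : ℕ, (pt b : ℤ) = (b : ℤ) - h b := by
      intro b
      simp only [hpt]
      rw [Int.toNat_of_nonneg (by have := hle b; omega)]
    have hanti : ∀ a b : ℕ, a ≤ b → pt b ≤ pt a := by
      intro a b hab
      have h1 := strictMono_gap hmono a b hab
      have h2 := hptz a
      have h3 := hptz b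
      omega
    have hez : ∃ N, ∀ n, N ≤ n → pt n = 0 := by
      refine ⟨K, fun n hn => ?_⟩
      have h1 := hlin n hn
      have h2 := hptz n
      omega
    set lam : YPartition := ⟨pt, hanti, hez⟩ with hlam
    refine ⟨lam, ?_⟩
    have hrow : ∀ b : ℕ, rowFun lam b = h b := by
      intro b
      unfold rowFun
      have := hptz b
      simp only [hlam] at *
      omega
    have hneg : ∀ j : ℤ, mayaFun lam j = -1 ↔ f j = -1 := by
      intro j
      rw [maya_neg_iff]
      constructor
      · rintro ⟨b, hb⟩
        have : j = h b := by rw [hb, ← hrow b]; rfl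
        have hm : j ∈ Set.range h := ⟨b, this.symm⟩
        rw [hrange] at hm
        exact hm
      · intro hj
        have : j ∈ Set.range h := by rw [hrange]; exact hj
        obtain ⟨b, hb⟩ := this
        refine ⟨b, ?_⟩
        have := hrow b
        unfold rowFun at this
        omega
    funext j
    have h3 := hneg j
    rcases maya_values lam j with h1 | h1 <;> rcases hf.1 j with h2 | h2
    · rw [h1, h2]
    · exfalso; have := h3.mpr h2; omega
    · exfalso; have := h3.mp h1; omega
    · rw [h1, h2]

lemma mayaFun_partitionOfMaya {f : ℤ → ℤ} (h : ∃ lam : YPartition, mayaFun lam = f) :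
    mayaFun (partitionOfMaya f) = f := by
  unfold partitionOfMaya
  rw [dif_pos h]
  exact h.choose_spec

lemma partitionOfMaya_eq {f : ℤ → ℤ} {mu : YPartition} (h : mayaFun mu = f) :
    partitionOfMaya f = mu := by
  apply mayaFun_injective
  rw [mayaFun_partitionOfMaya ⟨mu, h⟩, h]

lemma charge_step {f : ℤ → ℤ} (hval : ∀ j, f j = 1 ∨ f j = -1) {t : ℤ}
    (hstep : ∀ k, f k = 1 ↔ k < t) : chargeFun f = -t := by
  have hmono : StrictMono (fun k : ℕ => t + k) := fun a b hab => by
    simp only; omega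
  have hrange : Set.range (fun k : ℕ => t + (k : ℤ)) = {j : ℤ | f j = -1} := by
    ext j
    simp only [Set.mem_range, Set.mem_setOf_eq]
    constructor
    · rintro ⟨k, rfl⟩
      rcases hval (t + k) with h | h
      · rw [hstep] at h; omega
      · exact h
    · intro hj
      have : ¬ (j < t) := by
        rw [← hstep]
        intro hcon
        omega
      exact ⟨(j - t).toNat, by omega⟩
  have hlin : ∀ k : ℕ, 0 ≤ k → t + (k : ℤ) = (k : ℤ) + t := fun k _ => by ring
  have := charge_of_enum hval hmono hrange hlin
  omega

lemma maya_empty : mayaFun emptyPartition = fun j => if j < 0 then 1 else -1 := by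
  have hconj : ∀ a : ℕ, conj emptyPartition (a + 1) = 0 := by
    intro a
    apply conj_eq emptyPartition (by omega) 0
    · intro k hk; omega
    · show emptyPartition.part 0 < a + 1
      show 0 < a + 1
      omega
  funext j
  rcases lt_or_ge j 0 with hj | hj
  · rw [if_pos hj]
    rw [maya_pos_iff]
    refine ⟨(-j - 1).toNat, ?_⟩
    rw [hconj]
    have : ((-j - 1).toNat : ℤ) = -j - 1 := Int.toNat_of_nonneg (by omega)
    omega
  · rw [if_neg (by omega)]
    rw [maya_neg_iff]
    refine ⟨j.toNat, ?_⟩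
    show j = (j.toNat : ℤ) - (emptyPartition.part j.toNat : ℤ)
    show j = (j.toNat : ℤ) - ((0 : ℕ) : ℤ)
    have : (j.toNat : ℤ) = j := Int.toNat_of_nonneg hj
    omega

lemma noBead_iff_step {f : ℤ → ℤ} (hf : IsMayaFun f) :
    (¬ ∃ k : ℤ, f k = 1 ∧ f (k - 1) = -1) ↔ (∀ k : ℤ, f k = 1 ↔ k < -chargeFun f) := by
  constructor
  · intro hnb
    obtain ⟨hval, ⟨N1, hN1⟩, ⟨N2, hN2⟩⟩ := hf
    obtain ⟨t, ht, htleast⟩ := Int.exists_least_of_bdd (P := fun k => f k = -1)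
      ⟨N2 + 1, fun z hz => by
        by_contra hcon
        have := hN2 z (by omega)
        omega⟩ ⟨N1, hN1 N1 le_rfl⟩
    have hstep : ∀ k : ℤ, f k = 1 ↔ k < t := by
      intro k
      constructor
      · intro hk
        by_contra hcon
        push_neg at hcon
        -- show f k = -1 for all k ≥ t by induction
        have hindN : ∀ n : ℕ, f (t + n) = -1 := by
          intro n
          induction n with
          | zero => simpa using ht
          | succ n IH =>
            rcases hval (t + (n + 1)) with h1 | h1
            · exfalso
              refine hnb ⟨t + (n + 1), by push_cast at h1 ⊢; exact h1, ?_⟩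
              have : t + ((n : ℤ) + 1) - 1 = t + n := by ring
              rw [this]
              exact IH
            · push_cast at h1 ⊢; exact h1
        have hind : ∀ k : ℤ, t ≤ k → f k = -1 := by
          intro k hk
          have := hindN (k - t).toNat
          have h2 : ((k - t).toNat : ℤ) = k - t := Int.toNat_of_nonneg (by omega)
          rw [h2] at this
          simpa using this
        have := hind k hcon
        omega
      · intro hk
        rcases hval k with h1 | h1
        · exact h1
        · have := htleast k h1
          omega
    have := charge_step hval hstep
    intro k
    rw [hstep k]
    omega
  · intro hstep
    rintro ⟨k, h1, h2⟩
    rw [hstep] at h1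
    have : f (k - 1) = 1 := by rw [hstep]; omega
    omega

end Wreath
namespace Wreath

attribute [local instance] Classical.propDecidable

lemma isMayaFun_residue {f : ℤ → ℤ} (hf : IsMayaFun f) {l : ℕ} (hl : 1 ≤ l) {i : ℤ}
    (hi : 0 ≤ i) (hi2 : i < l) : IsMayaFun (fun k => f (i + k * l)) := by
  obtain ⟨hval, ⟨N1, hN1⟩, ⟨N2, hN2⟩⟩ := hf
  refine ⟨fun k => hval _, ⟨max N1 0, ?_⟩, ⟨min (N2 - l + 1) 0, ?_⟩⟩
  · intro k hk
    have hk0 : 0 ≤ k := le_trans (le_max_right _ _) hk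
    have h1 : k * 1 ≤ k * l := by
      apply mul_le_mul_of_nonneg_left _ hk0
      exact_mod_cast hl
    apply hN1
    have := le_max_left N1 (0 : ℤ)
    omega
  · intro k hk
    have hk0 : k ≤ 0 := le_trans hk (min_le_right _ _)
    have h1 : k * l ≤ k * 1 := by
      apply mul_le_mul_of_nonpos_left _ hk0
      exact_mod_cast hl
    apply hN2
    have := min_le_left (N2 - l + 1) (0 : ℤ)
    omega

lemma maya_finite {f : ℤ → ℤ} (hf : IsMayaFun f) :
    {j : ℤ | j < 0 ∧ f j = -1}.Finite ∧ {j : ℤ | 0 ≤ j ∧ f j = 1}.Finite := by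
  obtain ⟨hval, ⟨N1, hN1⟩, ⟨N2, hN2⟩⟩ := hf
  constructor
  · apply (Set.finite_Ico (N2 + 1) 0).subset
    rintro j ⟨hj1, hj2⟩
    simp only [Set.mem_Ico]
    refine ⟨?_, hj1⟩
    by_contra hcon
    have := hN2 j (by omega)
    omega
  · apply (Set.finite_Ico (0 : ℤ) N1).subset
    rintro j ⟨hj1, hj2⟩
    simp only [Set.mem_Ico]
    refine ⟨hj1, ?_⟩
    by_contra hcon
    have := hN1 j (by omega)
    omega

lemma residue_unique {l : ℕ} (hl : 1 ≤ l) {i i' k k' : ℤ} (hi : 0 ≤ i) (hi2 : i < l)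
    (hi' : 0 ≤ i') (hi2' : i' < l) (h : i + k * l = i' + k' * l) : i = i' ∧ k = k' := by
  have h1 : i - i' = (k' - k) * l := by linear_combination h
  have hkk : k = k' := by
    rcases lt_trichotomy k k' with hlt | heq | hgt
    · exfalso
      have : (1 : ℤ) * l ≤ (k' - k) * l := by
        apply mul_le_mul_of_nonneg_right (by omega)
        positivity
      omega
    · exact heq
    · exfalso
      have : (k' - k) * l ≤ (-1 : ℤ) * l := by
        apply mul_le_mul_of_nonneg_right (by omega)
        positivity
      omega
  subst hkk
  constructor
  · omega
  · rfl

lemma mem_residue_decomp {l : ℕ} (hl : 1 ≤ l) (j i k : ℤ) (hi : 0 ≤ i) (hi2 : i < l)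
    (hj : j = i + k * l) : j % (l : ℤ) = i ∧ j / (l : ℤ) = k := by
  have hl0 : (0 : ℤ) < l := by exact_mod_cast hl
  have h1 := Int.mul_ediv_add_emod j l
  have h2 := Int.emod_nonneg j (by omega : (l : ℤ) ≠ 0)
  have h3 := Int.emod_lt_of_pos j hl0
  have := residue_unique hl h2 h3 hi hi2
      (by rw [mul_comm] at h1; omega : j % (l : ℤ) + (j / (l : ℤ)) * l = i + k * l)
  exact ⟨this.1, this.2⟩

/-- The charge of a Maya function is the sum of the charges of its residue functions. -/
lemma chargeFun_residue_sum {f : ℤ → ℤ} (hf : IsMayaFun f) {l : ℕ} (hl : 1 ≤ l) :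
    chargeFun f = ∑ i : Fin l, chargeFun (fun k => f (((i : ℕ) : ℤ) + k * (l : ℤ))) := by
  have hl0 : (0 : ℤ) < l := by exact_mod_cast hl
  have hresM : ∀ i : Fin l, IsMayaFun (fun k => f (((i : ℕ) : ℤ) + k * (l : ℤ))) := by
    intro i
    apply isMayaFun_residue hf hl (by positivity)
    exact_mod_cast i.2
  -- negative part
  have hAfin := (maya_finite hf).1
  have hBfin := (maya_finite hf).2
  have hAifin : ∀ i : Fin l, {k : ℤ | k < 0 ∧ f (((i : ℕ) : ℤ) + k * l) = -1}.Finite :=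
    fun i => (maya_finite (hresM i)).1
  have hBifin : ∀ i : Fin l, {k : ℤ | 0 ≤ k ∧ f (((i : ℕ) : ℤ) + k * l) = 1}.Finite :=
    fun i => (maya_finite (hresM i)).2
  have hAcard : {j : ℤ | j < 0 ∧ f j = -1}.ncard
      = ∑ i : Fin l, {k : ℤ | k < 0 ∧ f (((i : ℕ) : ℤ) + k * l) = -1}.ncard := by
    have hunion : hAfin.toFinset = Finset.univ.biUnion (fun i : Fin l =>
        (hAifin i).toFinset.image (fun k => ((i : ℕ) : ℤ) + k * l)) := by
      ext j
      simp only [Set.Finite.mem_toFinset, Set.mem_setOf_eq, Finset.mem_biUnion,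
        Finset.mem_univ, Finset.mem_image, true_and]
      constructor
      · rintro ⟨hj1, hj2⟩
        have h2 := Int.emod_nonneg j (by omega : (l : ℤ) ≠ 0)
        have h3 := Int.emod_lt_of_pos j hl0
        refine ⟨⟨(j % (l : ℤ)).toNat, by omega⟩, j / (l : ℤ), ⟨?_, ?_⟩, ?_⟩
        · rw [Int.ediv_lt_iff_lt_mul hl0]
          omega
        · have h1 := Int.mul_ediv_add_emod j l
          have h4 : ((((j % (l : ℤ)).toNat : ℕ)) : ℤ) = j % (l : ℤ) := Int.toNat_of_nonneg h2
          rw [h4]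
          rw [mul_comm] at h1
          rw [show j % (l : ℤ) + j / (l : ℤ) * l = j by omega]
          exact hj2
        · have h1 := Int.mul_ediv_add_emod j l
          have h4 : ((((j % (l : ℤ)).toNat : ℕ)) : ℤ) = j % (l : ℤ) := Int.toNat_of_nonneg h2
          rw [h4]
          rw [mul_comm] at h1
          omega
      · rintro ⟨i, k, ⟨hk1, hk2⟩, rfl⟩
        have hi2 : ((i : ℕ) : ℤ) < l := by exact_mod_cast i.2
        have hi0 : (0 : ℤ) ≤ ((i : ℕ) : ℤ) := by positivity
        refine ⟨?_, hk2⟩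
        have : k * l ≤ (-1) * l := mul_le_mul_of_nonneg_right (by omega) (by positivity)
        omega
    have h1 : {j : ℤ | j < 0 ∧ f j = -1}.ncard = hAfin.toFinset.card := by
      rw [← Set.ncard_coe_finset, Set.Finite.coe_toFinset]
    rw [h1, hunion, Finset.card_biUnion]
    · apply Finset.sum_congr rfl
      intro i _
      rw [Finset.card_image_of_injective, ← Set.ncard_coe_finset, Set.Finite.coe_toFinset]
      intro a b hab
      have := residue_unique hl (by positivity : (0:ℤ) ≤ ((i : ℕ) : ℤ))
        (by exact_mod_cast i.2) (by positivity : (0:ℤ) ≤ ((i : ℕ) : ℤ))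
        (by exact_mod_cast i.2) hab
      exact this.2
    · intro x _ y _ hxy
      rw [Function.onFun, Finset.disjoint_left]
      rintro j hj1 hj2
      simp only [Finset.mem_image, Set.Finite.mem_toFinset, Set.mem_setOf_eq] at hj1 hj2
      obtain ⟨k1, _, he1⟩ := hj1
      obtain ⟨k2, _, he2⟩ := hj2
      have := residue_unique hl (by positivity : (0:ℤ) ≤ ((x : ℕ) : ℤ))
        (by exact_mod_cast x.2) (by positivity : (0:ℤ) ≤ ((y : ℕ) : ℤ))
        (by exact_mod_cast y.2) (he1.trans he2.symm)
      apply hxy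
      have : ((x : ℕ) : ℤ) = ((y : ℕ) : ℤ) := this.1
      have : (x : ℕ) = (y : ℕ) := by exact_mod_cast this
      exact Fin.ext this
  have hBcard : {j : ℤ | 0 ≤ j ∧ f j = 1}.ncard
      = ∑ i : Fin l, {k : ℤ | 0 ≤ k ∧ f (((i : ℕ) : ℤ) + k * l) = 1}.ncard := by
    have hunion : hBfin.toFinset = Finset.univ.biUnion (fun i : Fin l =>
        (hBifin i).toFinset.image (fun k => ((i : ℕ) : ℤ) + k * l)) := by
      ext j
      simp only [Set.Finite.mem_toFinset, Set.mem_setOf_eq, Finset.mem_biUnion,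
        Finset.mem_univ, Finset.mem_image, true_and]
      constructor
      · rintro ⟨hj1, hj2⟩
        have h2 := Int.emod_nonneg j (by omega : (l : ℤ) ≠ 0)
        have h3 := Int.emod_lt_of_pos j hl0
        refine ⟨⟨(j % (l : ℤ)).toNat, by omega⟩, j / (l : ℤ), ⟨?_, ?_⟩, ?_⟩
        · exact Int.ediv_nonneg hj1 (by omega)
        · have h1 := Int.mul_ediv_add_emod j l
          have h4 : ((((j % (l : ℤ)).toNat : ℕ)) : ℤ) = j % (l : ℤ) := Int.toNat_of_nonneg h2
          rw [h4]
          rw [mul_comm] at h1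
          rw [show j % (l : ℤ) + j / (l : ℤ) * l = j by omega]
          exact hj2
        · have h1 := Int.mul_ediv_add_emod j l
          have h4 : ((((j % (l : ℤ)).toNat : ℕ)) : ℤ) = j % (l : ℤ) := Int.toNat_of_nonneg h2
          rw [h4]
          rw [mul_comm] at h1
          omega
      · rintro ⟨i, k, ⟨hk1, hk2⟩, rfl⟩
        have hi0 : (0 : ℤ) ≤ ((i : ℕ) : ℤ) := by positivity
        refine ⟨?_, hk2⟩
        have : (0 : ℤ) * l ≤ k * l := mul_le_mul_of_nonneg_right hk1 (by positivity)
        omega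
    have h1 : {j : ℤ | 0 ≤ j ∧ f j = 1}.ncard = hBfin.toFinset.card := by
      rw [← Set.ncard_coe_finset, Set.Finite.coe_toFinset]
    rw [h1, hunion, Finset.card_biUnion]
    · apply Finset.sum_congr rfl
      intro i _
      rw [Finset.card_image_of_injective, ← Set.ncard_coe_finset, Set.Finite.coe_toFinset]
      intro a b hab
      have := residue_unique hl (by positivity : (0:ℤ) ≤ ((i : ℕ) : ℤ))
        (by exact_mod_cast i.2) (by positivity : (0:ℤ) ≤ ((i : ℕ) : ℤ))
        (by exact_mod_cast i.2) hab
      exact this.2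
    · intro x _ y _ hxy
      rw [Function.onFun, Finset.disjoint_left]
      rintro j hj1 hj2
      simp only [Finset.mem_image, Set.Finite.mem_toFinset, Set.mem_setOf_eq] at hj1 hj2
      obtain ⟨k1, _, he1⟩ := hj1
      obtain ⟨k2, _, he2⟩ := hj2
      have := residue_unique hl (by positivity : (0:ℤ) ≤ ((x : ℕ) : ℤ))
        (by exact_mod_cast x.2) (by positivity : (0:ℤ) ≤ ((y : ℕ) : ℤ))
        (by exact_mod_cast y.2) (he1.trans he2.symm)
      apply hxy
      have : ((x : ℕ) : ℤ) = ((y : ℕ) : ℤ) := this.1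
      have : (x : ℕ) = (y : ℕ) := by exact_mod_cast this
      exact Fin.ext this
  unfold chargeFun
  rw [hAcard, hBcard]
  push_cast
  rw [Finset.sum_sub_distrib]

end Wreath
namespace Wreath

attribute [local instance] Classical.propDecidable

lemma memYD_nat (lam : YPartition) (a : ℤ) (r : ℕ) :
    Partition.memYD lam (a, (r : ℤ) + 1) ↔ 1 ≤ a ∧ a ≤ (lam.part r : ℤ) := by
  unfold Partition.memYD
  have h1 : (((r : ℤ) + 1) - 1).toNat = r := by omega
  simp only [h1]
  constructor
  · rintro ⟨ha, _, hb⟩; exact ⟨ha, hb⟩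
  · rintro ⟨ha, hb⟩; exact ⟨ha, by omega, hb⟩

lemma skewMem_iff (mu lam : YPartition) (x : ℤ × ℤ) :
    SkewMem mu lam x ↔ 1 ≤ x.2 ∧ (mu.part (x.2 - 1).toNat : ℤ) < x.1 ∧
      x.1 ≤ (lam.part (x.2 - 1).toNat : ℤ) := by
  unfold SkewMem Partition.memYD
  constructor
  · rintro ⟨⟨h1, h2, h3⟩, h4⟩
    refine ⟨h2, ?_, h3⟩
    by_contra hcon
    push_neg at hcon
    exact h4 ⟨h1, h2, hcon⟩
  · rintro ⟨h2, h4, h3⟩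
    have h0 : (0 : ℤ) ≤ (mu.part (x.2 - 1).toNat : ℤ) := by positivity
    exact ⟨⟨by omega, h2, h3⟩, fun hc => by omega⟩

lemma skewMem_nat (mu lam : YPartition) (a : ℤ) (r : ℕ) :
    SkewMem mu lam (a, (r : ℤ) + 1) ↔ (mu.part r : ℤ) < a ∧ a ≤ (lam.part r : ℤ) := by
  rw [skewMem_iff]
  have h1 : (((r : ℤ) + 1) - 1).toNat = r := by omega
  simp only [h1]
  constructor
  · rintro ⟨_, h2, h3⟩; exact ⟨h2, h3⟩
  · rintro ⟨h2, h3⟩; exact ⟨by omega, h2, h3⟩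

lemma skewMem_row (mu lam : YPartition) (x : ℤ × ℤ) (hx : SkewMem mu lam x) :
    ∃ (a : ℤ) (r : ℕ), x = (a, (r : ℤ) + 1) ∧ (mu.part r : ℤ) < a ∧ a ≤ (lam.part r : ℤ) := by
  rw [skewMem_iff] at hx
  obtain ⟨h1, h2, h3⟩ := hx
  refine ⟨x.1, (x.2 - 1).toNat, ?_, h2, h3⟩
  have : ((x.2 - 1).toNat : ℤ) + 1 = x.2 := by omega
  rw [this]

lemma sub_iff (mu lam : YPartition) : Sub mu lam ↔ ∀ r : ℕ, mu.part r ≤ lam.part r := by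
  constructor
  · intro hsub r
    rcases Nat.eq_zero_or_pos (mu.part r) with h | h
    · omega
    · have hx : Partition.memYD mu ((mu.part r : ℤ), (r : ℤ) + 1) := by
        rw [memYD_nat]
        constructor <;> omega
      have := hsub _ hx
      rw [memYD_nat] at this
      omega
  · intro hle x hx
    obtain ⟨h1, h2, h3⟩ := hx
    refine ⟨h1, h2, ?_⟩
    have := hle (x.2 - 1).toNat
    omega

lemma sum_telescope_Ico (g : ℕ → ℤ) (b d : ℕ) (hbd : b ≤ d) :
    ∑ r ∈ Finset.Ico b d, (g r - g (r + 1)) = g b - g d := by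
  induction d, hbd using Nat.le_induction with
  | base => simp
  | succ d hbd IH =>
    rw [Finset.sum_Ico_succ_top hbd, IH]
    ring

lemma skewSize_eq (mu lam : YPartition) (hsub : ∀ r : ℕ, mu.part r ≤ lam.part r) (D : ℕ)
    (hD : ∀ r : ℕ, D ≤ r → mu.part r = lam.part r) :
    (skewSize mu lam : ℤ) = ∑ r ∈ Finset.range D, ((lam.part r : ℤ) - mu.part r) := by
  have hset : {x | SkewMem mu lam x} = ↑((Finset.range D).biUnion (fun r =>
      (Finset.Ioc (mu.part r : ℤ) (lam.part r : ℤ)).image (fun a => (a, (r : ℤ) + 1)))) := by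
    ext x
    simp only [Set.mem_setOf_eq, Finset.coe_biUnion, Set.mem_iUnion, Finset.mem_coe,
      Finset.mem_biUnion, Finset.mem_range, Finset.mem_image, Finset.mem_Ioc]
    constructor
    · intro hx
      obtain ⟨a, r, rfl, h2, h3⟩ := skewMem_row mu lam x hx
      refine ⟨r, ?_, a, ⟨h2, h3⟩, rfl⟩
      by_contra hcon
      push_neg at hcon
      have := hD r hcon
      omega
    · rintro ⟨r, _, a, ⟨h2, h3⟩, rfl⟩
      rw [skewMem_nat]
      exact ⟨h2, h3⟩
  unfold skewSize
  rw [hset, Set.ncard_coe_finset, Finset.card_biUnion]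
  · push_cast
    apply Finset.sum_congr rfl
    intro r _
    rw [Finset.card_image_of_injective _ (fun a a' haa => by
      simpa using congrArg Prod.fst haa), Int.card_Ioc]
    have := hsub r
    push_cast
    omega
  · intro x _ y _ hxy
    rw [Function.onFun, Finset.disjoint_left]
    rintro p hp1 hp2
    simp only [Finset.mem_image] at hp1 hp2
    obtain ⟨a1, _, he1⟩ := hp1
    obtain ⟨a2, _, he2⟩ := hp2
    apply hxy
    have := congrArg Prod.snd (he1.trans he2.symm)
    simp only at this
    omega

end Wreath
namespace Wreath

attribute [local instance] Classical.propDecidable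

section Shape

variable {mu lam : YPartition} {b d : ℕ}

/-- Shape hypotheses for a rim hook between rows `b` and `d` (0-indexed). -/
def Shape (mu lam : YPartition) (b d : ℕ) : Prop :=
  b ≤ d ∧ (∀ r, r < b → mu.part r = lam.part r) ∧
    (∀ r, b ≤ r → r < d → mu.part r + 1 = lam.part (r + 1)) ∧
    mu.part d < lam.part d ∧ (∀ r, d < r → mu.part r = lam.part r)

lemma Shape.nonempty_row (h : Shape mu lam b d) :
    ∀ r, b ≤ r → r ≤ d → mu.part r < lam.part r := by
  obtain ⟨hbd, h1, h2, h3, h4⟩ := h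
  intro r hr1 hr2
  rcases Nat.lt_or_ge r d with hlt | hge
  · have := h2 r hr1 hlt
    have := lam.antitone r (r + 1) (by omega)
    omega
  · have : r = d := by omega
    rw [this]; exact h3

lemma Shape.sub (h : Shape mu lam b d) : ∀ r, mu.part r ≤ lam.part r := by
  obtain ⟨hbd, h1, h2, h3, h4⟩ := h
  intro r
  rcases Nat.lt_or_ge r b with hlt | hge
  · rw [h1 r hlt]
  · rcases Nat.lt_or_ge r d with hlt2 | hge2
    · have := h2 r hge hlt2
      have := lam.antitone r (r + 1) (by omega)
      omega
    · rcases Nat.eq_or_lt_of_le hge2 with heq | hlt3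
      · subst heq; omega
      · rw [h4 r hlt3]

lemma Shape.row_range (h : Shape mu lam b d) {r : ℕ} (hr : mu.part r < lam.part r) :
    b ≤ r ∧ r ≤ d := by
  obtain ⟨hbd, h1, h2, h3, h4⟩ := h
  constructor
  · by_contra hcon
    push_neg at hcon
    rw [h1 r hcon] at hr
    omega
  · by_contra hcon
    push_neg at hcon
    rw [h4 r hcon] at hr
    omega

/-- The skew relation for connectivity. -/
def SkewRel (mu lam : YPartition) : ℤ × ℤ → ℤ × ℤ → Prop :=
  fun u v => SkewMem mu lam u ∧ SkewMem mu lam v ∧ adjacent u v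

lemma adjacent_symm : Symmetric adjacent := by
  intro x y h
  unfold adjacent at *
  rcases h with ⟨h1, h2⟩ | ⟨h1, h2⟩
  · left; exact ⟨by omega, by omega⟩
  · right; exact ⟨by omega, by omega⟩

lemma skewRel_symm : Symmetric (SkewRel mu lam) := by
  rintro x y ⟨h1, h2, h3⟩
  exact ⟨h2, h1, adjacent_symm h3⟩

lemma chain_row (r : ℕ) : ∀ n : ℕ, ∀ a : ℤ,
    (mu.part r : ℤ) < a → a + n ≤ (lam.part r : ℤ) →
    Relation.ReflTransGen (SkewRel mu lam) (a, (r : ℤ) + 1) (a + n, (r : ℤ) + 1) := by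
  intro n
  induction n with
  | zero => intro a _ _; simpa using Relation.ReflTransGen.refl
  | succ n IH =>
    intro a h1 h2
    push_cast at h2 ⊢
    have step : SkewRel mu lam (a + n, (r : ℤ) + 1) (a + n + 1, (r : ℤ) + 1) := by
      refine ⟨?_, ?_, ?_⟩
      · rw [skewMem_nat]; constructor <;> omega
      · rw [skewMem_nat]; constructor <;> omega
      · unfold adjacent; right; exact ⟨rfl, by omega⟩
    have h3 := IH a h1 (by push_cast; omega)
    push_cast at h3
    have hassoc : a + ((n : ℤ) + 1) = a + n + 1 := by ring
    rw [hassoc]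
    exact h3.tail step

lemma chain_row' (r : ℕ) (a a' : ℤ) (h1 : (mu.part r : ℤ) < a) (h2 : a ≤ (lam.part r : ℤ))
    (h1' : (mu.part r : ℤ) < a') (h2' : a' ≤ (lam.part r : ℤ)) :
    Relation.ReflTransGen (SkewRel mu lam) (a, (r : ℤ) + 1) (a', (r : ℤ) + 1) := by
  rcases le_total a a' with h | h
  · have h3 := chain_row (mu := mu) (lam := lam) r (a' - a).toNat a h1 (by omega)
    have he : a + ((a' - a).toNat : ℤ) = a' := by omega
    rwa [he] at h3
  · have h3 := chain_row (mu := mu) (lam := lam) r (a - a').toNat a' h1' (by omega)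
    have he : a' + ((a - a').toNat : ℤ) = a := by omega
    rw [he] at h3
    exact (haveI : Std.Symm (SkewRel mu lam) := ⟨fun _ _ h => skewRel_symm h⟩; Std.Symm.symm _ _ h3)

lemma Shape.climb (h : Shape mu lam b d) {r : ℕ} (hr1 : b ≤ r) (hr2 : r < d) :
    SkewRel mu lam ((lam.part (r + 1) : ℤ), ((r : ℕ) : ℤ) + 1 + 1)
      ((lam.part (r + 1) : ℤ), ((r : ℕ) : ℤ) + 1) := by
  have hnr := h.nonempty_row (r + 1) (by omega) (by omega)
  have hs := h.2.2.1 r hr1 hr2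
  have hmono := lam.antitone r (r + 1) (by omega)
  refine ⟨?_, ?_, ?_⟩
  · have he : ((r : ℤ) + 1 + 1) = (((r + 1 : ℕ) : ℤ)) + 1 := by push_cast; ring
    rw [he, skewMem_nat]
    constructor <;> push_cast <;> omega
  · rw [skewMem_nat]
    constructor <;> omega
  · unfold adjacent; left; exact ⟨rfl, by omega⟩

lemma Shape.chain_to_anchor (h : Shape mu lam b d) :
    ∀ n : ℕ, ∀ r : ℕ, r = b + n → r ≤ d →
    Relation.ReflTransGen (SkewRel mu lam) ((lam.part r : ℤ), (r : ℤ) + 1)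
      ((lam.part b : ℤ), (b : ℤ) + 1) := by
  intro n
  induction n with
  | zero =>
    intro r hr _
    have hrb : r = b := by omega
    subst hrb
    exact Relation.ReflTransGen.refl
  | succ n IH =>
    intro r hr hrd
    set r' := r - 1 with hr'
    have hb1 : b ≤ r' := by omega
    have hr'd : r' < d := by omega
    have hclimb := h.climb hb1 hr'd
    have hrow : Relation.ReflTransGen (SkewRel mu lam)
        ((lam.part (r' + 1) : ℤ), ((r' : ℕ) : ℤ) + 1)
        ((lam.part r' : ℤ), ((r' : ℕ) : ℤ) + 1) := by
      apply chain_row'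
      · have := h.2.2.1 r' hb1 hr'd
        omega
      · have := lam.antitone r' (r' + 1) (by omega)
        omega
      · have := h.nonempty_row r' hb1 (by omega)
        omega
      · omega
    have hIH := IH r' (by omega) (by omega)
    have heq : ((lam.part r : ℤ), (r : ℤ) + 1)
        = ((lam.part (r' + 1) : ℤ), ((r' : ℕ) : ℤ) + 1 + 1) := by
      have he1 : r' + 1 = r := by omega
      have he2 : ((r' : ℕ) : ℤ) + 1 + 1 = (r : ℤ) + 1 := by push_cast; omega
      rw [he1, he2]
    rw [heq]
    exact ((Relation.ReflTransGen.single hclimb).trans hrow).trans hIH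

lemma Shape.connected (h : Shape mu lam b d) :
    ∀ x y, SkewMem mu lam x → SkewMem mu lam y →
      Relation.ReflTransGen (SkewRel mu lam) x y := by
  have anchor : ∀ x, SkewMem mu lam x →
      Relation.ReflTransGen (SkewRel mu lam) x ((lam.part b : ℤ), (b : ℤ) + 1) := by
    intro x hx
    obtain ⟨a, r, rfl, h2, h3⟩ := skewMem_row mu lam x hx
    have hrr := h.row_range (show mu.part r < lam.part r by omega)
    have hrow := chain_row' r a (lam.part r) h2 h3
      (by have := h.nonempty_row r hrr.1 hrr.2; omega) le_rfl
    exact hrow.trans (h.chain_to_anchor (r - b) r (by omega) hrr.2)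
  intro x y hx hy
  exact (anchor x hx).trans (haveI : Std.Symm (SkewRel mu lam) := ⟨fun _ _ h => skewRel_symm h⟩; Std.Symm.symm _ _ (anchor y hy))

lemma Shape.no2x2 (h : Shape mu lam b d) :
    ¬ ∃ a c : ℤ, SkewMem mu lam (a, c) ∧ SkewMem mu lam (a + 1, c) ∧
      SkewMem mu lam (a, c + 1) ∧ SkewMem mu lam (a + 1, c + 1) := by
  rintro ⟨a, c, k1, k2, k3, k4⟩
  rw [skewMem_iff] at k1 k2 k3 k4
  simp only at k1 k2 k3 k4
  obtain ⟨hc1, k1a, k1b⟩ := k1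
  obtain ⟨_, k2a, k2b⟩ := k2
  obtain ⟨_, k3a, k3b⟩ := k3
  obtain ⟨_, k4a, k4b⟩ := k4
  set r := (c - 1).toNat with hrdef
  have hcr : (c + 1 - 1).toNat = r + 1 := by omega
  rw [hcr] at k3a k3b k4a k4b
  have hrow1 : mu.part r < lam.part r := by omega
  have hrow2 : mu.part (r + 1) < lam.part (r + 1) := by omega
  have hr1 := h.row_range hrow1
  have hr2 := h.row_range hrow2
  have hs := h.2.2.1 r hr1.1 (by omega)
  omega

lemma Shape.strip (h : Shape mu lam b d) : IsBorderStrip mu lam := by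
  refine ⟨(sub_iff mu lam).mpr h.sub, ?_, ?_, ?_⟩
  · refine ⟨((mu.part d : ℤ) + 1, (d : ℤ) + 1), ?_⟩
    rw [skewMem_nat]
    have := h.2.2.2.1
    constructor <;> omega
  · exact fun x y hx hy => h.connected x y hx hy
  · exact h.no2x2

lemma Shape.size (h : Shape mu lam b d) :
    (skewSize mu lam : ℤ) = (lam.part b : ℤ) + (d : ℤ) - b - mu.part d := by
  rw [skewSize_eq mu lam h.sub (d + 1) (fun r hr => h.2.2.2.2 r (by omega))]
  rw [Finset.range_eq_Ico, ← Finset.sum_Ico_consecutive _ (Nat.zero_le b) (Nat.le_succ_of_le h.1)]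
  have hz : ∑ r ∈ Finset.Ico 0 b, ((lam.part r : ℤ) - mu.part r) = 0 :=
    Finset.sum_eq_zero (fun r hr => by
      have := h.2.1 r (by simp only [Finset.mem_Ico] at hr; omega)
      omega)
  rw [hz, zero_add, Finset.sum_Ico_succ_top h.1]
  have hsum : ∑ r ∈ Finset.Ico b d, ((lam.part r : ℤ) - mu.part r)
      = ∑ r ∈ Finset.Ico b d, (((lam.part r : ℤ) - lam.part (r + 1)) + 1) :=
    Finset.sum_congr rfl (fun r hr => by
      simp only [Finset.mem_Ico] at hr
      have := h.2.2.1 r hr.1 hr.2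
      push_cast
      omega)
  rw [hsum, Finset.sum_add_distrib, sum_telescope_Ico (fun r => (lam.part r : ℤ)) b d h.1]
  rw [Finset.sum_const, Nat.card_Ico, nsmul_eq_mul, Nat.cast_sub h.1]
  ring

end Shape

end Wreath
namespace Wreath

attribute [local instance] Classical.propDecidable

lemma antitone_of_succ {f : ℕ → ℕ} (h : ∀ r, f (r + 1) ≤ f r) : ∀ a b, a ≤ b → f b ≤ f a := by
  intro a b hab
  induction b, hab using Nat.le_induction with
  | base => exact le_rfl
  | succ b hab IH => exact le_trans (h b) IH

lemma strip_of_bead {lam : YPartition} {l : ℕ} (hl : 1 ≤ l) {j : ℤ}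
    (h1 : mayaFun lam j = 1) (h2 : mayaFun lam (j - l) = -1) :
    ∃ mu : YPartition, IsBorderStrip mu lam ∧ skewSize mu lam = l := by
  rw [maya_pos_iff] at h1
  rw [maya_neg_iff] at h2
  obtain ⟨a', ha⟩ := h1
  obtain ⟨b, hb⟩ := h2
  set A := a' + 1 with hA
  set D := conj lam A with hD
  have hA1 : 1 ≤ A := by omega
  have haD : j = (D : ℤ) - A := by rw [ha, hA]; push_cast; ring
  have hbD : b + 1 ≤ D := by
    by_contra hcon
    push_neg at hcon
    have hpb : lam.part b < A := by
      by_contra hc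
      push_neg at hc
      have hg := (conj_galois lam hA1 b).mpr hc
      rw [← hD] at hg
      omega
    omega
  set d := D - 1 with hd
  have hDd : D = d + 1 := by omega
  have hbd : b ≤ d := by omega
  have hgal1 : A ≤ lam.part d := (conj_galois lam hA1 d).mp (by omega)
  have hgal2 : lam.part (d + 1) < A := by
    by_contra hcon
    push_neg at hcon
    have := (conj_galois lam hA1 (d + 1)).mpr hcon
    omega
  have hgalb : A ≤ lam.part b := (conj_galois lam hA1 b).mp (by omega)
  set pt : ℕ → ℕ := fun r => if r < b then lam.part r else if r < d then lam.part (r + 1) - 1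
    else if r = d then A - 1 else lam.part r with hpt
  have hval1 : ∀ r, r < b → pt r = lam.part r := by
    intro r hr
    simp only [hpt]
    rw [if_pos hr]
  have hval2 : ∀ r, b ≤ r → r < d → pt r = lam.part (r + 1) - 1 := by
    intro r hr1 hr2
    simp only [hpt]
    rw [if_neg (by omega), if_pos hr2]
  have hval3 : pt d = A - 1 := by
    simp only [hpt]
    rw [if_neg (by omega), if_neg (by omega)]
    simp
  have hval4 : ∀ r, d < r → pt r = lam.part r := by
    intro r hr
    simp only [hpt]
    rw [if_neg (by omega), if_neg (by omega), if_neg (by omega)]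
  have hstep : ∀ r, pt (r + 1) ≤ pt r := by
    intro r
    rcases Nat.lt_or_ge (r + 1) b with c1 | c1
    · rw [hval1 _ c1, hval1 _ (by omega)]
      exact lam.antitone r (r + 1) (by omega)
    · rcases Nat.lt_or_ge r b with c2 | c2
      · -- r + 1 = b
        have hrb : r + 1 = b := by omega
        rw [hval1 _ c2]
        rcases Nat.lt_or_ge (r + 1) d with c3 | c3
        · rw [hval2 _ (by omega) c3]
          have := lam.antitone r (r + 1 + 1) (by omega)
          omega
        · have hrd : r + 1 = d := by omega
          rw [hrd, hval3]
          have h5 : lam.part b ≤ lam.part r := lam.antitone r b (by omega)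
          have h6 : lam.part d ≤ lam.part b := lam.antitone b d hbd
          omega
      · rcases Nat.lt_or_ge (r + 1) d with c3 | c3
        · rw [hval2 _ (by omega) c3, hval2 _ c2 (by omega)]
          have := lam.antitone (r + 1) (r + 1 + 1) (by omega)
          omega
        · rcases Nat.eq_or_lt_of_le c3 with c4 | c4
          · -- r + 1 = d
            rw [← c4, hval3, hval2 _ c2 (by omega)]
            have h5 : lam.part d ≤ lam.part (r + 1) := lam.antitone (r + 1) d (by omega)
            omega
          · rcases Nat.eq_or_lt_of_le (show d ≤ r by omega) with c5 | c5
            · rw [← c5, hval3, hval4 _ (by omega)]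
              omega
            · rw [hval4 _ (by omega), hval4 _ c5]
              exact lam.antitone r (r + 1) (by omega)
  obtain ⟨N1, hN1⟩ := lam.eventually_zero
  set mu : YPartition := ⟨pt, antitone_of_succ hstep, ⟨max (d + 1) N1, fun n hn => by
    rw [hval4 n (by omega)]
    exact hN1 n (by omega)⟩⟩ with hmu
  have hshape : Shape mu lam b d := by
    refine ⟨hbd, hval1, ?_, ?_, hval4⟩
    · intro r hr1 hr2
      show pt r + 1 = lam.part (r + 1)
      rw [hval2 r hr1 hr2]
      have h5 : lam.part d ≤ lam.part (r + 1) := lam.antitone (r + 1) d (by omega)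
      omega
    · show pt d < lam.part d
      rw [hval3]
      omega
  refine ⟨mu, hshape.strip, ?_⟩
  have hsz := hshape.size
  have hmud : mu.part d = A - 1 := hval3
  rw [hmud] at hsz
  omega

end Wreath
namespace Wreath

attribute [local instance] Classical.propDecidable

lemma adjacent_rows {x y : ℤ × ℤ} (h : adjacent x y) :
    y.2 = x.2 ∨ y.2 = x.2 + 1 ∨ y.2 = x.2 - 1 := by
  unfold adjacent at h
  rcases h with ⟨h1, h2⟩ | ⟨h1, h2⟩ <;> omega

lemma chain_visits {mu lam : YPartition} {x y : ℤ × ℤ}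
    (hchain : Relation.ReflTransGen (SkewRel mu lam) x y) (hx : SkewMem mu lam x) :
    ∀ m : ℤ, x.2 ≤ m → m ≤ y.2 → ∃ z, SkewMem mu lam z ∧ z.2 = m := by
  revert hx
  induction hchain using Relation.ReflTransGen.head_induction_on with
  | refl =>
    intro hy m h1 h2
    exact ⟨y, hy, by omega⟩
  | head hrel hchain ih =>
    rename_i u c
    intro hu m h1 h2
    have hc : SkewMem mu lam c := hrel.2.1
    have hadj := adjacent_rows hrel.2.2
    rcases le_or_gt c.2 m with hle | hlt
    · exact ih hc m hle h2
    · exact ⟨u, hu, by omega⟩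

lemma chain_crossing {mu lam : YPartition} {x y : ℤ × ℤ}
    (hchain : Relation.ReflTransGen (SkewRel mu lam) x y) (hx : SkewMem mu lam x) :
    ∀ m : ℤ, x.2 ≤ m → m < y.2 →
      ∃ a : ℤ, SkewMem mu lam (a, m) ∧ SkewMem mu lam (a, m + 1) := by
  revert hx
  induction hchain using Relation.ReflTransGen.head_induction_on with
  | refl =>
    intro hy m h1 h2
    omega
  | head hrel hchain ih =>
    rename_i u c
    intro hu m h1 h2
    have hc : SkewMem mu lam c := hrel.2.1
    have hadj := adjacent_rows hrel.2.2
    rcases le_or_gt c.2 m with hle | hlt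
    · exact ih hc m hle h2
    · -- u.2 ≤ m < c.2, so c.2 = u.2 + 1, m = u.2, and the step is vertical
      have hcu : c.2 = u.2 + 1 := by omega
      have hm : m = u.2 := by omega
      have hcol : u.1 = c.1 := by
        rcases hrel.2.2 with ⟨hcc, _⟩ | ⟨hrr, _⟩
        · exact hcc
        · omega
      refine ⟨u.1, ?_, ?_⟩
      · have : (u.1, m) = u := by rw [hm]
        rw [this]; exact hu
      · have : (u.1, m + 1) = c := by rw [hm, hcol]; rw [← hcu]
        rw [this]; exact hc
  
lemma bead_of_strip {lam : YPartition} {l : ℕ} {mu : YPartition}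
    (hstrip : IsBorderStrip mu lam) (hsize : skewSize mu lam = l) :
    ∃ j : ℤ, mayaFun lam j = 1 ∧ mayaFun lam (j - l) = -1 := by
  obtain ⟨hsubYD, ⟨x0, hx0⟩, hconn, h2x2⟩ := hstrip
  have hsub := (sub_iff mu lam).mp hsubYD
  obtain ⟨N1, hN1⟩ := lam.eventually_zero
  have hRfin : {r : ℕ | mu.part r < lam.part r}.Finite := by
    apply (Set.finite_Iio N1).subset
    intro r hr
    simp only [Set.mem_setOf_eq] at hr
    simp only [Set.mem_Iio]
    by_contra hcon
    push_neg at hcon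
    have := hN1 r hcon
    omega
  have hRne : {r : ℕ | mu.part r < lam.part r}.Nonempty := by
    obtain ⟨a, r, rfl, hh2, hh3⟩ := skewMem_row mu lam x0 hx0
    exact ⟨r, by simp only [Set.mem_setOf_eq]; omega⟩
  set RF := hRfin.toFinset with hRF
  have hRFne : RF.Nonempty := hRfin.toFinset_nonempty.mpr hRne
  set b := RF.min' hRFne with hbdef
  set d := RF.max' hRFne with hddef
  have hbR : mu.part b < lam.part b := hRfin.mem_toFinset.mp (RF.min'_mem hRFne)
  have hdR : mu.part d < lam.part d := hRfin.mem_toFinset.mp (RF.max'_mem hRFne)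
  have hrange : ∀ r, mu.part r < lam.part r → b ≤ r ∧ r ≤ d := by
    intro r hr
    have hmem : r ∈ RF := hRfin.mem_toFinset.mpr hr
    exact ⟨RF.min'_le r hmem, RF.le_max' r hmem⟩
  have hbd : b ≤ d := (hrange d hdR).1
  set xb : ℤ × ℤ := ((mu.part b : ℤ) + 1, (b : ℤ) + 1) with hxbdef
  set xd : ℤ × ℤ := ((mu.part d : ℤ) + 1, (d : ℤ) + 1) with hxddef
  have hxb : SkewMem mu lam xb := by rw [hxbdef, skewMem_nat]; constructor <;> omega
  have hxd : SkewMem mu lam xd := by rw [hxddef, skewMem_nat]; constructor <;> omega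
  have hchain := hconn xb xd hxb hxd
  have hS2 : ∀ r, b ≤ r → r < d → mu.part r + 1 = lam.part (r + 1) := by
    intro r hr1 hr2
    obtain ⟨a, hc1, hc2⟩ := chain_crossing hchain hxb ((r : ℤ) + 1)
      (by rw [hxbdef]; simp only; omega) (by rw [hxddef]; simp only; omega)
    rw [skewMem_nat] at hc1
    have hcast : ((r : ℤ) + 1 + 1) = ((r + 1 : ℕ) : ℤ) + 1 := by push_cast; ring
    rw [hcast, skewMem_nat] at hc2
    by_contra hcon
    have hge : mu.part r + 2 ≤ lam.part (r + 1) := by omega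
    apply h2x2
    have hmono1 := lam.antitone r (r + 1) (by omega)
    have hmono2 := mu.antitone r (r + 1) (by omega)
    refine ⟨(lam.part (r + 1) : ℤ) - 1, (r : ℤ) + 1, ?_, ?_, ?_, ?_⟩
    · rw [skewMem_nat]; constructor <;> omega
    · have he : (lam.part (r + 1) : ℤ) - 1 + 1 = (lam.part (r + 1) : ℤ) := by ring
      rw [he, skewMem_nat]; constructor <;> omega
    · rw [hcast, skewMem_nat]; constructor <;> omega
    · have he : (lam.part (r + 1) : ℤ) - 1 + 1 = (lam.part (r + 1) : ℤ) := by ring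
      rw [hcast, he, skewMem_nat]; constructor <;> omega
  have hS1 : ∀ r, r < b → mu.part r = lam.part r := by
    intro r hr
    have := hsub r
    rcases Nat.eq_or_lt_of_le this with heq | hlt
    · exact heq
    · exact absurd (hrange r hlt).1 (by omega)
  have hS4 : ∀ r, d < r → mu.part r = lam.part r := by
    intro r hr
    have := hsub r
    rcases Nat.eq_or_lt_of_le this with heq | hlt
    · exact heq
    · exact absurd (hrange r hlt).2 (by omega)
  have hshape : Shape mu lam b d := ⟨hbd, hS1, hS2, hdR, hS4⟩
  have hconjA : conj lam (mu.part d + 1) = d + 1 := by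
    apply conj_eq lam (by omega) (d + 1)
    · intro k hk
      have h1 : lam.part d ≤ lam.part k := lam.antitone k d (by omega)
      omega
    · have h1 := hS4 (d + 1) (by omega)
      have h2 := mu.antitone d (d + 1) (by omega)
      omega
  have hsz := hshape.size
  rw [hsize] at hsz
  refine ⟨((d : ℤ) + 1) - ((mu.part d : ℤ) + 1), ?_, ?_⟩
  · rw [maya_pos_iff]
    refine ⟨mu.part d, ?_⟩
    rw [hconjA]
    push_cast
    ring
  · rw [maya_neg_iff]
    exact ⟨b, by omega⟩

end Wreath
namespace Wreath

attribute [local instance] Classical.propDecidable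

lemma isCore_iff_noBead {l : ℕ} (hl : 1 ≤ l) (lam : YPartition) :
    IsCore l lam ↔ ¬ ∃ j : ℤ, mayaFun lam j = 1 ∧ mayaFun lam (j - l) = -1 := by
  unfold IsCore
  constructor
  · rintro h ⟨j, h1, h2⟩
    exact h (strip_of_bead hl h1 h2)
  · rintro h ⟨mu, hstrip, hsz⟩
    exact h (bead_of_strip hstrip hsz)

lemma core_residue_step {l : ℕ} (hl : 1 ≤ l) {lam : YPartition} (hcore : IsCore l lam)
    {i : ℤ} (hi : 0 ≤ i) (hi2 : i < l) :
    ∀ k : ℤ, mayaFun lam (i + k * l) = 1 ↔ k < -(chargeQuot l lam i) := by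
  have hres := isMayaFun_residue (isMayaFun_maya lam) hl hi hi2
  have hnb : ¬ ∃ k : ℤ, (fun k : ℤ => mayaFun lam (i + k * (l : ℤ))) k = 1 ∧
      (fun k : ℤ => mayaFun lam (i + k * (l : ℤ))) (k - 1) = -1 := by
    rintro ⟨k, h1, h2⟩
    simp only at h1 h2
    rw [isCore_iff_noBead hl] at hcore
    refine hcore ⟨i + k * l, h1, ?_⟩
    rw [show i + k * (l : ℤ) - l = i + (k - 1) * l by ring]
    exact h2
  exact fun k => (noBead_iff_step hres).mp hnb k

lemma core_of_steps {l : ℕ} (hl : 1 ≤ l) {lam : YPartition}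
    (hstep : ∀ i : ℤ, 0 ≤ i → i < l →
      ∀ k : ℤ, mayaFun lam (i + k * l) = 1 ↔ k < -(chargeQuot l lam i)) : IsCore l lam := by
  rw [isCore_iff_noBead hl]
  rintro ⟨j, h1, h2⟩
  have hl0 : (0 : ℤ) < l := by exact_mod_cast hl
  have hmod1 := Int.emod_nonneg j (by omega : (l : ℤ) ≠ 0)
  have hmod2 := Int.emod_lt_of_pos j hl0
  have hdecomp := Int.mul_ediv_add_emod j l
  have he1 : j % (l : ℤ) + (j / (l : ℤ)) * l = j := by rw [mul_comm] at hdecomp; omega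
  have hs := hstep (j % l) hmod1 hmod2
  have hb1 : j / (l : ℤ) < -(chargeQuot l lam (j % l)) := by
    rw [← hs (j / l), he1]
    exact h1
  have hb2 : ¬ (j / (l : ℤ) - 1 < -(chargeQuot l lam (j % l))) := by
    rw [← hs (j / l - 1)]
    rw [show (j % (l : ℤ)) + (j / (l : ℤ) - 1) * l = j - l by linear_combination he1]
    rw [h2]
    omega
  omega

lemma quotComp_empty_iff {l : ℕ} (hl : 1 ≤ l) (lam : YPartition) {i : ℤ}
    (hi : 0 ≤ i) (hi2 : i < l) :
    quotComp l lam i = emptyPartition ↔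
      ∀ k : ℤ, mayaFun lam (i + k * l) = 1 ↔ k < -(chargeQuot l lam i) := by
  have hres := isMayaFun_residue (isMayaFun_maya lam) hl hi hi2
  set c := chargeQuot l lam i with hc
  have hF : IsMayaFun (fun j : ℤ => mayaFun lam (i + (j - c) * l)) := isMayaFun_shift hres c
  have hFc : chargeFun (fun j : ℤ => mayaFun lam (i + (j - c) * l)) = 0 := by
    have := chargeFun_shift hres c
    have hcq : chargeFun (fun k : ℤ => mayaFun lam (i + k * (l : ℤ))) = c := rfl
    rw [hcq] at this
    exact this.trans (by ring)
  have hex : ∃ mu : YPartition, mayaFun mu = fun j : ℤ => mayaFun lam (i + (j - c) * l) :=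
    (exists_partition_iff hF).mpr hFc
  have hQ : mayaFun (quotComp l lam i) = fun j : ℤ => mayaFun lam (i + (j - c) * l) :=
    mayaFun_partitionOfMaya hex
  constructor
  · intro he k
    rw [he, maya_empty] at hQ
    have h3 := congrFun hQ (k + c)
    rw [show k + c - c = k by ring] at h3
    constructor
    · intro h4
      by_contra hcon
      rw [if_neg (by omega)] at h3
      omega
    · intro h4
      rw [if_pos (by omega)] at h3
      omega
  · intro hstep
    have : mayaFun (quotComp l lam i) = mayaFun emptyPartition := by
      rw [hQ, maya_empty]
      funext j
      have h4 := hstep (j - c)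
      rcases lt_or_ge j 0 with hj | hj
      · rw [if_pos hj]
        exact h4.mpr (by omega)
      · rw [if_neg (by omega)]
        rcases (isMayaFun_maya lam).1 (i + (j - c) * l) with h5 | h5
        · exfalso
          have := h4.mp h5
          omega
        · exact h5
    exact mayaFun_injective this

lemma charges_sum_zero {l : ℕ} (hl : 1 ≤ l) (lam : YPartition) :
    ∑ i : Fin l, chargeQuot l lam ((i : ℕ) : ℤ) = 0 := by
  have := chargeFun_residue_sum (isMayaFun_maya lam) hl
  rw [chargeFun_maya lam] at this
  exact this.symm

end Wreath
namespace Wreath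

attribute [local instance] Classical.propDecidable

/-- The residue index of `j` modulo `l`. -/
def resIdx (l : ℕ) (hl : 1 ≤ l) (j : ℤ) : Fin l :=
  ⟨(j % (l : ℤ)).toNat, by
    have hl0 : (0 : ℤ) < l := by exact_mod_cast hl
    have h1 := Int.emod_nonneg j (by omega : (l : ℤ) ≠ 0)
    have h2 := Int.emod_lt_of_pos j hl0
    omega⟩

/-- The step Maya function with prescribed residue charges. -/
noncomputable def stepMaya (l : ℕ) (hl : 1 ≤ l) (c : Fin l → ℤ) : ℤ → ℤ :=
  fun j => if j / (l : ℤ) < -(c (resIdx l hl j)) then 1 else -1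

lemma stepMaya_residue (l : ℕ) (hl : 1 ≤ l) (c : Fin l → ℤ) (i : Fin l) (k : ℤ) :
    stepMaya l hl c (((i : ℕ) : ℤ) + k * l) = if k < -(c i) then 1 else -1 := by
  have hl0 : (0 : ℤ) < l := by exact_mod_cast hl
  have hi0 : (0 : ℤ) ≤ ((i : ℕ) : ℤ) := by positivity
  have hi1 : ((i : ℕ) : ℤ) < l := by exact_mod_cast i.2
  obtain ⟨hm, hd⟩ := mem_residue_decomp hl (((i : ℕ) : ℤ) + k * l) ((i : ℕ) : ℤ) k hi0 hi1 rfl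
  unfold stepMaya
  rw [hd]
  have hres : resIdx l hl (((i : ℕ) : ℤ) + k * l) = i := by
    unfold resIdx
    apply Fin.ext
    simp only
    rw [hm]
    omega
  rw [hres]

lemma stepMaya_isMaya (l : ℕ) (hl : 1 ≤ l) (c : Fin l → ℤ) : IsMayaFun (stepMaya l hl c) := by
  have hl0 : (0 : ℤ) < l := by exact_mod_cast hl
  have hne : (Finset.univ : Finset (Fin l)).Nonempty := by
    refine ⟨⟨0, by omega⟩, Finset.mem_univ _⟩
  set B1 := (Finset.univ.image (fun i : Fin l => -(c i))).max' (hne.image _) with hB1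
  have hB1le : ∀ i : Fin l, -(c i) ≤ B1 := fun i =>
    Finset.le_max' (Finset.univ.image (fun i : Fin l => -(c i))) (-(c i))
      (Finset.mem_image_of_mem _ (Finset.mem_univ i))
  set B2 := (Finset.univ.image (fun i : Fin l => -(c i))).min' (hne.image _) with hB2
  have hB2le : ∀ i : Fin l, B2 ≤ -(c i) := fun i =>
    Finset.min'_le (Finset.univ.image (fun i : Fin l => -(c i))) (-(c i))
      (Finset.mem_image_of_mem _ (Finset.mem_univ i))
  refine ⟨fun j => by unfold stepMaya; split <;> simp, ?_, ?_⟩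
  · refine ⟨(max B1 0) * l, fun j hj => ?_⟩
    unfold stepMaya
    rw [if_neg]
    push_neg
    refine le_trans (hB1le _) ?_
    rw [Int.le_ediv_iff_mul_le hl0]
    calc B1 * l ≤ (max B1 0) * l := by
          apply mul_le_mul_of_nonneg_right (le_max_left _ _) (by positivity)
      _ ≤ j := hj
  · refine ⟨(min B2 0 - 1) * l, fun j hj => ?_⟩
    unfold stepMaya
    rw [if_pos]
    calc j / (l : ℤ) < min B2 0 := by
          rw [Int.ediv_lt_iff_lt_mul hl0]
          have h1 : (min B2 0 - 1) * l < min B2 0 * l := by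
            apply mul_lt_mul_of_pos_right _ hl0
            omega
          omega
      _ ≤ B2 := min_le_left _ _
      _ ≤ -(c _) := hB2le _

lemma stepMaya_residue_charge (l : ℕ) (hl : 1 ≤ l) (c : Fin l → ℤ) (i : Fin l) :
    chargeFun (fun k : ℤ => stepMaya l hl c (((i : ℕ) : ℤ) + k * l)) = c i := by
  have hval : ∀ k : ℤ, stepMaya l hl c (((i : ℕ) : ℤ) + k * l) = 1 ∨
      stepMaya l hl c (((i : ℕ) : ℤ) + k * l) = -1 := fun k => (stepMaya_isMaya l hl c).1 _
  have hstep : ∀ k : ℤ, stepMaya l hl c (((i : ℕ) : ℤ) + k * l) = 1 ↔ k < -(c i) := by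
    intro k
    rw [stepMaya_residue]
    split
    · simp_all
    · constructor
      · intro h; omega
      · intro h; simp_all
  have := charge_step hval hstep
  rw [this]
  ring

theorem main_core_iff (l : ℕ) (hl : 1 ≤ l) (lam : YPartition) :
    IsCore l lam ↔ ∀ i : Fin l, quotComp l lam ((i : ℕ) : ℤ) = emptyPartition := by
  constructor
  · intro hcore i
    rw [quotComp_empty_iff hl lam (by positivity) (by exact_mod_cast i.2)]
    exact core_residue_step hl hcore (by positivity) (by exact_mod_cast i.2)
  · intro hq
    apply core_of_steps hl
    intro i hi hi2
    have hfin : (((⟨i.toNat, by omega⟩ : Fin l) : ℕ) : ℤ) = i := by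
      simp only
      omega
    have := hq ⟨i.toNat, by omega⟩
    rw [hfin] at this
    rw [quotComp_empty_iff hl lam hi hi2] at this
    exact this

theorem main_bijOn (l : ℕ) (hl : 1 ≤ l) :
    Set.BijOn (fun lam : YPartition => fun i : Fin l => chargeQuot l lam ((i : ℕ) : ℤ))
      {lam : YPartition | IsCore l lam}
      {c : Fin l → ℤ | ∑ i : Fin l, c i = 0} := by
  have hl0 : (0 : ℤ) < l := by exact_mod_cast hl
  refine ⟨?_, ?_, ?_⟩
  · intro lam _
    simp only [Set.mem_setOf_eq]
    exact charges_sum_zero hl lam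
  · intro lam hlam lam' hlam' heq
    simp only [Set.mem_setOf_eq] at hlam hlam'
    apply mayaFun_injective
    funext j
    have hmod1 := Int.emod_nonneg j (by omega : (l : ℤ) ≠ 0)
    have hmod2 := Int.emod_lt_of_pos j hl0
    have hdecomp := Int.mul_ediv_add_emod j l
    have he1 : j % (l : ℤ) + (j / (l : ℤ)) * l = j := by rw [mul_comm] at hdecomp; omega
    have hs := core_residue_step hl hlam hmod1 hmod2 (j / l)
    have hs' := core_residue_step hl hlam' hmod1 hmod2 (j / l)
    rw [he1] at hs hs'
    have hceq : chargeQuot l lam (j % l) = chargeQuot l lam' (j % l) := by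
      have := congrFun heq (resIdx l hl j)
      simp only at this
      have hcast : (((resIdx l hl j : Fin l) : ℕ) : ℤ) = j % (l : ℤ) := by
        unfold resIdx
        simp only
        omega
      rwa [hcast] at this
    rw [hceq] at hs
    rcases (isMayaFun_maya lam).1 j with h1 | h1 <;> rcases (isMayaFun_maya lam').1 j with h2 | h2
    · rw [h1, h2]
    · exfalso
      have := hs.mp h1
      rw [← hs'] at this
      omega
    · exfalso
      have := hs'.mp h2
      rw [← hs] at this
      omega
    · rw [h1, h2]
  · intro c hc
    simp only [Set.mem_setOf_eq] at hc
    have hg := stepMaya_isMaya l hl c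
    have hgc : chargeFun (stepMaya l hl c) = 0 := by
      rw [chargeFun_residue_sum hg hl]
      rw [Finset.sum_congr rfl (fun i _ => stepMaya_residue_charge l hl c i)]
      exact hc
    obtain ⟨lam, hlam⟩ := (exists_partition_iff hg).mpr hgc
    have hquotcharge : ∀ i : Fin l, chargeQuot l lam ((i : ℕ) : ℤ) = c i := by
      intro i
      have : chargeQuot l lam ((i : ℕ) : ℤ)
          = chargeFun (fun k : ℤ => stepMaya l hl c (((i : ℕ) : ℤ) + k * l)) := by
        unfold chargeQuot
        rw [hlam]
      rw [this, stepMaya_residue_charge]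
    have hcore : IsCore l lam := by
      apply core_of_steps hl
      intro i hi hi2 k
      set ifin : Fin l := ⟨i.toNat, by omega⟩ with hifin
      have hcast : ((ifin : ℕ) : ℤ) = i := by simp only [hifin]; omega
      have h1 : mayaFun lam (i + k * l) = stepMaya l hl c (((ifin : ℕ) : ℤ) + k * l) := by
        rw [hlam, hcast]
      rw [h1, stepMaya_residue]
      have h2 : chargeQuot l lam i = c ifin := by
        rw [← hcast, hquotcharge]
      rw [h2]
      split
      · simp_all
      · constructor
        · intro h; omega
        · intro h; simp_all; omega
    refine ⟨lam, hcore, ?_⟩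
    funext i
    exact hquotcharge i

end Wreath
theorem core_iff_empty_quotient (ℓ : ℕ) (hℓ : 1 ≤ ℓ) :
    (∀ lam : YPartition,
      IsCore ℓ lam ↔ ∀ i : Fin ℓ, quotComp ℓ lam ((i : ℕ) : ℤ) = emptyPartition) ∧
    Set.BijOn (fun lam : YPartition => fun i : Fin ℓ => chargeQuot ℓ lam ((i : ℕ) : ℤ))
      {lam : YPartition | IsCore ℓ lam}
      {c : Fin ℓ → ℤ | ∑ i : Fin ℓ, c i = 0} := by
  exact ⟨fun lam => Wreath.main_core_iff ℓ hℓ lam, Wreath.main_bijOn ℓ hℓ⟩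
end

section
/- Fix ℓ ≥ 1 and let λ ⊆ μ be partitions. If for all i, i′ ∈ ℤ/ℓℤ the number of nodes of μ∖λ whose content is ≡ i (mod ℓ) equals the number of nodes of μ∖λ whose content is ≡ i′ (mod ℓ), then core(μ) = core(λ). -/
namespace Wreath

attribute [local instance] Classical.propDecidable

end Wreath

open Wreath

section Aux
open Wreath
attribute [local instance] Classical.propDecidable

lemma conj_setEq (ν : YPartition) {α : ℕ} (hα : 1 ≤ α) :
    {k : ℕ | α ≤ ν.part k} = Set.Iio (sInf {k | ν.part k < α}) := by
  obtain ⟨N, hN⟩ := ν.eventually_zero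
  have hne : {k : ℕ | ν.part k < α}.Nonempty := ⟨N, by simp [hN N le_rfl]; omega⟩
  ext k
  simp only [Set.mem_setOf_eq, Set.mem_Iio]
  constructor
  · intro hk
    by_contra hc
    push_neg at hc
    have h1 := Nat.sInf_mem hne
    have h2 := ν.antitone _ k hc
    simp only [Set.mem_setOf_eq] at h1
    omega
  · intro hk
    by_contra hc
    push_neg at hc
    have h3 : sInf {k : ℕ | ν.part k < α} ≤ k := Nat.sInf_le (by simpa using hc)
    omega

lemma conj_val (ν : YPartition) {α : ℕ} (hα : 1 ≤ α) :
    conj ν α = sInf {k | ν.part k < α} := by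
  rw [conj, conj_setEq ν hα, ← Finset.coe_Iio, Set.ncard_coe_finset, Nat.card_Iio]

lemma le_conj_iff (ν : YPartition) {α b : ℕ} (hα : 1 ≤ α) (hb : 1 ≤ b) :
    b ≤ conj ν α ↔ α ≤ ν.part (b - 1) := by
  rw [conj_val ν hα]
  obtain ⟨N, hN⟩ := ν.eventually_zero
  have hne : {k : ℕ | ν.part k < α}.Nonempty := ⟨N, by simp [hN N le_rfl]; omega⟩
  have hmem := Nat.sInf_mem hne
  simp only [Set.mem_setOf_eq] at hmem
  constructor
  · intro hle
    by_contra hc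
    push_neg at hc
    have h3 : sInf {k : ℕ | ν.part k < α} ≤ b - 1 := Nat.sInf_le (by simpa using hc)
    omega
  · intro hge
    by_contra hc
    push_neg at hc
    have := ν.antitone (sInf {k | ν.part k < α}) (b - 1) (by omega)
    omega

lemma conj_le_bound (ν : YPartition) {α N : ℕ} (hα : 1 ≤ α)
    (hN : ∀ n, N ≤ n → ν.part n = 0) : conj ν α ≤ N := by
  by_contra hc
  push_neg at hc
  have h1 := (le_conj_iff ν hα (b := N + 1) (by omega)).mp (by omega)
  rw [show N + 1 - 1 = N from rfl, hN N le_rfl] at h1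
  omega

lemma conj_eq_zero (ν : YPartition) {α : ℕ} (hα : ν.part 0 < α) : conj ν α = 0 := by
  by_contra hc
  have h1 := (le_conj_iff ν (α := α) (by omega) (b := 1) le_rfl).mp (by omega)
  rw [show 1 - 1 = 0 from rfl] at h1
  omega

lemma conj_antitone (ν : YPartition) {α α' : ℕ} (hα : 1 ≤ α) (hle : α ≤ α') :
    conj ν α' ≤ conj ν α := by
  rcases Nat.eq_zero_or_pos (conj ν α') with h0 | hpos
  · omega
  · have h1 := (le_conj_iff ν (by omega) hpos).mp le_rfl
    exact (le_conj_iff ν hα hpos).mpr (by omega)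

lemma conj_mono_part {lam mu : YPartition} (hle : ∀ k, lam.part k ≤ mu.part k)
    {α : ℕ} (hα : 1 ≤ α) : conj lam α ≤ conj mu α := by
  rcases Nat.eq_zero_or_pos (conj lam α) with h0 | hpos
  · omega
  · have h1 := (le_conj_iff lam hα hpos).mp le_rfl
    have h2 := hle (conj lam α - 1)
    exact (le_conj_iff mu hα hpos).mpr (by omega)

lemma sub_part_le {lam mu : YPartition} (hsub : Sub lam mu) (k : ℕ) :
    lam.part k ≤ mu.part k := by
  rcases Nat.eq_zero_or_pos (lam.part k) with h0 | hpos
  · omega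
  · have hx : Partition.memYD lam ((lam.part k : ℤ), (k + 1 : ℤ)) := by
      refine ⟨?_, ?_, ?_⟩ <;> simp only []
      · exact_mod_cast hpos
      · omega
      · have he : ((k : ℤ) + 1 - 1).toNat = k := by omega
        rw [he]
    obtain ⟨-, -, h3⟩ := hsub _ hx
    simp only [] at h3
    have he : ((k : ℤ) + 1 - 1).toNat = k := by omega
    rw [he] at h3
    exact_mod_cast h3

lemma memYD_iff (ν : YPartition) {α b : ℕ} (hα : 1 ≤ α) (hb : 1 ≤ b) :
    Partition.memYD ν ((α : ℤ), (b : ℤ)) ↔ b ≤ conj ν α := by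
  rw [le_conj_iff ν hα hb]
  unfold Partition.memYD
  simp only []
  have he : ((b : ℤ) - 1).toNat = b - 1 := by omega
  rw [he]
  constructor
  · rintro ⟨-, -, h3⟩
    exact_mod_cast h3
  · intro hle
    exact ⟨by exact_mod_cast hα, by exact_mod_cast hb, by exact_mod_cast hle⟩

end Aux
section Aux2
open Wreath
attribute [local instance] Classical.propDecidable

def inS (ν : YPartition) (x : ℤ) : Prop := ∃ α : ℕ, 1 ≤ α ∧ x = (conj ν α : ℤ) - α

lemma mayaFun_eq_one_iff (ν : YPartition) (x : ℤ) : mayaFun ν x = 1 ↔ inS ν x := by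
  unfold mayaFun inS
  split_ifs with hcond
  · simp only [true_iff]
    obtain ⟨a, ha⟩ := hcond
    exact ⟨a + 1, by omega, by push_cast; push_cast at ha; linarith⟩
  · constructor
    · intro h1; norm_num at h1
    · rintro ⟨α, hα, hx⟩
      refine absurd ⟨α - 1, ?_⟩ hcond
      rw [hx]
      have h2 : α - 1 + 1 = α := by omega
      rw [h2]
      push_cast [h2]
      ring_nf
      rw [Nat.cast_sub hα]
      push_cast
      ring
end Aux2
section Aux3
open Wreath
attribute [local instance] Classical.propDecidable

lemma mayaFun_eq_neg_one_iff (ν : YPartition) (x : ℤ) : mayaFun ν x = -1 ↔ ¬ inS ν x := by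
  rw [← mayaFun_eq_one_iff]
  unfold mayaFun
  split_ifs <;> norm_num

lemma inS_of_le (ν : YPartition) {x : ℤ} (hx : x ≤ -((ν.part 0 : ℤ) + 1)) : inS ν x := by
  refine ⟨(-x).toNat, by omega, ?_⟩
  have h1 : ν.part 0 < (-x).toNat := by omega
  rw [conj_eq_zero ν h1]
  omega

lemma inS_le (ν : YPartition) {N : ℕ} (hN : ∀ n, N ≤ n → ν.part n = 0) {x : ℤ}
    (h : inS ν x) : x ≤ (N : ℤ) - 1 := by
  obtain ⟨α, hα, hx⟩ := h
  have := conj_le_bound ν hα hN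
  omega

lemma emod_eq_emod_iff_dvd (ℓ : ℕ) (X Y : ℤ) : X % (ℓ:ℤ) = Y % (ℓ:ℤ) ↔ (ℓ:ℤ) ∣ (X - Y) := by
  rw [Int.emod_eq_emod_iff_emod_sub_eq_zero, ← Int.dvd_iff_emod_eq_zero]

end Aux3
section Aux4
open Wreath
attribute [local instance] Classical.propDecidable

lemma d_lt (ν : YPartition) {α α' : ℕ} (hα : 1 ≤ α) (h : α < α') :
    (conj ν α' : ℤ) - α' < (conj ν α : ℤ) - α := by
  have := conj_antitone ν hα (le_of_lt h)
  omega

lemma chargeQuot_formula (ℓ : ℕ) (hℓ : 1 ≤ ℓ) (ν : YPartition) (i : ℤ) (hi0 : 0 ≤ i)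
    (hiℓ : i < (ℓ : ℤ)) (N : ℕ) (hN : ∀ n, N ≤ n → ν.part n = 0) (M : ℕ)
    (hM : ν.part 0 + 1 ≤ M * ℓ) :
    chargeQuot ℓ ν i = (M : ℤ) -
      ((Finset.Icc 1 (M * ℓ)).filter
        (fun α : ℕ => ((conj ν α : ℤ) - α) % (ℓ : ℤ) = i)).card := by
  have hℓz : (0 : ℤ) < (ℓ : ℤ) := by exact_mod_cast hℓ
  have hMle : (ν.part 0 : ℤ) + 1 ≤ (M : ℤ) * ℓ := by exact_mod_cast hM
  set FF := (Finset.Icc 1 (M * ℓ)).filter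
      (fun α : ℕ => ((conj ν α : ℤ) - α) % (ℓ : ℤ) = i) with hFF
  set AFneg := (Finset.Ico (-(M : ℤ)) 0).filter (fun j => ¬ inS ν (i + j * ℓ)) with hAFneg
  set AFpos := (Finset.Ico (-(M : ℤ)) 0).filter (fun j => inS ν (i + j * ℓ)) with hAFpos
  set BF := (Finset.Icc (0 : ℤ) N).filter (fun j => inS ν (i + j * ℓ)) with hBF
  set TF := (Finset.Icc (-(M : ℤ)) N).filter (fun j => inS ν (i + j * ℓ)) with hTF
  have hsetA : {j : ℤ | j < 0 ∧ mayaFun ν (i + j * (ℓ : ℤ)) = -1} = ↑AFneg := by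
    ext j
    simp only [Set.mem_setOf_eq, hAFneg, Finset.coe_filter, Finset.mem_Ico,
      mayaFun_eq_neg_one_iff]
    constructor
    · rintro ⟨hj, hns⟩
      refine ⟨⟨?_, hj⟩, hns⟩
      by_contra hc
      push_neg at hc
      apply hns
      apply inS_of_le
      have h2 : j ≤ -(M : ℤ) - 1 := by omega
      have h3 : j * ℓ ≤ (-(M : ℤ) - 1) * ℓ := mul_le_mul_of_nonneg_right h2 (le_of_lt hℓz)
      nlinarith
    · rintro ⟨⟨h1, h2⟩, h3⟩; exact ⟨h2, h3⟩
  have hsetB : {j : ℤ | 0 ≤ j ∧ mayaFun ν (i + j * (ℓ : ℤ)) = 1} = ↑BF := by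
    ext j
    simp only [Set.mem_setOf_eq, hBF, Finset.coe_filter, Finset.mem_Icc,
      mayaFun_eq_one_iff]
    constructor
    · rintro ⟨hj, hs⟩
      refine ⟨⟨hj, ?_⟩, hs⟩
      have h1 := inS_le ν hN hs
      have h2 : j ≤ j * ℓ := le_mul_of_one_le_right hj (by exact_mod_cast hℓ)
      omega
    · rintro ⟨⟨h1, h2⟩, h3⟩; exact ⟨h1, h3⟩
  have hsplit : TF = AFpos ∪ BF := by
    rw [hTF, hAFpos, hBF, ← Finset.filter_union]
    congr 1
    ext j
    simp only [Finset.mem_Icc, Finset.mem_union, Finset.mem_Ico]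
    omega
  have hdisj : Disjoint AFpos BF := by
    rw [Finset.disjoint_left]
    intro j hj1 hj2
    rw [hAFpos, Finset.mem_filter, Finset.mem_Ico] at hj1
    rw [hBF, Finset.mem_filter, Finset.mem_Icc] at hj2
    omega
  have hcardT : TF.card = AFpos.card + BF.card := by
    rw [hsplit, Finset.card_union_of_disjoint hdisj]
  have hcardM : AFpos.card + AFneg.card = M := by
    have hh := Finset.card_filter_add_card_filter_not
      (s := Finset.Ico (-(M : ℤ)) 0) (p := fun j => inS ν (i + j * ℓ))
    rw [Int.card_Ico] at hh
    rw [hAFpos, hAFneg]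
    convert hh using 2
    omega
  have hbij : FF.card = TF.card := by
    apply Finset.card_bij (fun α _ => (((conj ν α : ℤ) - α - i) / ℓ))
    · intro α hα
      rw [hFF, Finset.mem_filter, Finset.mem_Icc] at hα
      obtain ⟨⟨h1, h2⟩, h3⟩ := hα
      have hdvd : (ℓ : ℤ) ∣ ((conj ν α : ℤ) - α - i) := by
        rw [← emod_eq_emod_iff_dvd]
        rw [h3, Int.emod_eq_of_lt hi0 hiℓ]
      have hkey : i + (((conj ν α : ℤ) - α - i) / ℓ) * ℓ = (conj ν α : ℤ) - α := by
        rw [Int.ediv_mul_cancel hdvd]; ring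
      rw [hTF, Finset.mem_filter, Finset.mem_Icc, hkey]
      have h2' : (α : ℤ) ≤ (M : ℤ) * ℓ := by exact_mod_cast h2
      have hd1 : -((M : ℤ) * ℓ) ≤ (conj ν α : ℤ) - α := by
        have : (0 : ℤ) ≤ (conj ν α : ℤ) := by positivity
        omega
      have hd2 : (conj ν α : ℤ) - α ≤ (N : ℤ) - 1 := by
        have := conj_le_bound ν h1 hN
        omega
      refine ⟨⟨?_, ?_⟩, ⟨α, h1, rfl⟩⟩
      · have h5 : (-(M : ℤ) - 1) * ℓ < (((conj ν α : ℤ) - α - i) / ℓ) * ℓ := by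
          rw [Int.ediv_mul_cancel hdvd]
          nlinarith
        have h6 := (mul_lt_mul_iff_of_pos_right hℓz).mp h5
        omega
      · have h5 : (((conj ν α : ℤ) - α - i) / ℓ) * ℓ < ((N : ℤ) + 1) * ℓ := by
          rw [Int.ediv_mul_cancel hdvd]
          nlinarith
        have h6 := (mul_lt_mul_iff_of_pos_right hℓz).mp h5
        omega
    · intro α1 hα1 α2 hα2 heq
      rw [hFF, Finset.mem_filter, Finset.mem_Icc] at hα1 hα2
      have hdvd1 : (ℓ : ℤ) ∣ ((conj ν α1 : ℤ) - α1 - i) := by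
        rw [← emod_eq_emod_iff_dvd, hα1.2, Int.emod_eq_of_lt hi0 hiℓ]
      have hdvd2 : (ℓ : ℤ) ∣ ((conj ν α2 : ℤ) - α2 - i) := by
        rw [← emod_eq_emod_iff_dvd, hα2.2, Int.emod_eq_of_lt hi0 hiℓ]
      have heq2 : (conj ν α1 : ℤ) - α1 = (conj ν α2 : ℤ) - α2 := by
        have e1 := Int.ediv_mul_cancel hdvd1
        have e2 := Int.ediv_mul_cancel hdvd2
        rw [heq] at e1
        omega
      rcases lt_trichotomy α1 α2 with hlt | heqa | hgt
      · exact absurd heq2 (ne_of_gt (d_lt ν hα1.1.1 hlt))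
      · exact heqa
      · exact absurd heq2 (ne_of_lt (d_lt ν hα2.1.1 hgt))
    · intro j hj
      rw [hTF, Finset.mem_filter, Finset.mem_Icc] at hj
      obtain ⟨⟨hjM, hjN⟩, α, hα1, heq⟩ := hj
      have hjl : (-(M : ℤ)) * ℓ ≤ j * ℓ := mul_le_mul_of_nonneg_right hjM (le_of_lt hℓz)
      have hmem : α ∈ Finset.Icc 1 (M * ℓ) := by
        rw [Finset.mem_Icc]
        refine ⟨hα1, ?_⟩
        by_contra hc
        push_neg at hc
        have hz : conj ν α = 0 := conj_eq_zero ν (by omega)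
        rw [hz] at heq
        have hcast : (M : ℤ) * ℓ < (α : ℤ) := by exact_mod_cast hc
        simp only [Nat.cast_zero, zero_sub] at heq
        nlinarith
      refine ⟨α, ?_, ?_⟩
      · rw [hFF, Finset.mem_filter]
        refine ⟨hmem, ?_⟩
        rw [← heq, Int.add_mul_emod_self_right, Int.emod_eq_of_lt hi0 hiℓ]
      · rw [← heq]
        have : i + j * ℓ - i = j * ℓ := by ring
        rw [this, Int.mul_ediv_cancel _ (ne_of_gt hℓz)]
  unfold chargeQuot chargeFun
  rw [hsetA, hsetB, Set.ncard_coe_finset, Set.ncard_coe_finset]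
  omega

end Aux4
section Aux5
open Wreath
attribute [local instance] Classical.propDecidable

lemma skew_count (ℓ : ℕ) (lam mu : YPartition) (hsub : Sub lam mu)
    (A B : ℕ) (hA : mu.part 0 ≤ A) (hB : ∀ n, B ≤ n → mu.part n = 0) (r : ℤ) :
    Set.ncard {x : ℤ × ℤ | SkewMem lam mu x ∧ (x.2 - x.1) % (ℓ : ℤ) = r} =
      ∑ α ∈ Finset.Icc 1 A, ((Finset.Ioc (conj lam α) (conj mu α)).filter
        (fun b : ℕ => ((b : ℤ) - (α : ℤ)) % (ℓ : ℤ) = r)).card := by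
  set P : ℕ × ℕ → Prop := fun p =>
    conj lam p.1 < p.2 ∧ p.2 ≤ conj mu p.1 ∧ ((p.2 : ℤ) - (p.1 : ℤ)) % (ℓ : ℤ) = r with hP
  set G := (Finset.Icc 1 A ×ˢ Finset.Icc 1 B).filter P with hG
  have hinj : Function.Injective (fun p : ℕ × ℕ => ((p.1 : ℤ), (p.2 : ℤ))) := by
    intro p q hpq
    simp only [Prod.mk.injEq, Nat.cast_inj] at hpq
    exact Prod.ext hpq.1 hpq.2
  have hset : {x : ℤ × ℤ | SkewMem lam mu x ∧ (x.2 - x.1) % (ℓ : ℤ) = r} =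
      ↑(G.image (fun p : ℕ × ℕ => ((p.1 : ℤ), (p.2 : ℤ)))) := by
    ext x
    simp only [Set.mem_setOf_eq, Finset.coe_image, Set.mem_image, Finset.mem_coe,
      hG, Finset.mem_filter, Finset.mem_product, Finset.mem_Icc, hP]
    constructor
    · rintro ⟨⟨hmu, hlam⟩, hres⟩
      obtain ⟨hx1, hx2, hx3⟩ := hmu
      set α := x.1.toNat with hα
      set b := x.2.toNat with hb
      have hα1 : 1 ≤ α := by omega
      have hb1 : 1 ≤ b := by omega
      have hxα : x.1 = (α : ℤ) := by omega
      have hxb : x.2 = (b : ℤ) := by omega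
      have hxeq : x = ((α : ℤ), (b : ℤ)) := Prod.ext hxα hxb
      have hmu' : b ≤ conj mu α := by
        rw [← memYD_iff mu hα1 hb1, ← hxeq]; exact ⟨hx1, hx2, hx3⟩
      have hlam' : ¬ b ≤ conj lam α := by
        rw [← memYD_iff lam hα1 hb1, ← hxeq]; exact hlam
      have hαA : α ≤ A := by
        have h4 := mu.antitone 0 ((x.2 - 1).toNat) (by omega)
        omega
      have hbB : b ≤ B := le_trans hmu' (conj_le_bound mu hα1 hB)
      refine ⟨(α, b), ⟨⟨⟨hα1, hαA⟩, ⟨hb1, hbB⟩⟩, ?_⟩, hxeq.symm⟩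
      refine ⟨show conj lam α < b by omega, show b ≤ conj mu α from hmu', ?_⟩
      show ((b : ℤ) - (α : ℤ)) % (ℓ : ℤ) = r
      rw [← hxα, ← hxb]; exact hres
    · rintro ⟨⟨α, b⟩, ⟨⟨⟨hα1, hαA⟩, ⟨hb1, hbB⟩⟩, hcl, hcm, hres⟩, hxeq⟩
      subst hxeq
      refine ⟨⟨?_, ?_⟩, hres⟩
      · exact (memYD_iff mu hα1 hb1).mpr hcm
      · rw [memYD_iff lam hα1 hb1]; omega
  rw [hset, Set.ncard_coe_finset, Finset.card_image_of_injective _ hinj]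
  rw [Finset.card_eq_sum_card_fiberwise (f := Prod.fst) (t := Finset.Icc 1 A)
    (fun p hp => by
      rw [hG, Finset.mem_coe, Finset.mem_filter, Finset.mem_product] at hp
      exact hp.1.1)]
  apply Finset.sum_congr rfl
  intro α hαmem
  rw [Finset.mem_Icc] at hαmem
  have himg : G.filter (fun p => p.1 = α) =
      ((Finset.Ioc (conj lam α) (conj mu α)).filter
        (fun b : ℕ => ((b : ℤ) - (α : ℤ)) % (ℓ : ℤ) = r)).image (fun b => (α, b)) := by
    ext ⟨p1, p2⟩
    simp only [hG, Finset.mem_filter, Finset.mem_product, Finset.mem_Icc, hP,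
      Finset.mem_image, Finset.mem_Ioc, Prod.mk.injEq]
    constructor
    · rintro ⟨⟨⟨⟨hpa1, hpa2⟩, hpb1, hpb2⟩, hcl, hcm, hres⟩, hp1⟩
      subst hp1
      exact ⟨p2, ⟨⟨hcl, hcm⟩, hres⟩, rfl, rfl⟩
    · rintro ⟨b, ⟨⟨hb1, hb2⟩, hres⟩, he1, he2⟩
      subst he1; subst he2
      have hbB : b ≤ B := le_trans hb2 (conj_le_bound mu (by omega) hB)
      exact ⟨⟨⟨⟨by omega, by omega⟩, by omega, hbB⟩, hb1, hb2, hres⟩, rfl⟩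
  rw [himg, Finset.card_image_of_injective]
  intro b1 b2 hb
  simpa using hb

lemma col_step (ℓ : ℕ) (a : ℤ) (r : ℤ) (hr0 : 0 ≤ r) (hrℓ : r < (ℓ : ℤ))
    (h H : ℕ) (hhH : h ≤ H) :
    ((Finset.Ioc h H).filter (fun b : ℕ => ((b : ℤ) - a) % (ℓ : ℤ) = (r + 1) % ℓ)).card
      + (if ((H : ℤ) - a) % (ℓ : ℤ) = r then 1 else 0)
    = ((Finset.Ioc h H).filter (fun b : ℕ => ((b : ℤ) - a) % (ℓ : ℤ) = r)).card
      + (if ((h : ℤ) - a) % (ℓ : ℤ) = r then 1 else 0) := by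
  have hrr : r % (ℓ : ℤ) = r := Int.emod_eq_of_lt hr0 hrℓ
  induction H with
  | zero =>
    have h0 : h = 0 := by omega
    subst h0
    simp
  | succ H ih =>
    rcases Nat.lt_or_ge H h with hlt | hge
    · have h0 : h = H + 1 := by omega
      subst h0
      simp
    · have hIH := ih hge
      have hins : Finset.Ioc h (H + 1) = insert (H + 1) (Finset.Ioc h H) := by
        ext b
        simp only [Finset.mem_Ioc, Finset.mem_insert]
        omega
      have hnm' : H + 1 ∉ (Finset.Ioc h H).filter
          (fun b : ℕ => ((b : ℤ) - a) % (ℓ : ℤ) = (r + 1) % ℓ) := by simp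
      have hnm'' : H + 1 ∉ (Finset.Ioc h H).filter
          (fun b : ℕ => ((b : ℤ) - a) % (ℓ : ℤ) = r) := by simp
      have e1 : (((H + 1 : ℕ) : ℤ) - a) % (ℓ : ℤ) = (r + 1) % ℓ ↔
          ((H : ℤ) - a) % (ℓ : ℤ) = r := by
        push_cast
        rw [emod_eq_emod_iff_dvd]
        conv_rhs => rw [← hrr]
        rw [emod_eq_emod_iff_dvd]
        constructor <;> intro hd <;>
          · have he : ((H : ℤ) + 1 - a) - (r + 1) = ((H : ℤ) - a) - r := by ring
            first
              | (rw [he] at hd; exact hd)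
              | (rw [← he] at hd; exact hd)
              | (rw [he]; exact hd)
              | (rw [← he]; exact hd)
      rw [hins, Finset.filter_insert, Finset.filter_insert]
      simp only [e1]
      split_ifs at hIH ⊢ <;>
        [skip; skip; skip; skip; skip; skip; skip; skip] <;>
        (try rw [Finset.card_insert_of_notMem hnm']) <;>
        (try rw [Finset.card_insert_of_notMem hnm'']) <;>
        omega

end Aux5
section Aux6
open Wreath
attribute [local instance] Classical.propDecidable

lemma chargeQuot_eq (ℓ : ℕ) (hℓ : 1 ≤ ℓ) (lam mu : YPartition) (hsub : Sub lam mu)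
    (h : ∀ i i' : ℕ, i < ℓ → i' < ℓ →
      Set.ncard {x | SkewMem lam mu x ∧ Int.emod (x.2 - x.1) (ℓ : ℤ) = (i : ℤ)} =
      Set.ncard {x | SkewMem lam mu x ∧ Int.emod (x.2 - x.1) (ℓ : ℤ) = (i' : ℤ)})
    (i : ℕ) (hi : i < ℓ) : chargeQuot ℓ mu (i : ℤ) = chargeQuot ℓ lam (i : ℤ) := by
  obtain ⟨Nl, hNl⟩ := lam.eventually_zero
  obtain ⟨Nm, hNm⟩ := mu.eventually_zero
  set N := Nl + Nm with hNdef
  have hNl' : ∀ n, N ≤ n → lam.part n = 0 := fun n hn => hNl n (by omega)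
  have hNm' : ∀ n, N ≤ n → mu.part n = 0 := fun n hn => hNm n (by omega)
  set M := lam.part 0 + mu.part 0 + 1 with hMdef
  have hMl : lam.part 0 + 1 ≤ M * ℓ := by nlinarith
  have hMm : mu.part 0 + 1 ≤ M * ℓ := by nlinarith
  have hAm : mu.part 0 ≤ M * ℓ := by nlinarith
  have hpart : ∀ k, lam.part k ≤ mu.part k := sub_part_le hsub
  have hi0 : (0 : ℤ) ≤ (i : ℤ) := by positivity
  have hiℓ : (i : ℤ) < (ℓ : ℤ) := by exact_mod_cast hi
  have key : ∀ r : ℤ, 0 ≤ r → r < (ℓ : ℤ) →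
      Set.ncard {x : ℤ × ℤ | SkewMem lam mu x ∧ (x.2 - x.1) % (ℓ : ℤ) = (r + 1) % (ℓ : ℤ)}
        + ((Finset.Icc 1 (M * ℓ)).filter
            (fun α : ℕ => ((conj mu α : ℤ) - α) % (ℓ : ℤ) = r)).card
      = Set.ncard {x : ℤ × ℤ | SkewMem lam mu x ∧ (x.2 - x.1) % (ℓ : ℤ) = r}
        + ((Finset.Icc 1 (M * ℓ)).filter
            (fun α : ℕ => ((conj lam α : ℤ) - α) % (ℓ : ℤ) = r)).card := by
    intro r hr0 hrℓ
    rw [skew_count ℓ lam mu hsub (M * ℓ) N hAm hNm' ((r + 1) % (ℓ : ℤ)),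
        skew_count ℓ lam mu hsub (M * ℓ) N hAm hNm' r,
        Finset.card_filter, Finset.card_filter, ← Finset.sum_add_distrib,
        ← Finset.sum_add_distrib]
    apply Finset.sum_congr rfl
    intro α hα
    rw [Finset.mem_Icc] at hα
    exact col_step ℓ (α : ℤ) r hr0 hrℓ (conj lam α) (conj mu α)
      (conj_mono_part hpart (by omega))
  have hkey := key (i : ℤ) hi0 hiℓ
  have hresid : ((((i + 1) % ℓ : ℕ)) : ℤ) = ((i : ℤ) + 1) % (ℓ : ℤ) := by
    have := Int.natCast_mod (i + 1) ℓ
    push_cast at this ⊢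
    omega
  rw [← hresid] at hkey
  have hskew := h ((i + 1) % ℓ) i (Nat.mod_lt _ (by omega)) hi
  have hemod : ∀ x y : ℤ, Int.emod x y = x % y := fun _ _ => rfl
  simp only [hemod] at hskew
  have hF : ((Finset.Icc 1 (M * ℓ)).filter
      (fun α : ℕ => ((conj mu α : ℤ) - α) % (ℓ : ℤ) = (i : ℤ))).card
      = ((Finset.Icc 1 (M * ℓ)).filter
      (fun α : ℕ => ((conj lam α : ℤ) - α) % (ℓ : ℤ) = (i : ℤ))).card := by
    rw [hskew] at hkey
    omega
  rw [chargeQuot_formula ℓ hℓ mu (i : ℤ) hi0 hiℓ N hNm' M hMm,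
      chargeQuot_formula ℓ hℓ lam (i : ℤ) hi0 hiℓ N hNl' M hMl, hF]

end Aux6
theorem equal_residue_counts_core (ℓ : ℕ) (hℓ : 1 ≤ ℓ) (lam mu : YPartition)
    (hsub : Sub lam mu)
    (h : ∀ i i' : ℕ, i < ℓ → i' < ℓ →
      Set.ncard {x | SkewMem lam mu x ∧ Int.emod (x.2 - x.1) (ℓ : ℤ) = (i : ℤ)} =
      Set.ncard {x | SkewMem lam mu x ∧ Int.emod (x.2 - x.1) (ℓ : ℤ) = (i' : ℤ)}) :
    coreOf ℓ mu = coreOf ℓ lam := by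
  have hℓz : (0 : ℤ) < (ℓ : ℤ) := by exact_mod_cast hℓ
  have hcq : ∀ r : ℤ, chargeQuot ℓ mu (Int.emod r (ℓ : ℤ)) =
      chargeQuot ℓ lam (Int.emod r (ℓ : ℤ)) := by
    intro r
    have h0 : 0 ≤ Int.emod r (ℓ : ℤ) := Int.emod_nonneg r (ne_of_gt hℓz)
    have h1 : Int.emod r (ℓ : ℤ) < (ℓ : ℤ) := Int.emod_lt_of_pos r hℓz
    have h2 := chargeQuot_eq ℓ hℓ lam mu hsub h (Int.emod r (ℓ : ℤ)).toNat (by omega)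
    rwa [Int.toNat_of_nonneg h0] at h2
  unfold coreOf
  congr 1
  funext j
  rw [hcq j]
end

section
/- Fix ℓ ≥ 1 and let core(λ) = λ(0) ⊂ λ(1) ⊂ ⋯ ⊂ λ(N) = λ be a row-addition sequence for λ in right-to-left order with N ≥ 1, and let c be the content of the final node of the last strip λ(N)∖λ(N−1). Then for every integer j ≥ c with m(λ)(j) = −1 and every integer j′ > j with j′ ≡ j (mod ℓ), one has m(λ)(j′) = −1 (vertical propagation: every white bead strictly to the left of the last landing spot lies in the white sea of its quotient Maya diagram). -/
namespace Wreath

attribute [local instance] Classical.propDecidable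

end Wreath

open Wreath

namespace VP
open Wreath

/-- downward closed finite subset of ℕ: membership iff below ncard -/
lemma ncard_Iio_nat (n : ℕ) : (Set.Iio n).ncard = n := by
  rw [← Finset.coe_Iio, Set.ncard_coe_finset, Nat.card_Iio]

lemma mem_iff_lt_ncard {S : Set ℕ} (hf : S.Finite)
    (hdc : ∀ ⦃x y : ℕ⦄, x ≤ y → y ∈ S → x ∈ S) (k : ℕ) : k ∈ S ↔ k < S.ncard := by
  constructor
  · intro hk
    have hsub : Set.Iio (k+1) ⊆ S := fun x hx => hdc (Nat.lt_succ_iff.mp hx) hk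
    have := Set.ncard_le_ncard hsub hf
    simpa [ncard_Iio_nat] using this
  · intro hk
    by_contra hkS
    have hsub : S ⊆ Set.Iio k := by
      intro y hy
      by_contra hy'
      exact hkS (hdc (le_of_not_gt hy') hy)
    have := Set.ncard_le_ncard hsub (Set.finite_Iio k)
    rw [ncard_Iio_nat] at this
    omega

lemma Partition.ext' {lam mu : YPartition} (h : lam.part = mu.part) : lam = mu := by
  cases lam; cases mu; simpa using h

/-- conj bridge -/
lemma lt_conj_iff (lam : YPartition) {a : ℕ} (ha : 1 ≤ a) (k : ℕ) :
    k < conj lam a ↔ a ≤ lam.part k := by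
  obtain ⟨N, hN⟩ := lam.eventually_zero
  have hf : ({k : ℕ | a ≤ lam.part k}).Finite := by
    apply Set.Finite.subset (Set.finite_Iio N)
    intro x hx
    simp only [Set.mem_setOf_eq] at hx
    simp only [Set.mem_Iio]
    by_contra h
    have := hN x (le_of_not_gt h)
    omega
  have hdc : ∀ ⦃x y : ℕ⦄, x ≤ y → y ∈ {k : ℕ | a ≤ lam.part k} → x ∈ {k : ℕ | a ≤ lam.part k} := by
    intro x y hxy hy
    exact le_trans hy (lam.antitone x y hxy)
  exact (mem_iff_lt_ncard hf hdc k).symm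

lemma maya_one_iff (lam : YPartition) (j : ℤ) :
    mayaFun lam j = 1 ↔ ∃ a : ℕ, j = (conj lam (a + 1) : ℤ) - (a + 1 : ℤ) := by
  unfold mayaFun
  split <;> simp_all

lemma maya_neg_one_iff' (lam : YPartition) (j : ℤ) :
    mayaFun lam j = -1 ↔ ¬ ∃ a : ℕ, j = (conj lam (a + 1) : ℤ) - (a + 1 : ℤ) := by
  unfold mayaFun
  split <;> simp_all

lemma maya_vals (lam : YPartition) (j : ℤ) : mayaFun lam j = 1 ∨ mayaFun lam j = -1 := by
  unfold mayaFun; split <;> simp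

/-- hole characterization -/
lemma maya_neg_one_iff (lam : YPartition) (j : ℤ) :
    mayaFun lam j = -1 ↔ ∃ b : ℕ, j = (b : ℤ) - (lam.part b : ℤ) := by
  rw [maya_neg_one_iff']
  constructor
  · intro hnb
    push_neg at hnb
    by_cases hc : j < -(lam.part 0 : ℤ)
    · -- bead case, contradiction with hnb
      exfalso
      set a : ℕ := (-j - 1).toNat with ha
      have haz : (a : ℤ) = -j - 1 := by
        rw [ha]; rw [Int.toNat_of_nonneg]; omega
      have hconj : conj lam (a+1) = 0 := by
        unfold conj
        convert Set.ncard_empty ℕ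
        ext k
        simp only [Set.mem_setOf_eq, Set.mem_empty_iff_false, iff_false, not_le]
        have := lam.antitone 0 k (Nat.zero_le k)
        omega
      exact hnb a (by rw [hconj]; push_cast; omega)
    · push_neg at hc
      -- find minimal b1 with j < b1 - part b1
      have hQex : ∃ b : ℕ, j < (b : ℤ) - lam.part b := by
        refine ⟨(j + lam.part 0 + 1).toNat, ?_⟩
        have h1 : ((j + (lam.part 0 : ℤ) + 1).toNat : ℤ) = j + lam.part 0 + 1 := by
          rw [Int.toNat_of_nonneg]; omega
        have := lam.antitone 0 (j + (lam.part 0 : ℤ) + 1).toNat (Nat.zero_le _)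
        omega
      classical
      set b1 := Nat.find hQex with hb1
      have hb1spec : j < (b1 : ℤ) - lam.part b1 := Nat.find_spec hQex
      have hb1pos : 1 ≤ b1 := by
        rcases Nat.eq_zero_or_pos b1 with h | h
        · exfalso; rw [h] at hb1spec; push_cast at hb1spec; omega
        · exact h
      set b := b1 - 1 with hbdef
      have hbb1 : b + 1 = b1 := by omega
      have hble : ¬ j < (b : ℤ) - lam.part b := Nat.find_min hQex (by omega)
      push_neg at hble
      by_cases heq : (b : ℤ) - lam.part b = j
      · exact ⟨b, heq.symm⟩
      have hblt : (b : ℤ) - lam.part b < j := lt_of_le_of_ne hble heq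
      exfalso
      -- construct bead
      have hjb : j ≤ (b : ℤ) := by
        have := hb1spec
        rw [← hbb1] at this
        push_cast at this
        have : j < (b : ℤ) + 1 - lam.part (b+1) := by exact_mod_cast this
        have h0 : (0:ℤ) ≤ lam.part (b+1) := by positivity
        omega
      set a : ℕ := ((b : ℤ) - j).toNat with hadef
      have haz : (a : ℤ) = (b:ℤ) - j := by rw [hadef, Int.toNat_of_nonneg]; omega
      have h1 : a + 1 ≤ lam.part b := by omega
      have h2 : b < conj lam (a+1) := (lt_conj_iff lam (by omega) b).mpr h1
      have h3 : ¬ (a + 1 ≤ lam.part (b+1)) := by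
        have := hb1spec; rw [← hbb1] at this; push_cast at this; omega
      have h4 : ¬ (b + 1 < conj lam (a+1)) := fun hc => h3 ((lt_conj_iff lam (by omega) (b+1)).mp hc)
      have h5 : conj lam (a+1) = b + 1 := by omega
      exact hnb a (by rw [h5]; push_cast; omega)
  · rintro ⟨b, rfl⟩ ⟨a, ha⟩
    -- disjointness
    by_cases hab : a + 1 ≤ lam.part b
    · have h2 : b < conj lam (a+1) := (lt_conj_iff lam (by omega) b).mpr hab
      omega
    · have h2 : ¬ b < conj lam (a+1) := fun hc => hab ((lt_conj_iff lam (by omega) b).mp hc)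
      push_neg at h2
      have : (conj lam (a+1) : ℤ) ≤ b := by exact_mod_cast h2
      omega

lemma maya_neg_right (lam : YPartition) (j : ℤ) (hj : (conj lam 1 : ℤ) ≤ j) :
    mayaFun lam j = -1 := by
  rcases maya_vals lam j with h | h
  · exfalso
    obtain ⟨a, ha⟩ := (maya_one_iff lam j).mp h
    have hmono : conj lam (a+1) ≤ conj lam 1 := by
      unfold conj
      apply Set.ncard_le_ncard
      · intro k hk; simp only [Set.mem_setOf_eq] at *; omega
      · obtain ⟨N, hN⟩ := lam.eventually_zero
        apply Set.Finite.subset (Set.finite_Iio N)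
        intro x hx
        simp only [Set.mem_setOf_eq] at hx
        simp only [Set.mem_Iio]
        by_contra hh
        have := hN x (le_of_not_gt hh)
        omega
    omega
  · exact h

lemma maya_pos_left (lam : YPartition) (j : ℤ) (hj : j < -(lam.part 0 : ℤ)) :
    mayaFun lam j = 1 := by
  rcases maya_vals lam j with h | h
  · exact h
  · exfalso
    obtain ⟨b, hb⟩ := (maya_neg_one_iff lam j).mp h
    have := lam.antitone 0 b (Nat.zero_le b)
    omega

lemma isMayaFun_maya (lam : YPartition) : IsMayaFun (mayaFun lam) :=
  ⟨maya_vals lam, ⟨conj lam 1, fun j hj => maya_neg_right lam j hj⟩,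
   ⟨-(lam.part 0 : ℤ) - 1, fun j hj => maya_pos_left lam j (by omega)⟩⟩

lemma hole_strictMono (lam : YPartition) : StrictMono (fun b : ℕ => (b : ℤ) - lam.part b) := by
  intro b b' hbb
  have h1 : lam.part b' ≤ lam.part b := lam.antitone b b' (le_of_lt hbb)
  simp only
  have : (b:ℤ) < b' := by exact_mod_cast hbb
  omega

end VP
namespace VP
open Wreath

noncomputable def negCnt (f : ℤ → ℤ) (T : ℤ) : ℕ := {j : ℤ | j < T ∧ f j = -1}.ncard
noncomputable def posCnt (f : ℤ → ℤ) (T : ℤ) : ℕ := {j : ℤ | T ≤ j ∧ f j = 1}.ncard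

lemma negSet_finite {f : ℤ → ℤ} (hf : IsMayaFun f) (T : ℤ) :
    {j : ℤ | j < T ∧ f j = -1}.Finite := by
  obtain ⟨-, -, A, hA⟩ := hf
  apply Set.Finite.subset (Set.finite_Ico (A+1) T)
  rintro j ⟨hj1, hj2⟩
  simp only [Set.mem_Ico]
  refine ⟨?_, hj1⟩
  by_contra h
  have := hA j (by omega)
  omega

lemma posSet_finite {f : ℤ → ℤ} (hf : IsMayaFun f) (T : ℤ) :
    {j : ℤ | T ≤ j ∧ f j = 1}.Finite := by
  obtain ⟨-, ⟨B, hB⟩, -⟩ := hf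
  apply Set.Finite.subset (Set.finite_Ico T B)
  rintro j ⟨hj1, hj2⟩
  simp only [Set.mem_Ico]
  refine ⟨hj1, ?_⟩
  by_contra h
  have := hB j (by omega)
  omega

lemma cut_step {f : ℤ → ℤ} (hf : IsMayaFun f) (T : ℤ) :
    (negCnt f (T+1) : ℤ) - posCnt f (T+1) = (negCnt f T : ℤ) - posCnt f T + 1 := by
  rcases hf.1 T with hT | hT
  · -- f T = 1 : negSets equal, posSet at T = insert T (posSet at T+1)
    have h1 : {j : ℤ | j < T+1 ∧ f j = -1} = {j : ℤ | j < T ∧ f j = -1} := by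
      ext j; simp only [Set.mem_setOf_eq]
      constructor
      · rintro ⟨hj, hfj⟩
        refine ⟨?_, hfj⟩
        rcases eq_or_lt_of_le (Int.lt_add_one_iff.mp hj) with rfl | h
        · omega
        · exact h
      · rintro ⟨hj, hfj⟩; exact ⟨by omega, hfj⟩
    have h2 : {j : ℤ | T ≤ j ∧ f j = 1} = insert T {j : ℤ | T+1 ≤ j ∧ f j = 1} := by
      ext j; simp only [Set.mem_setOf_eq, Set.mem_insert_iff]
      constructor
      · rintro ⟨hj, hfj⟩
        rcases eq_or_lt_of_le hj with rfl | h
        · left; rfl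
        · right; exact ⟨by omega, hfj⟩
      · rintro (rfl | ⟨hj, hfj⟩)
        · exact ⟨le_refl _, hT⟩
        · exact ⟨by omega, hfj⟩
    have h3 : T ∉ {j : ℤ | T+1 ≤ j ∧ f j = 1} := by simp
    have h4 := Set.ncard_insert_of_notMem h3 (posSet_finite hf (T+1))
    unfold negCnt posCnt
    rw [h1, h2, h4]
    push_cast; ring
  · have h1 : {j : ℤ | j < T+1 ∧ f j = -1} = insert T {j : ℤ | j < T ∧ f j = -1} := by
      ext j; simp only [Set.mem_setOf_eq, Set.mem_insert_iff]
      constructor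
      · rintro ⟨hj, hfj⟩
        rcases eq_or_lt_of_le (Int.lt_add_one_iff.mp hj) with rfl | h
        · left; rfl
        · right; exact ⟨h, hfj⟩
      · rintro (rfl | ⟨hj, hfj⟩)
        · exact ⟨by omega, hT⟩
        · exact ⟨by omega, hfj⟩
    have h2 : {j : ℤ | T+1 ≤ j ∧ f j = 1} = {j : ℤ | T ≤ j ∧ f j = 1} := by
      ext j; simp only [Set.mem_setOf_eq]
      constructor
      · rintro ⟨hj, hfj⟩; exact ⟨by omega, hfj⟩
      · rintro ⟨hj, hfj⟩
        rcases eq_or_lt_of_le hj with rfl | h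
        · omega
        · exact ⟨by omega, hfj⟩
    have h3 : T ∉ {j : ℤ | j < T ∧ f j = -1} := by simp
    have h4 := Set.ncard_insert_of_notMem h3 (negSet_finite hf T)
    unfold negCnt posCnt
    rw [h1, h2, h4]
    push_cast; ring

lemma cut_lemma {f : ℤ → ℤ} (hf : IsMayaFun f) (T : ℤ) :
    (negCnt f T : ℤ) - posCnt f T = chargeFun f + T := by
  induction T using Int.induction_on with
  | zero => simp [negCnt, posCnt, chargeFun]
  | succ i ih => rw [cut_step hf i]; push_cast at ih ⊢; omega
  | pred i ih =>
      have h := cut_step hf (-((i:ℤ)+1))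
      have h3 : -((i:ℤ)+1)+1 = -(i:ℤ) := by ring
      rw [h3] at h
      have h4 : -(i:ℤ)-1 = -((i:ℤ)+1) := by ring
      rw [h4]
      omega

end VP
namespace VP
open Wreath

lemma conj_set_finite (lam : YPartition) {a : ℕ} (ha : 1 ≤ a) :
    ({k : ℕ | a ≤ lam.part k}).Finite := by
  obtain ⟨N, hN⟩ := lam.eventually_zero
  apply Set.Finite.subset (Set.finite_Iio N)
  intro x hx
  simp only [Set.mem_setOf_eq] at hx
  simp only [Set.mem_Iio]
  by_contra h
  have := hN x (le_of_not_gt h)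
  omega

lemma conj_anti (lam : YPartition) {a a' : ℕ} (h1 : 1 ≤ a) (h : a ≤ a') :
    conj lam a' ≤ conj lam a := by
  apply Set.ncard_le_ncard
  · intro k hk; simp only [Set.mem_setOf_eq] at *; omega
  · exact conj_set_finite lam h1

lemma charge_maya (lam : YPartition) : chargeFun (mayaFun lam) = 0 := by
  have hX : {j : ℤ | j < 0 ∧ mayaFun lam j = -1} =
      (fun b : ℕ => (b : ℤ) - lam.part b) '' {b : ℕ | b < lam.part b} := by
    ext j
    simp only [Set.mem_setOf_eq, Set.mem_image]
    constructor
    · rintro ⟨hj, hm⟩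
      obtain ⟨b, rfl⟩ := (maya_neg_one_iff lam j).mp hm
      exact ⟨b, by omega, rfl⟩
    · rintro ⟨b, hb, rfl⟩
      refine ⟨by omega, (maya_neg_one_iff lam _).mpr ⟨b, rfl⟩⟩
  have hY : {j : ℤ | 0 ≤ j ∧ mayaFun lam j = 1} =
      (fun a : ℕ => (conj lam (a+1) : ℤ) - (a+1)) '' {a : ℕ | a < conj lam (a+1)} := by
    ext j
    simp only [Set.mem_setOf_eq, Set.mem_image]
    constructor
    · rintro ⟨hj, hm⟩
      obtain ⟨a, rfl⟩ := (maya_one_iff lam j).mp hm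
      exact ⟨a, by omega, rfl⟩
    · rintro ⟨a, ha, rfl⟩
      refine ⟨by omega, (maya_one_iff lam _).mpr ⟨a, rfl⟩⟩
  have hSS : {b : ℕ | b < lam.part b} = {a : ℕ | a < conj lam (a+1)} := by
    ext b
    simp only [Set.mem_setOf_eq]
    rw [lt_conj_iff lam (by omega) b]
    omega
  have hinj1 : Function.Injective (fun b : ℕ => (b : ℤ) - lam.part b) :=
    (hole_strictMono lam).injective
  have hinj2 : Function.Injective (fun a : ℕ => (conj lam (a+1) : ℤ) - (a+1)) := by
    intro a a' h
    by_contra hne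
    rcases Nat.lt_or_ge a a' with hlt | hge
    · have := conj_anti lam (a := a+1) (a' := a'+1) (by omega) (by omega)
      simp only at h
      omega
    · have hlt : a' < a := by omega
      have := conj_anti lam (a := a'+1) (a' := a+1) (by omega) (by omega)
      simp only at h
      omega
  unfold chargeFun
  rw [hX, hY, hSS, Set.ncard_image_of_injective _ hinj1, Set.ncard_image_of_injective _ hinj2]
  ring

lemma isMayaFun_shift {f : ℤ → ℤ} (hf : IsMayaFun f) (c : ℤ) :
    IsMayaFun (fun j => f (j - c)) := by
  obtain ⟨hv, ⟨B, hB⟩, ⟨A, hA⟩⟩ := hf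
  exact ⟨fun j => hv _, ⟨B + c, fun j hj => hB _ (by omega)⟩, ⟨A + c, fun j hj => hA _ (by omega)⟩⟩

lemma charge_shift {f : ℤ → ℤ} (hf : IsMayaFun f) (c : ℤ) :
    chargeFun (fun j => f (j - c)) = chargeFun f - c := by
  have hX : {j : ℤ | j < 0 ∧ f (j - c) = -1} = (· + c) '' {j : ℤ | j < -c ∧ f j = -1} := by
    ext j
    simp only [Set.mem_setOf_eq, Set.mem_image]
    constructor
    · rintro ⟨hj, hm⟩; exact ⟨j - c, ⟨by omega, hm⟩, by ring⟩
    · rintro ⟨j', ⟨hj', hm⟩, rfl⟩; exact ⟨by omega, by simpa using hm⟩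
  have hY : {j : ℤ | 0 ≤ j ∧ f (j - c) = 1} = (· + c) '' {j : ℤ | -c ≤ j ∧ f j = 1} := by
    ext j
    simp only [Set.mem_setOf_eq, Set.mem_image]
    constructor
    · rintro ⟨hj, hm⟩; exact ⟨j - c, ⟨by omega, hm⟩, by ring⟩
    · rintro ⟨j', ⟨hj', hm⟩, rfl⟩; exact ⟨by omega, by simpa using hm⟩
  have hinj : Function.Injective (fun j : ℤ => j + c) := fun a b h => by
    simp only at h; omega
  unfold chargeFun
  rw [hX, hY, Set.ncard_image_of_injective _ hinj, Set.ncard_image_of_injective _ hinj]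
  show (negCnt f (-c) : ℤ) - posCnt f (-c) = chargeFun f - c
  rw [cut_lemma hf (-c)]
  ring

lemma isMayaFun_quot (lam : YPartition) {ℓ : ℕ} (hℓ : 1 ≤ ℓ) (i : ℤ) :
    IsMayaFun (fun t => mayaFun lam (i + t * ℓ)) := by
  refine ⟨fun t => maya_vals lam _, ⟨max 0 (conj lam 1 - i), fun t ht => ?_⟩,
    ⟨min 0 (-(lam.part 0 : ℤ) - 1 - i), fun t ht => ?_⟩⟩
  · apply maya_neg_right
    have h0 : 0 ≤ t := le_trans (le_max_left _ _) ht
    have h1 : conj lam 1 - i ≤ t := le_trans (le_max_right _ _) ht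
    have h2 : t ≤ t * ℓ := by
      nlinarith [h0, (by exact_mod_cast hℓ : (1:ℤ) ≤ ℓ)]
    omega
  · apply maya_pos_left
    have h0 : t ≤ 0 := le_trans ht (min_le_left _ _)
    have h1 : t ≤ -(lam.part 0 : ℤ) - 1 - i := le_trans ht (min_le_right _ _)
    have h2 : t * ℓ ≤ t := by
      nlinarith [h0, (by exact_mod_cast hℓ : (1:ℤ) ≤ ℓ)]
    omega

lemma quot_shift_charge_zero (lam : YPartition) {ℓ : ℕ} (hℓ : 1 ≤ ℓ) (i : ℤ) :
    chargeFun (fun j => mayaFun lam (i + (j - chargeQuot ℓ lam i) * ℓ)) = 0 := by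
  have h := charge_shift (isMayaFun_quot lam hℓ i) (chargeQuot ℓ lam i)
  have h2 : chargeFun (fun t => mayaFun lam (i + t * ℓ)) = chargeQuot ℓ lam i := rfl
  rw [h2] at h
  simpa using h

end VP
namespace VP
open Wreath

lemma strictMono_int_le {g : ℕ → ℤ} (hg : StrictMono g) (a m : ℕ) : g a + m ≤ g (a + m) := by
  induction m with
  | zero => simp
  | succ m ih =>
      have h1 : g (a + m) < g (a + m + 1) := hg (by omega)
      have h2 : a + (m + 1) = a + m + 1 := rfl
      rw [h2]
      push_cast
      omega

lemma exists_partition_of_maya {f : ℤ → ℤ} (hf : IsMayaFun f) (hc : chargeFun f = 0) :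
    ∃ lam : YPartition, mayaFun lam = f := by
  classical
  obtain ⟨hv, ⟨B, hB⟩, ⟨A₀, hA₀⟩⟩ := hf
  have hf' : IsMayaFun f := ⟨hv, ⟨B, hB⟩, ⟨A₀, hA₀⟩⟩
  set natA : ℕ := (-A₀).toNat + 1 with hnatA
  have hA : ∀ j : ℤ, f j = -1 → -(natA:ℤ) ≤ j := by
    intro j hj
    by_contra h
    push_neg at h
    have h2 : ((-A₀).toNat : ℤ) ≥ -A₀ := Int.self_le_toNat _
    have := hA₀ j (by omega)
    omega
  set P : ℕ → Prop := fun n => f ((n:ℤ) - natA) = -1 with hP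
  have hPinf : (setOf P).Infinite := by
    apply Set.Infinite.mono (s := Set.Ici ((B + natA).toNat))
    · intro n hn
      simp only [Set.mem_Ici] at hn
      simp only [Set.mem_setOf_eq, hP]
      apply hB
      have h2 : ((B + (natA:ℤ)).toNat : ℤ) ≥ B + natA := Int.self_le_toNat _
      have h3 : (n : ℤ) ≥ ((B + (natA:ℤ)).toNat : ℤ) := by exact_mod_cast hn
      omega
    · exact Set.Ici_infinite _
  set d : ℕ → ℤ := fun b => (Nat.nth P b : ℤ) - natA with hd
  have hd_strict : StrictMono d := by
    intro a b hab
    have := Nat.nth_strictMono hPinf hab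
    simp only [hd]
    omega
  have hd_holes : ∀ j : ℤ, f j = -1 ↔ ∃ b : ℕ, j = d b := by
    intro j
    constructor
    · intro hj
      have h1 : -(natA:ℤ) ≤ j := hA j hj
      set n : ℕ := (j + natA).toNat with hn
      have hn' : (n : ℤ) = j + natA := by rw [hn, Int.toNat_of_nonneg]; omega
      have hPn : P n := by simp only [hP]; rw [hn']; simpa using hj
      refine ⟨Nat.count P n, ?_⟩
      simp only [hd]
      rw [Nat.nth_count hPn]
      omega
    · rintro ⟨b, rfl⟩
      have := Nat.nth_mem_of_infinite hPinf b
      simpa [hP, hd] using this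
  -- counting fact
  have hcount : ∀ b : ℕ, Nat.count P (b + natA + 1) = b + 1 + posCnt f ((b:ℤ)+1) := by
    intro b
    have hcut := cut_lemma hf' ((b:ℤ)+1)
    rw [hc] at hcut
    have hneg : negCnt f ((b:ℤ)+1) = Nat.count P (b + natA + 1) := by
      unfold negCnt
      have hset : {j : ℤ | j < (b:ℤ)+1 ∧ f j = -1} =
          (fun n : ℕ => (n:ℤ) - natA) '' {n : ℕ | n < b + natA + 1 ∧ P n} := by
        ext j
        simp only [Set.mem_setOf_eq, Set.mem_image]
        constructor
        · rintro ⟨hj, hm⟩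
          have h1 : -(natA:ℤ) ≤ j := hA j hm
          set n : ℕ := (j + natA).toNat with hn
          have hn' : (n : ℤ) = j + natA := by rw [hn, Int.toNat_of_nonneg]; omega
          exact ⟨n, ⟨by omega, by simp only [hP]; rw [hn']; simpa using hm⟩, by omega⟩
        · rintro ⟨n, ⟨hn1, hn2⟩, rfl⟩
          exact ⟨by omega, hn2⟩
      rw [hset, Set.ncard_image_of_injective _ (fun a b h => by omega)]
      have hset2 : {n : ℕ | n < b + natA + 1 ∧ P n} =
          ↑((Finset.range (b + natA + 1)).filter P) := by
        ext n; simp [and_comm]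
      rw [hset2, Set.ncard_coe_finset, Nat.count_eq_card_filter_range]
    omega
  -- d b ≤ b always
  have hdb_le : ∀ b : ℕ, d b ≤ b := by
    intro b
    have h1 : b < Nat.count P (b + natA + 1) := by rw [hcount b]; omega
    have h2 := (Nat.lt_nth_iff_count_lt hPinf).mp h1
    simp only [hd]
    omega
  -- d b ≥ b for large b
  have hdb_ge : ∀ b : ℕ, B.toNat + 1 ≤ b → (b:ℤ) ≤ d b := by
    intro b hb
    set b' : ℕ := b - 1 with hb'
    have hbb : b = b' + 1 := by omega
    have hpos : posCnt f ((b':ℤ)+1) = 0 := by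
      unfold posCnt
      convert Set.ncard_empty ℤ
      ext j
      simp only [Set.mem_setOf_eq, Set.mem_empty_iff_false, iff_false, not_and]
      intro hj
      have hBb : B ≤ j := by
        have : (B.toNat : ℤ) ≥ B := Int.self_le_toNat _
        omega
      rw [hB j hBb]
      omega
    have h1 : Nat.count P (b' + natA + 1) = b' + 1 := by rw [hcount b', hpos]
    have h2 : Nat.count P (b' + natA + 1) ≤ b' + 1 := by omega
    have h3 := (Nat.count_le_iff_le_nth hPinf).mp h2
    simp only [hd]
    rw [hbb]
    omega
  refine ⟨⟨fun b => ((b:ℤ) - d b).toNat, ?_, ?_⟩, ?_⟩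
  · intro a b hab
    have h1 := strictMono_int_le hd_strict a (b - a)
    have h2 : a + (b - a) = b := by omega
    rw [h2] at h1
    apply Int.toNat_le_toNat
    omega
  · refine ⟨B.toNat + 1, fun n hn => ?_⟩
    have := hdb_ge n hn
    simp only [Int.toNat_eq_zero]
    omega
  · funext j
    have hpart : ∀ b : ℕ, (b:ℤ) - (((b:ℤ) - d b).toNat : ℤ) = d b := by
      intro b
      rw [Int.toNat_of_nonneg (by have := hdb_le b; omega)]
      ring
    rcases hv j with hj | hj
    · rw [hj]
      rcases maya_vals ⟨fun b => ((b:ℤ) - d b).toNat, _, _⟩ j with h | h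
      · exact h
      · exfalso
        obtain ⟨b, hb⟩ := (maya_neg_one_iff _ j).mp h
        rw [hpart b] at hb
        have : f j = -1 := (hd_holes j).mpr ⟨b, hb⟩
        omega
    · rw [hj]
      obtain ⟨b, hb⟩ := (hd_holes j).mp hj
      apply (maya_neg_one_iff _ j).mpr
      exact ⟨b, by rw [hpart b]; exact hb⟩

lemma partitionOfMaya_spec {f : ℤ → ℤ} (h : ∃ lam : YPartition, mayaFun lam = f) :
    mayaFun (partitionOfMaya f) = f := by
  unfold partitionOfMaya
  rw [dif_pos h]
  exact h.choose_spec

end VP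
namespace VP
open Wreath

lemma maya_quotComp {ℓ : ℕ} (hℓ : 1 ≤ ℓ) (lam : YPartition) (i : ℤ) :
    mayaFun (quotComp ℓ lam i) =
      fun j => mayaFun lam (i + (j - chargeQuot ℓ lam i) * (ℓ:ℤ)) := by
  unfold quotComp
  apply partitionOfMaya_spec
  apply exists_partition_of_maya
  · exact isMayaFun_shift (isMayaFun_quot lam hℓ i) (chargeQuot ℓ lam i)
  · exact quot_shift_charge_zero lam hℓ i

lemma sign_class {ℓ : ℕ} {i t : ℤ} (h0 : 0 ≤ i) (hi : i < (ℓ:ℤ)) :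
    i + t * ℓ < 0 ↔ t < 0 := by
  constructor
  · intro h
    by_contra ht
    push_neg at ht
    nlinarith
  · intro ht
    have h1 : t ≤ -1 := by omega
    have h2 : t * ℓ ≤ -1 * ℓ := by
      apply mul_le_mul_of_nonneg_right h1
      omega
    omega

lemma emod_class {ℓ : ℕ} {i : ℤ} (h0 : 0 ≤ i) (hi : i < (ℓ:ℤ)) (t : ℤ) :
    (i + t * ℓ) % (ℓ:ℤ) = i := by
  rw [Int.add_mul_emod_self_right, Int.emod_eq_of_lt h0 hi]

lemma ediv_class {ℓ : ℕ} {i : ℤ} (h0 : 0 ≤ i) (hi : i < (ℓ:ℤ)) (t : ℤ) :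
    (i + t * ℓ) / (ℓ:ℤ) = t := by
  rw [Int.add_mul_ediv_right _ _ (by omega : (ℓ:ℤ) ≠ 0), Int.ediv_eq_zero_of_lt h0 hi]
  omega

lemma ncard_finset_biUnion {ι : Type*} [DecidableEq ι] (s : Finset ι) (t : ι → Set ℤ)
    (hfin : ∀ i ∈ s, (t i).Finite)
    (hdisj : ∀ i ∈ s, ∀ j ∈ s, i ≠ j → Disjoint (t i) (t j)) :
    (⋃ i ∈ s, t i).ncard = ∑ i ∈ s, (t i).ncard := by
  induction s using Finset.induction with
  | empty => simp
  | @insert a s ha ih =>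
      rw [Finset.set_biUnion_insert, Finset.sum_insert ha]
      have hfin' : (⋃ i ∈ s, t i).Finite := by
        apply Set.Finite.biUnion s.finite_toSet
        intro i hi
        exact hfin i (Finset.mem_insert_of_mem (by simpa using hi))
      rw [Set.ncard_union_eq ?_ (hfin a (Finset.mem_insert_self a s)) hfin',
        ih (fun i hi => hfin i (Finset.mem_insert_of_mem hi))
          (fun i hi j hj hij =>
            hdisj i (Finset.mem_insert_of_mem hi) j (Finset.mem_insert_of_mem hj) hij)]
      · apply Set.disjoint_iUnion_right.mpr
        intro i
        apply Set.disjoint_iUnion_right.mpr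
        intro hi
        exact hdisj a (Finset.mem_insert_self a s) i
          (Finset.mem_insert_of_mem (by simpa using hi)) (fun h => ha (h ▸ (by simpa using hi)))

lemma class_injective {ℓ : ℕ} (hℓ : 1 ≤ ℓ) (i : ℤ) :
    Function.Injective (fun t : ℤ => i + t * (ℓ:ℤ)) := by
  intro a b h
  have hb' : i + a * (ℓ:ℤ) = i + b * ℓ := h
  have : a * (ℓ:ℤ) = b * ℓ := by omega
  exact mul_right_cancel₀ (by omega : (ℓ:ℤ) ≠ 0) this

lemma ncard_classes {ℓ : ℕ} (hℓ : 1 ≤ ℓ) (X : Set ℤ) (hX : X.Finite) :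
    X.ncard = ∑ i ∈ Finset.range ℓ, ((fun t : ℤ => (i:ℤ) + t * ℓ) ⁻¹' X).ncard := by
  classical
  have hcover : X = ⋃ i ∈ Finset.range ℓ,
      (fun t : ℤ => (i:ℤ) + t * ℓ) '' ((fun t : ℤ => (i:ℤ) + t * ℓ) ⁻¹' X) := by
    ext j
    simp only [Set.mem_iUnion, Set.mem_image, Set.mem_preimage, Finset.mem_range]
    constructor
    · intro hj
      have hℓ0 : (0:ℤ) < (ℓ:ℤ) := by exact_mod_cast hℓ
      refine ⟨(j % ℓ).toNat, ?_, ⟨j / ℓ, ?_, ?_⟩⟩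
      · have := Int.emod_lt_of_pos j hℓ0
        have := Int.emod_nonneg j (by omega : (ℓ:ℤ) ≠ 0)
        omega
      · have h1 : ((j % (ℓ:ℤ)).toNat : ℤ) = j % ℓ :=
          Int.toNat_of_nonneg (Int.emod_nonneg j (by omega))
        have h2 := Int.emod_add_mul_ediv j (ℓ:ℤ)
        show ((j % (ℓ:ℤ)).toNat : ℤ) + (j / ℓ) * ℓ ∈ X
        rw [h1]
        have : j % (ℓ:ℤ) + j / ℓ * ℓ = j := by rw [mul_comm]; omega
        rw [this]; exact hj
      · have h1 : ((j % (ℓ:ℤ)).toNat : ℤ) = j % ℓ :=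
          Int.toNat_of_nonneg (Int.emod_nonneg j (by omega))
        have h2 := Int.emod_add_mul_ediv j (ℓ:ℤ)
        show ((j % (ℓ:ℤ)).toNat : ℤ) + (j / ℓ) * ℓ = j
        rw [h1, mul_comm]
        omega
    · rintro ⟨i, hi, t, ht, rfl⟩
      exact ht
  have hfin' : ∀ i ∈ Finset.range ℓ,
      ((fun t : ℤ => (i:ℤ) + t * ℓ) '' ((fun t : ℤ => (i:ℤ) + t * ℓ) ⁻¹' X)).Finite :=
    fun i _ => Set.Finite.subset hX (Set.image_preimage_subset _ _)
  have hdisj' : ∀ i ∈ Finset.range ℓ, ∀ j ∈ Finset.range ℓ, i ≠ j →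
      Disjoint ((fun t : ℤ => (i:ℤ) + t * ℓ) '' ((fun t : ℤ => (i:ℤ) + t * ℓ) ⁻¹' X))
        ((fun t : ℤ => (j:ℤ) + t * ℓ) '' ((fun t : ℤ => (j:ℤ) + t * ℓ) ⁻¹' X)) := by
    intro i hi j hj hij
    rw [Set.disjoint_left]
    rintro x ⟨a, _, rfl⟩ ⟨b, _, hb⟩
    simp only [Finset.mem_range] at hi hj
    have hb' : (j:ℤ) + b * ℓ = (i:ℤ) + a * ℓ := hb
    have h1 : ((i:ℤ) + a * ℓ) % ℓ = i := emod_class (by omega) (by exact_mod_cast hi) a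
    have h2 : ((j:ℤ) + b * ℓ) % ℓ = j := emod_class (by omega) (by exact_mod_cast hj) b
    rw [hb'] at h2
    exact hij (by omega)
  conv_lhs => rw [hcover]
  rw [ncard_finset_biUnion _ _ hfin' hdisj']
  apply Finset.sum_congr rfl
  intro i _
  exact Set.ncard_image_of_injective _ (class_injective hℓ (i:ℤ))

lemma sum_chargeQuot {ℓ : ℕ} (hℓ : 1 ≤ ℓ) (lam : YPartition) :
    ∑ i ∈ Finset.range ℓ, chargeQuot ℓ lam (i:ℤ) = 0 := by
  have hm := isMayaFun_maya lam
  have hneg := ncard_classes hℓ _ (negSet_finite hm 0)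
  have hpos := ncard_classes hℓ _ (posSet_finite hm 0)
  have hQ : ∀ i ∈ Finset.range ℓ, chargeQuot ℓ lam (i:ℤ) =
      ((((fun t : ℤ => (i:ℤ) + t * ℓ) ⁻¹' {j : ℤ | j < 0 ∧ mayaFun lam j = -1}).ncard : ℤ) -
       (((fun t : ℤ => (i:ℤ) + t * ℓ) ⁻¹' {j : ℤ | 0 ≤ j ∧ mayaFun lam j = 1}).ncard : ℤ)) := by
    intro i hi
    simp only [Finset.mem_range] at hi
    have e1 : {t : ℤ | t < 0 ∧ mayaFun lam ((i:ℤ) + t * ℓ) = -1} =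
        (fun t : ℤ => (i:ℤ) + t * ℓ) ⁻¹' {j : ℤ | j < 0 ∧ mayaFun lam j = -1} := by
      ext t
      simp only [Set.mem_setOf_eq, Set.mem_preimage]
      rw [sign_class (by omega) (by exact_mod_cast hi)]
    have e2 : {t : ℤ | 0 ≤ t ∧ mayaFun lam ((i:ℤ) + t * ℓ) = 1} =
        (fun t : ℤ => (i:ℤ) + t * ℓ) ⁻¹' {j : ℤ | 0 ≤ j ∧ mayaFun lam j = 1} := by
      ext t
      simp only [Set.mem_setOf_eq, Set.mem_preimage]
      rw [← not_lt, ← not_lt, sign_class (by omega) (by exact_mod_cast hi)]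
    simp only [chargeQuot, chargeFun]
    rw [e1, e2]
  rw [Finset.sum_congr rfl hQ, Finset.sum_sub_distrib]
  have hch := charge_maya lam
  unfold chargeFun at hch
  have h1 : ∑ i ∈ Finset.range ℓ,
      (((fun t : ℤ => (i:ℤ) + t * ℓ) ⁻¹' {j : ℤ | j < 0 ∧ mayaFun lam j = -1}).ncard : ℤ) =
      ({j : ℤ | j < 0 ∧ mayaFun lam j = -1}).ncard := by
    rw [hneg]; push_cast; rfl
  have h2 : ∑ i ∈ Finset.range ℓ,
      (((fun t : ℤ => (i:ℤ) + t * ℓ) ⁻¹' {j : ℤ | 0 ≤ j ∧ mayaFun lam j = 1}).ncard : ℤ) =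
      ({j : ℤ | 0 ≤ j ∧ mayaFun lam j = 1}).ncard := by
    rw [hpos]; push_cast; rfl
  rw [h1, h2]
  omega

end VP
namespace VP
open Wreath

noncomputable def gfun (ℓ : ℕ) (lam : YPartition) : ℤ → ℤ := fun j =>
  if -(chargeQuot ℓ lam (Int.emod j (ℓ:ℤ))) ≤ Int.ediv j (ℓ:ℤ) then -1 else 1

lemma gfun_class {ℓ : ℕ} (lam : YPartition) {i : ℕ} (hi : i < ℓ) (t : ℤ) :
    gfun ℓ lam ((i:ℤ) + t * ℓ) = if -(chargeQuot ℓ lam (i:ℤ)) ≤ t then -1 else 1 := by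
  unfold gfun
  have h1 : Int.emod ((i:ℤ) + t * ℓ) (ℓ:ℤ) = (i:ℤ) := emod_class (by omega) (by exact_mod_cast hi) t
  have h2 : Int.ediv ((i:ℤ) + t * ℓ) (ℓ:ℤ) = t := ediv_class (by omega) (by exact_mod_cast hi) t
  rw [h1, h2]

lemma chargeQuot_abs_le (ℓ : ℕ) (lam : YPartition) (j : ℤ) (hℓ : 1 ≤ ℓ) :
    |chargeQuot ℓ lam (Int.emod j (ℓ:ℤ))| ≤ ∑ i ∈ Finset.range ℓ, |chargeQuot ℓ lam (i:ℤ)| := by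
  have h0 : (0:ℤ) < (ℓ:ℤ) := by exact_mod_cast hℓ
  have he1 : (0:ℤ) ≤ Int.emod j (ℓ:ℤ) := Int.emod_nonneg j (by omega)
  have he2 : Int.emod j (ℓ:ℤ) < (ℓ:ℤ) := Int.emod_lt_of_pos j h0
  set i' : ℕ := (Int.emod j (ℓ:ℤ)).toNat with hi'
  have hcast : ((i' : ℕ) : ℤ) = Int.emod j (ℓ:ℤ) := Int.toNat_of_nonneg he1
  rw [← hcast]
  apply Finset.single_le_sum (f := fun i : ℕ => |chargeQuot ℓ lam (i:ℤ)|)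
    (fun i _ => abs_nonneg _)
  simp only [Finset.mem_range]
  omega

lemma isMayaFun_gfun {ℓ : ℕ} (hℓ : 1 ≤ ℓ) (lam : YPartition) : IsMayaFun (gfun ℓ lam) := by
  set C : ℤ := ∑ i ∈ Finset.range ℓ, |chargeQuot ℓ lam (i:ℤ)| with hC
  have hCnn : 0 ≤ C := Finset.sum_nonneg (fun i _ => abs_nonneg _)
  have h0 : (0:ℤ) < (ℓ:ℤ) := by exact_mod_cast hℓ
  refine ⟨fun j => ?_, ⟨C * ℓ, fun j hj => ?_⟩, ⟨(-C - 1) * ℓ, fun j hj => ?_⟩⟩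
  · unfold gfun; split <;> simp
  · unfold gfun
    rw [if_pos]
    have h1 : C ≤ Int.ediv j (ℓ:ℤ) := (Int.le_ediv_iff_mul_le h0).mpr hj
    have h2 := chargeQuot_abs_le ℓ lam j hℓ
    rw [← hC] at h2
    have := abs_le.mp (le_trans (le_refl _) h2)
    omega
  · unfold gfun
    rw [if_neg]
    have h1 : Int.ediv j (ℓ:ℤ) ≤ Int.ediv ((-C - 1) * ℓ) (ℓ:ℤ) := Int.ediv_le_ediv h0 hj
    have hcc : Int.ediv ((-C - 1) * (ℓ:ℤ)) (ℓ:ℤ) = -C - 1 :=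
      Int.mul_ediv_cancel _ (by omega : (ℓ:ℤ) ≠ 0)
    rw [hcc] at h1
    have h2 := chargeQuot_abs_le ℓ lam j hℓ
    rw [← hC] at h2
    have := abs_le.mp h2
    omega

lemma ncard_Ico_int (a b : ℤ) : (Set.Ico a b).ncard = (b - a).toNat := by
  rw [← Finset.coe_Ico, Set.ncard_coe_finset, Int.card_Ico]

lemma charge_gfun {ℓ : ℕ} (hℓ : 1 ≤ ℓ) (lam : YPartition) : chargeFun (gfun ℓ lam) = 0 := by
  have hm := isMayaFun_gfun hℓ lam
  have hneg := ncard_classes hℓ _ (negSet_finite hm 0)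
  have hpos := ncard_classes hℓ _ (posSet_finite hm 0)
  have e1 : ∀ i ∈ Finset.range ℓ,
      ((fun t : ℤ => (i:ℤ) + t * ℓ) ⁻¹' {j : ℤ | j < 0 ∧ gfun ℓ lam j = -1}).ncard
        = (chargeQuot ℓ lam (i:ℤ)).toNat := by
    intro i hi
    simp only [Finset.mem_range] at hi
    have hset : (fun t : ℤ => (i:ℤ) + t * ℓ) ⁻¹' {j : ℤ | j < 0 ∧ gfun ℓ lam j = -1}
        = Set.Ico (-(chargeQuot ℓ lam (i:ℤ))) 0 := by
      ext t
      simp only [Set.mem_preimage, Set.mem_setOf_eq, Set.mem_Ico]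
      rw [sign_class (by omega) (by exact_mod_cast hi), gfun_class lam hi t]
      split_ifs with h
      · constructor
        · rintro ⟨a, -⟩; exact ⟨h, a⟩
        · rintro ⟨-, b⟩; exact ⟨b, rfl⟩
      · constructor
        · rintro ⟨-, b⟩; exact absurd b (by decide)
        · rintro ⟨a, -⟩; exact absurd a h
    rw [hset, ncard_Ico_int]
    congr 1
    omega
  have e2 : ∀ i ∈ Finset.range ℓ,
      ((fun t : ℤ => (i:ℤ) + t * ℓ) ⁻¹' {j : ℤ | 0 ≤ j ∧ gfun ℓ lam j = 1}).ncard
        = (-(chargeQuot ℓ lam (i:ℤ))).toNat := by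
    intro i hi
    simp only [Finset.mem_range] at hi
    have hset : (fun t : ℤ => (i:ℤ) + t * ℓ) ⁻¹' {j : ℤ | 0 ≤ j ∧ gfun ℓ lam j = 1}
        = Set.Ico 0 (-(chargeQuot ℓ lam (i:ℤ))) := by
      ext t
      simp only [Set.mem_preimage, Set.mem_setOf_eq, Set.mem_Ico]
      have hs : (0:ℤ) ≤ (i:ℤ) + t * ℓ ↔ 0 ≤ t := by
        rw [← not_lt, ← not_lt, sign_class (by omega) (by exact_mod_cast hi)]
      rw [hs, gfun_class lam hi t]
      split_ifs with h
      · constructor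
        · rintro ⟨-, b⟩; exact absurd b (by decide)
        · rintro ⟨-, b⟩; exfalso; omega
      · constructor
        · rintro ⟨a, -⟩; exact ⟨a, by omega⟩
        · rintro ⟨a, -⟩; exact ⟨a, rfl⟩
    rw [hset, ncard_Ico_int]
    congr 1
    omega
  unfold chargeFun
  rw [hneg, hpos, Finset.sum_congr rfl e1, Finset.sum_congr rfl e2]
  push_cast
  rw [← Finset.sum_sub_distrib]
  have : ∀ i ∈ Finset.range ℓ,
      ((chargeQuot ℓ lam (i:ℤ)).toNat : ℤ) - ((-(chargeQuot ℓ lam (i:ℤ))).toNat : ℤ)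
        = chargeQuot ℓ lam (i:ℤ) := by
    intro i _
    omega
  rw [Finset.sum_congr rfl this, sum_chargeQuot hℓ lam]

lemma maya_coreOf {ℓ : ℕ} (hℓ : 1 ≤ ℓ) (lam : YPartition) :
    mayaFun (coreOf ℓ lam) = gfun ℓ lam := by
  have h : ∃ p : YPartition, mayaFun p = gfun ℓ lam :=
    exists_partition_of_maya (isMayaFun_gfun hℓ lam) (charge_gfun hℓ lam)
  have h2 := partitionOfMaya_spec h
  have h3 : coreOf ℓ lam = partitionOfMaya (gfun ℓ lam) := rfl
  rw [h3]
  exact h2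

lemma charges_eq_of_core_eq {ℓ : ℕ} (hℓ : 1 ≤ ℓ) {mu nu : YPartition}
    (h : coreOf ℓ mu = coreOf ℓ nu) {i : ℕ} (hi : i < ℓ) :
    chargeQuot ℓ mu (i:ℤ) = chargeQuot ℓ nu (i:ℤ) := by
  have hg : gfun ℓ mu = gfun ℓ nu := by
    rw [← maya_coreOf hℓ mu, ← maya_coreOf hℓ nu, h]
  have key : ∀ t : ℤ, (-(chargeQuot ℓ mu (i:ℤ)) ≤ t ↔ -(chargeQuot ℓ nu (i:ℤ)) ≤ t) := by
    intro t
    have hft := congrFun hg ((i:ℤ) + t * ℓ)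
    rw [gfun_class mu hi t, gfun_class nu hi t] at hft
    by_cases h1 : -(chargeQuot ℓ mu (i:ℤ)) ≤ t <;>
      by_cases h2 : -(chargeQuot ℓ nu (i:ℤ)) ≤ t
    · exact iff_of_true h1 h2
    · rw [if_pos h1, if_neg h2] at hft; exact absurd hft (by decide)
    · rw [if_neg h1, if_pos h2] at hft; exact absurd hft (by decide)
    · exact iff_of_false h1 h2
  have h1 := (key (-(chargeQuot ℓ nu (i:ℤ)))).mpr le_rfl
  have h2 := (key (-(chargeQuot ℓ mu (i:ℤ)))).mp le_rfl
  omega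

end VP
namespace VP
open Wreath

lemma numRows_iff (nu : YPartition) (r : ℕ) : r < numRows nu ↔ 0 < nu.part r := by
  unfold numRows
  rw [← mem_iff_lt_ncard]
  · simp
  · obtain ⟨N, hN⟩ := nu.eventually_zero
    apply Set.Finite.subset (Set.finite_Iio N)
    intro x hx
    simp only [Set.mem_setOf_eq] at hx
    simp only [Set.mem_Iio]
    by_contra h
    have := hN x (le_of_not_gt h)
    omega
  · intro x y hxy hy
    simp only [Set.mem_setOf_eq] at *
    have := nu.antitone x y hxy
    omega

lemma row_step_flip {ℓ : ℕ} (hℓ : 1 ≤ ℓ) {nu mu : YPartition} {i k : ℕ}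
    (hs : IsRowStep ℓ nu mu i k) :
    ∃ p : ℤ,
      mayaFun nu p = 1 ∧ mayaFun mu p = -1 ∧
      mayaFun nu (p + (k:ℤ) * ℓ) = -1 ∧ mayaFun mu (p + (k:ℤ) * ℓ) = 1 ∧
      (∀ j : ℤ, j ≠ p → j ≠ p + (k:ℤ) * ℓ → mayaFun mu j = mayaFun nu j) ∧
      (∀ j : ℤ, p < j → j < p + (k:ℤ) * ℓ → (ℓ:ℤ) ∣ (j - p) → mayaFun nu j = 1) ∧
      (∀ j : ℤ, p + (k:ℤ) * ℓ < j → (ℓ:ℤ) ∣ (j - p) → mayaFun mu j = -1) := by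
  obtain ⟨hiℓ, hk1, hrow, hcore, hother, hparts⟩ := hs
  have hℓ0 : (0:ℤ) < (ℓ:ℤ) := by exact_mod_cast hℓ
  set π := quotComp ℓ nu (i:ℤ) with hπ
  set π' := quotComp ℓ mu (i:ℤ) with hπ'
  set r := numRows π with hr
  set c := chargeQuot ℓ nu (i:ℤ) with hc
  have hceq : chargeQuot ℓ mu (i:ℤ) = c := charges_eq_of_core_eq hℓ hcore hiℓ
  have hQν : ∀ t : ℤ, mayaFun π t = mayaFun nu ((i:ℤ) + (t - c) * ℓ) :=
    fun t => congrFun (maya_quotComp hℓ nu (i:ℤ)) t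
  have hQμ : ∀ t : ℤ, mayaFun π' t = mayaFun mu ((i:ℤ) + (t - c) * ℓ) := by
    intro t
    have := congrFun (maya_quotComp hℓ mu (i:ℤ)) t
    rw [hceq] at this
    exact this
  have hπr : ∀ b : ℕ, b < r ↔ 0 < π.part b := fun b => numRows_iff π b
  have hrowk : ∀ b : ℕ, b < r → k ≤ π.part b := fun b hb => hrow b ((hπr b).mp hb)
  have hπ0 : ∀ b : ℕ, r ≤ b → π.part b = 0 := by
    intro b hb
    by_contra h
    have := (hπr b).mpr (by omega)
    omega
  have hπ'parts : ∀ b : ℕ, π'.part b = if b < r then π.part b else if b = r then k else 0 := by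
    intro b
    rw [hparts]
    rfl
  -- quotient maya facts
  have mπ_p' : mayaFun π ((r:ℤ) - k) = 1 := by
    rcases maya_vals π ((r:ℤ) - k) with h | h
    · exact h
    · exfalso
      obtain ⟨b, hb⟩ := (maya_neg_one_iff π _).mp h
      rcases Nat.lt_or_ge b r with hbr | hbr
      · have h1 := hrowk b hbr
        have : (b:ℤ) < r := by exact_mod_cast hbr
        omega
      · have h1 := hπ0 b hbr
        have : (r:ℤ) ≤ b := by exact_mod_cast hbr
        omega
  have mπ'_p' : mayaFun π' ((r:ℤ) - k) = -1 := by
    apply (maya_neg_one_iff π' _).mpr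
    refine ⟨r, ?_⟩
    rw [hπ'parts r]
    simp
  have mπ_r : mayaFun π (r:ℤ) = -1 := by
    apply (maya_neg_one_iff π _).mpr
    refine ⟨r, ?_⟩
    rw [hπ0 r le_rfl]
    simp
  have mπ'_r : mayaFun π' (r:ℤ) = 1 := by
    rcases maya_vals π' (r:ℤ) with h | h
    · exact h
    · exfalso
      obtain ⟨b, hb⟩ := (maya_neg_one_iff π' _).mp h
      rw [hπ'parts b] at hb
      split_ifs at hb with h1 h2
      · have h3 := (hπr b).mp h1
        have : (b:ℤ) < r := by exact_mod_cast h1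
        omega
      · subst h2; omega
      · have : (r:ℤ) < b ∨ (r:ℤ) = b := by
          rcases Nat.lt_or_ge r b with h' | h'
          · left; exact_mod_cast h'
          · right
            have : b = r := by omega
            omega
        omega
  have mπ_mid : ∀ t : ℤ, (r:ℤ) - k < t → t < r → mayaFun π t = 1 := by
    intro t h1 h2
    rcases maya_vals π t with h | h
    · exact h
    · exfalso
      obtain ⟨b, hb⟩ := (maya_neg_one_iff π _).mp h
      rcases Nat.lt_or_ge b r with hbr | hbr
      · have hk := hrowk b hbr
        have : (b:ℤ) < (r:ℤ) := by exact_mod_cast hbr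
        omega
      · have h0 := hπ0 b hbr
        have : (r:ℤ) ≤ b := by exact_mod_cast hbr
        omega
  have mπ'_hi : ∀ t : ℤ, (r:ℤ) < t → mayaFun π' t = -1 := by
    intro t ht
    apply (maya_neg_one_iff π' _).mpr
    refine ⟨t.toNat, ?_⟩
    have h1 : (t.toNat : ℤ) = t := Int.toNat_of_nonneg (by omega)
    rw [hπ'parts t.toNat]
    have h2 : ¬ (t.toNat < r) := by omega
    have h3 : ¬ (t.toNat = r) := by omega
    rw [if_neg h2, if_neg h3]
    omega
  have mπeq : ∀ t : ℤ, t ≠ (r:ℤ) - k → t ≠ (r:ℤ) → mayaFun π' t = mayaFun π t := by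
    intro t ht1 ht2
    have hiff : (mayaFun π' t = -1) ↔ (mayaFun π t = -1) := by
      constructor
      · intro h
        obtain ⟨b, hb⟩ := (maya_neg_one_iff π' _).mp h
        rw [hπ'parts b] at hb
        apply (maya_neg_one_iff π _).mpr
        split_ifs at hb with h1 h2
        · exact ⟨b, hb⟩
        · exact absurd hb (by subst h2; exact ht1)
        · refine ⟨b, ?_⟩
          rw [hπ0 b (by omega)]
          exact hb
      · intro h
        obtain ⟨b, hb⟩ := (maya_neg_one_iff π _).mp h
        apply (maya_neg_one_iff π' _).mpr
        rcases Nat.lt_or_ge b r with hbr | hbr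
        · refine ⟨b, ?_⟩
          rw [hπ'parts b, if_pos hbr]
          exact hb
        · have h0 := hπ0 b hbr
          have hbne : b ≠ r := by
            intro hh
            subst hh
            rw [h0] at hb
            simp at hb
            exact ht2 hb
          refine ⟨b, ?_⟩
          rw [hπ'parts b, if_neg (by omega), if_neg hbne]
          rw [h0] at hb
          exact hb
    rcases maya_vals π' t with h1 | h1 <;> rcases maya_vals π t with h2 | h2
    · rw [h1, h2]
    · exact absurd (hiff.mpr h2) (by rw [h1]; decide)
    · exact absurd (hiff.mp h1) (by rw [h2]; decide)
    · rw [h1, h2]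
  -- globalize
  obtain ⟨p, hp⟩ : ∃ p : ℤ, p = (i:ℤ) + ((r:ℤ) - k - c) * (ℓ:ℤ) := ⟨_, rfl⟩
  have hpq : p + (k:ℤ) * ℓ = (i:ℤ) + ((r:ℤ) - c) * ℓ := by rw [hp]; ring
  have hGp : (i:ℤ) + (((r:ℤ) - k) - c) * ℓ = p := by rw [hp]
  have hdvd_pi : (ℓ:ℤ) ∣ (p - i) := ⟨(r:ℤ) - k - c, by rw [hp]; ring⟩
  refine ⟨p, ?_, ?_, ?_, ?_, ?_, ?_, ?_⟩
  · rw [← hGp]; rw [← hQν]; exact mπ_p'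
  · rw [← hGp]; rw [← hQμ]; exact mπ'_p'
  · rw [hpq, ← hQν]; exact mπ_r
  · rw [hpq, ← hQμ]; exact mπ'_r
  · -- agreement off p, q
    intro j hjp hjq
    by_cases hdvd : (ℓ:ℤ) ∣ (j - i)
    · set t : ℤ := (j - i) / ℓ + c with htdef
      have hGt : (i:ℤ) + (t - c) * ℓ = j := by
        have h' : (j - i) / (ℓ:ℤ) + c - c = (j - i) / ℓ := by ring
        rw [htdef, h']
        have := Int.ediv_mul_cancel hdvd
        omega
      have ht1 : t ≠ (r:ℤ) - k := by
        intro hh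
        exact hjp (by rw [← hGt, hh, hp])
      have ht2 : t ≠ (r:ℤ) := by
        intro hh
        exact hjq (by rw [← hGt, hh, hp]; ring)
      rw [← hGt, ← hQμ, ← hQν]
      exact mπeq t ht1 ht2
    · set i'' : ℕ := (j % (ℓ:ℤ)).toNat with hi''
      have hi''cast : ((i'':ℕ) : ℤ) = j % ℓ := Int.toNat_of_nonneg (Int.emod_nonneg j (by omega))
      have hi''lt : i'' < ℓ := by
        have := Int.emod_lt_of_pos j hℓ0
        omega
      have hjdecomp : (i'':ℤ) + (j / ℓ) * ℓ = j := by
        have := Int.emod_add_mul_ediv j (ℓ:ℤ)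
        rw [hi''cast]
        rw [mul_comm]
        omega
      have hi''ne : i'' ≠ i := by
        intro hh
        apply hdvd
        refine ⟨j / ℓ, ?_⟩
        rw [hh] at hjdecomp
        rw [mul_comm (ℓ:ℤ) (j / (ℓ:ℤ))]
        omega
      have hqeq := hother i'' hi''lt hi''ne
      have hcn := charges_eq_of_core_eq hℓ hcore hi''lt
      set c'' := chargeQuot ℓ nu (i'':ℤ) with hc''
      have hμ := congrFun (maya_quotComp hℓ mu (i'':ℤ)) (j / ℓ + c'')
      have hν := congrFun (maya_quotComp hℓ nu (i'':ℤ)) (j / ℓ + c'')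
      rw [hcn] at hμ
      rw [hqeq] at hμ
      rw [hμ] at hν
      rw [← hc''] at hν
      have harg : (i'':ℤ) + (j / ℓ + c'' - c'') * ℓ = j := by
        have h' : j / (ℓ:ℤ) + c'' - c'' = j / ℓ := by ring
        rw [h']
        exact hjdecomp
      rw [harg] at hν
      exact hν
  · -- middle positions are beads in nu
    intro j h1 h2 hdvd
    have hdvdji : (ℓ:ℤ) ∣ (j - i) := by
      have : j - i = (j - p) + (p - i) := by ring
      rw [this]
      exact dvd_add hdvd hdvd_pi
    set t : ℤ := (j - i) / ℓ + c with htdef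
    have hGt : (i:ℤ) + (t - c) * ℓ = j := by
      have h' : (j - i) / (ℓ:ℤ) + c - c = (j - i) / ℓ := by ring
      rw [htdef, h']
      have := Int.ediv_mul_cancel hdvdji
      omega
    have hjp : j - p = (t - ((r:ℤ) - k)) * ℓ := by
      rw [← hGt, hp, htdef]; ring
    have ht1 : (r:ℤ) - k < t := by
      have h3 : (0:ℤ) * ℓ < (t - ((r:ℤ) - k)) * ℓ := by rw [zero_mul]; omega
      have h4 := lt_of_mul_lt_mul_right h3 (by omega : (0:ℤ) ≤ (ℓ:ℤ))
      omega
    have ht2 : t < (r:ℤ) := by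
      have h3 : (t - ((r:ℤ) - k)) * ℓ < (k:ℤ) * ℓ := by omega
      have h4 : t - ((r:ℤ) - k) < k := lt_of_mul_lt_mul_right h3 (by omega : (0:ℤ) ≤ (ℓ:ℤ))
      omega
    rw [← hGt, ← hQν]
    exact mπ_mid t ht1 ht2
  · -- high positions are holes in mu
    intro j h1 hdvd
    have hdvdji : (ℓ:ℤ) ∣ (j - i) := by
      have : j - i = (j - p) + (p - i) := by ring
      rw [this]
      exact dvd_add hdvd hdvd_pi
    set t : ℤ := (j - i) / ℓ + c with htdef
    have hGt : (i:ℤ) + (t - c) * ℓ = j := by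
      have h' : (j - i) / (ℓ:ℤ) + c - c = (j - i) / ℓ := by ring
      rw [htdef, h']
      have := Int.ediv_mul_cancel hdvdji
      omega
    have hjq : j - (p + (k:ℤ) * ℓ) = (t - (r:ℤ)) * ℓ := by
      rw [← hGt, hp, htdef]; ring
    have ht1 : (r:ℤ) < t := by
      have h3 : (0:ℤ) * ℓ < (t - (r:ℤ)) * ℓ := by rw [zero_mul]; omega
      have h4 := lt_of_mul_lt_mul_right h3 (by omega : (0:ℤ) ≤ (ℓ:ℤ))
      omega
    rw [← hGt, ← hQμ]
    exact mπ'_hi t ht1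
end VP
namespace VP
open Wreath

noncomputable def cnt (tau : YPartition) (T : ℤ) : ℕ := {j : ℤ | j ≤ T ∧ mayaFun tau j = -1}.ncard

lemma cnt_finite (tau : YPartition) (T : ℤ) : ({j : ℤ | j ≤ T ∧ mayaFun tau j = -1}).Finite := by
  apply Set.Finite.subset (Set.finite_Icc (-(tau.part 0 : ℤ)) T)
  rintro j ⟨hj, hm⟩
  obtain ⟨b, hb⟩ := (maya_neg_one_iff tau j).mp hm
  have := tau.antitone 0 b (Nat.zero_le b)
  simp only [Set.mem_Icc]
  omega

lemma hole_le_iff (tau : YPartition) (T : ℤ) (b : ℕ) :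
    (b:ℤ) - tau.part b ≤ T ↔ b < cnt tau T := by
  have hset : {j : ℤ | j ≤ T ∧ mayaFun tau j = -1} =
      (fun b : ℕ => (b:ℤ) - tau.part b) '' {b : ℕ | (b:ℤ) - tau.part b ≤ T} := by
    ext j
    simp only [Set.mem_setOf_eq, Set.mem_image]
    constructor
    · rintro ⟨hj, hm⟩
      obtain ⟨b', hb'⟩ := (maya_neg_one_iff tau j).mp hm
      exact ⟨b', by omega, hb'.symm⟩
    · rintro ⟨b', hb', rfl⟩
      exact ⟨hb', (maya_neg_one_iff tau _).mpr ⟨b', rfl⟩⟩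
  have hfin : ({b : ℕ | (b:ℤ) - tau.part b ≤ T}).Finite := by
    apply Set.Finite.subset (Set.finite_Iio (T + tau.part 0 + 1).toNat)
    intro x hx
    simp only [Set.mem_setOf_eq] at hx
    simp only [Set.mem_Iio]
    have := tau.antitone 0 x (Nat.zero_le x)
    omega
  have hdc : ∀ ⦃x y : ℕ⦄, x ≤ y → y ∈ {b : ℕ | (b:ℤ) - tau.part b ≤ T} →
      x ∈ {b : ℕ | (b:ℤ) - tau.part b ≤ T} := by
    intro x y hxy hy
    simp only [Set.mem_setOf_eq] at *
    have := (hole_strictMono tau).monotone hxy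
    omega
  have := mem_iff_lt_ncard hfin hdc b
  simp only [Set.mem_setOf_eq] at this
  rw [this]
  unfold cnt
  rw [hset, Set.ncard_image_of_injective _ (hole_strictMono tau).injective]

lemma min_content_eq {lam mu : YPartition} {x y : ℤ × ℤ}
    (hx : IsMinContentNode lam mu x) (hy : IsMinContentNode lam mu y) :
    x.2 - x.1 = y.2 - y.1 :=
  le_antisymm (hx.2 y hy.1) (hy.2 x hx.1)

lemma min_content_node {nu mu : YPartition} {p : ℤ}
    (hνp : mayaFun nu p = 1) (hμp : mayaFun mu p = -1)
    (hagree : ∀ j : ℤ, j < p → mayaFun mu j = mayaFun nu j) :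
    ∃ x : ℤ × ℤ, IsMinContentNode nu mu x ∧ x.2 - x.1 = p + 1 := by
  obtain ⟨b, hb⟩ := (maya_neg_one_iff mu p).mp hμp
  have hcmu : cnt mu p = b + 1 := by
    have h1 : b < cnt mu p := (hole_le_iff mu p b).mp (by omega)
    have h2 : ¬ (b + 1 < cnt mu p) := by
      intro h
      have h3 := (hole_le_iff mu p (b+1)).mpr h
      have h4 := hole_strictMono mu (by omega : b < b + 1)
      simp only at h4
      push_cast at h3
      omega
    omega
  have hsets : {j : ℤ | j ≤ p ∧ mayaFun nu j = -1} =
      {j : ℤ | j ≤ p ∧ mayaFun mu j = -1} \ {p} := by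
    ext j
    simp only [Set.mem_setOf_eq, Set.mem_diff, Set.mem_singleton_iff]
    constructor
    · rintro ⟨hj, hm⟩
      have hne : j ≠ p := by
        intro hh; rw [hh, hνp] at hm; exact absurd hm (by decide)
      exact ⟨⟨hj, by rw [hagree j (by omega)]; exact hm⟩, hne⟩
    · rintro ⟨⟨hj, hm⟩, hne⟩
      refine ⟨hj, ?_⟩
      rw [← hagree j (by omega)]
      exact hm
  have hcnu : cnt nu p = b := by
    unfold cnt
    rw [hsets, Set.ncard_diff_singleton_of_mem
      (show p ∈ {j : ℤ | j ≤ p ∧ mayaFun mu j = -1} from ⟨le_rfl, hμp⟩)]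
    unfold cnt at hcmu
    omega
  have hνb : p < (b:ℤ) - nu.part b := by
    by_contra h
    push_neg at h
    have := (hole_le_iff nu p b).mp h
    omega
  have hlt : nu.part b < mu.part b := by omega
  have htn : (((b:ℤ) + 1) - 1).toNat = b := by omega
  refine ⟨((mu.part b : ℤ), (b:ℤ) + 1), ⟨⟨⟨by omega, by omega, ?_⟩, ?_⟩, ?_⟩, by omega⟩
  · rw [htn]
  · rintro ⟨-, -, h3⟩
    rw [htn] at h3
    omega
  · rintro ⟨a, y2⟩ ⟨⟨hy1, hy2, hy3⟩, hyn⟩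
    simp only at hy1 hy2 hy3 ⊢
    set B : ℕ := (y2 - 1).toNat with hBdef
    have hB : (B:ℤ) = y2 - 1 := by omega
    have hyν : (nu.part B : ℤ) < a := by
      by_contra h
      push_neg at h
      exact hyn ⟨hy1, hy2, h⟩
    have hμB : p ≤ (B:ℤ) - mu.part B := by
      by_contra h
      push_neg at h
      set T : ℤ := (B:ℤ) - mu.part B with hT
      have hc1 : B < cnt mu T := (hole_le_iff mu T B).mp le_rfl
      have hceq : cnt nu T = cnt mu T := by
        unfold cnt
        congr 1
        ext j
        simp only [Set.mem_setOf_eq]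
        constructor
        · rintro ⟨hj, hm⟩
          exact ⟨hj, by rw [hagree j (by omega)]; exact hm⟩
        · rintro ⟨hj, hm⟩
          exact ⟨hj, by rw [← hagree j (by omega)]; exact hm⟩
      have hc2 : B < cnt nu T := by omega
      have hc3 := (hole_le_iff nu T B).mpr hc2
      omega
    omega

end VP
namespace VP
open Wreath

lemma step_exists_min {ℓ : ℕ} (hℓ : 1 ≤ ℓ) {nu mu : YPartition} {i k : ℕ}
    (hs : IsRowStep ℓ nu mu i k) :
    ∃ x₀ : ℤ × ℤ, IsMinContentNode nu mu x₀ ∧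
      ∀ j j' : ℤ, mayaFun mu j = -1 → mayaFun mu j' = 1 → j < j' → (ℓ:ℤ) ∣ (j' - j) →
        (j < x₀.2 - x₀.1 ∨ (mayaFun nu j = -1 ∧ mayaFun nu j' = 1)) := by
  have hk : 1 ≤ k := hs.2.1
  have hklpos : 0 < (k:ℤ) * ℓ :=
    mul_pos (by exact_mod_cast hk) (by exact_mod_cast hℓ)
  obtain ⟨p, hν1, hμ1, hν2, hμ2, hagree, hmid, hhi⟩ := row_step_flip hℓ hs
  obtain ⟨x₀, hx₀, hcont⟩ :=
    min_content_node hν1 hμ1 (fun j hj => hagree j (by omega) (by omega))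
  refine ⟨x₀, hx₀, ?_⟩
  intro j j' hj hj' hlt hdvd
  rw [hcont]
  by_cases hjq : j = p + (k:ℤ) * ℓ
  · rw [hjq, hμ2] at hj
    exact absurd hj (by decide)
  by_cases hjp : j = p
  · left; omega
  have hνj : mayaFun nu j = -1 := by rw [← hagree j hjp hjq]; exact hj
  by_cases hj'q : j' = p + (k:ℤ) * ℓ
  · rcases lt_trichotomy j p with h | h | h
    · left; omega
    · exact absurd h hjp
    · exfalso
      have hdvdp : (ℓ:ℤ) ∣ (j - p) := by
        have h5 : j - p = (k:ℤ) * ℓ - (j' - j) := by rw [hj'q]; ring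
        rw [h5]
        exact dvd_sub ⟨(k:ℤ), by ring⟩ hdvd
      have hm := hmid j h (by omega) hdvdp
      rw [hνj] at hm
      exact absurd hm (by decide)
  · have hj'p : j' ≠ p := by
      intro hh
      rw [hh, hμ1] at hj'
      exact absurd hj' (by decide)
    right
    exact ⟨hνj, by rw [← hagree j' hj'p hj'q]; exact hj'⟩

lemma core_no_inversion {ℓ : ℕ} (hℓ : 1 ≤ ℓ) (lam : YPartition) :
    ∀ j j' : ℤ, mayaFun (coreOf ℓ lam) j = -1 → j < j' → (ℓ:ℤ) ∣ (j' - j) →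
      mayaFun (coreOf ℓ lam) j' = -1 := by
  intro j j' hj hlt hdvd
  rw [maya_coreOf hℓ] at hj ⊢
  have hℓ0 : (0:ℤ) < (ℓ:ℤ) := by exact_mod_cast hℓ
  obtain ⟨m, hm⟩ := hdvd
  have hm2 : j' - j = m * ℓ := by rw [hm]; ring
  have hm0 : 0 < m := by
    by_contra h
    push_neg at h
    have : m * (ℓ:ℤ) ≤ 0 * ℓ := mul_le_mul_of_nonneg_right h (by omega)
    rw [zero_mul] at this
    omega
  set i0 : ℕ := (j % (ℓ:ℤ)).toNat with hi0
  have hi0cast : ((i0:ℕ) : ℤ) = j % ℓ := Int.toNat_of_nonneg (Int.emod_nonneg j (by omega))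
  have hi0lt : i0 < ℓ := by
    have := Int.emod_lt_of_pos j hℓ0
    omega
  have hdecomp : (i0:ℤ) + (j / ℓ) * ℓ = j := by
    have := Int.emod_add_mul_ediv j (ℓ:ℤ)
    rw [hi0cast, mul_comm]
    omega
  have hdecomp' : (i0:ℤ) + (j / ℓ + m) * ℓ = j' := by
    rw [add_mul]
    omega
  rw [← hdecomp, gfun_class lam hi0lt] at hj
  rw [← hdecomp', gfun_class lam hi0lt]
  by_cases h1 : -(chargeQuot ℓ lam (i0:ℤ)) ≤ j / (ℓ:ℤ)
  · rw [if_pos (by omega : -(chargeQuot ℓ lam (i0:ℤ)) ≤ j / (ℓ:ℤ) + m)]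
  · rw [if_neg h1] at hj
    exact absurd hj (by decide)

lemma key_inv {ℓ : ℕ} (hℓ : 1 ≤ ℓ) (lam : YPartition) (N : ℕ) (seq : ℕ → YPartition)
    (hseq : IsRowSeq ℓ lam N seq) (hord : RightToLeft N seq) :
    ∀ n, 1 ≤ n → n ≤ N → ∀ x, IsMinContentNode (seq (n-1)) (seq n) x →
      ∀ j j' : ℤ, mayaFun (seq n) j = -1 → mayaFun (seq n) j' = 1 → j < j' →
        (ℓ:ℤ) ∣ (j' - j) → j < x.2 - x.1 := by
  obtain ⟨hs0, hsN, hstep⟩ := hseq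
  intro n hn
  induction n, hn using Nat.le_induction with
  | base =>
      intro hN x hx j j' hj hj' hlt hdvd
      obtain ⟨i, k, hs⟩ := hstep 0 (by omega)
      obtain ⟨x₀, hx₀, hbnd⟩ := step_exists_min hℓ hs
      rcases hbnd j j' hj hj' hlt hdvd with h | ⟨hinv1, hinv2⟩
      · have := min_content_eq hx hx₀
        omega
      · exfalso
        have h1 : mayaFun (coreOf ℓ lam) j = -1 := by rw [← hs0]; exact hinv1
        have h2 := core_no_inversion hℓ lam j j' h1 hlt hdvd
        have h3 : mayaFun (coreOf ℓ lam) j' = 1 := by rw [← hs0]; exact hinv2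
        rw [h2] at h3
        exact absurd h3 (by decide)
  | succ n hn ih =>
      intro hN1 x hx j j' hj hj' hlt hdvd
      obtain ⟨i, k, hs⟩ := hstep n (by omega)
      obtain ⟨x₀, hx₀, hbnd⟩ := step_exists_min hℓ hs
      rcases hbnd j j' hj hj' hlt hdvd with h | ⟨hinv1, hinv2⟩
      · have := min_content_eq hx hx₀
        omega
      · obtain ⟨i', k', hs'⟩ := hstep (n-1) (by omega)
        have hn1 : n - 1 + 1 = n := by omega
        rw [hn1] at hs'
        obtain ⟨xp, hxp, -⟩ := step_exists_min hℓ hs'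
        have hIH := ih (by omega) xp hxp j j' hinv1 hinv2 hlt hdvd
        have hord' := hord n (n+1) (by omega) (by omega) hN1 xp x hxp hx
        omega
end VP

theorem vertical_propagation (ℓ : ℕ) (hℓ : 1 ≤ ℓ) (lam : YPartition)
    (N : ℕ) (seq : ℕ → YPartition)
    (hseq : IsRowSeq ℓ lam N seq) (hord : RightToLeft N seq) (hN : 1 ≤ N)
    (x : ℤ × ℤ) (hx : IsMinContentNode (seq (N - 1)) (seq N) x) :
    ∀ j : ℤ, x.2 - x.1 ≤ j → mayaFun lam j = -1 →
      ∀ j' : ℤ, j < j' → (ℓ : ℤ) ∣ (j' - j) → mayaFun lam j' = -1 := by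
  intro j hcj hj j' hlt hdvd
  rcases VP.maya_vals lam j' with h1 | h1
  · exfalso
    have hsN := hseq.2.1
    have hkey := VP.key_inv hℓ lam N seq hseq hord N hN le_rfl x hx j j'
      (by rw [hsN]; exact hj) (by rw [hsN]; exact h1) hlt hdvd
    omega
  · exact h1
end
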